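/- arXiv:math/0009170 — 2 statements merged into one kernel-verified Lean document; each statement's English description precedes it below -/
import Mathlib

section
/- Let C be a commutative star ring in which 2 is invertible, A a unital *-algebra over C, P_0 ∈ M_n(A) a projection (P_0² = P_0 = P_0*), E = P_0 A^n the right A-module of column vectors x ∈ A^n with P_0 x = x, and h_0(x,y) = Σ_{i=1}^n x_i* y_i its canonical A-valued inner product. Let qA = (A[[λ]], ⋆) be a Hermitian formal deformation of A. Then there exists a Hermitian deformation of (E, h_0): a deformation (E[[λ]], •) of the right A-module E corresponding to qA together with C-sesquilinear maps h_r : E × E → A for r ≥ 1 such that h = h_0 + Σ_{r≥1} h_r λ^r (extended C[[λ]]-sesquilinearly to E[[λ]]) satisfies h(x,y)* = h(y,x) and h(x, y • a) = h(x,y) ⋆ a for all x, y ∈ E[[λ]], a ∈ A[[λ]], and for every x ∈ E[[λ]] the element h(x,x) is a sum of n elements of the form b* ⋆ b with b ∈ A[[λ]] (hence algebraically positive). -/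
open scoped Matrix

/-- Cauchy-type convolution of two formal series along a family of
coefficient maps `B r : M → N → P`:  `(x ⋆ y) n = ∑_{r+i+j=n} B r (x i) (y j)`. -/
def fdConv {M N P : Type*} [AddCommMonoid P] (B : ℕ → M → N → P)
    (x : ℕ → M) (y : ℕ → N) : ℕ → P := fun n =>
  ∑ p ∈ Finset.HasAntidiagonal.antidiagonal n, ∑ q ∈ Finset.HasAntidiagonal.antidiagonal p.2, B p.1 (x q.1) (y q.2)

/-- The unit formal series `1 + 0·λ + 0·λ² + ⋯`. -/
def fdOne (A : Type*) [One A] [Zero A] : ℕ → A := fun n => if n = 0 then 1 else 0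

/-- An element viewed as a constant (order-zero) formal series. -/
def fdC {A : Type*} [Zero A] (a : A) : ℕ → A := fun n => if n = 0 then a else 0

/-- Coefficientwise star of a formal series. -/
def fdStar {A : Type*} [Star A] (x : ℕ → A) : ℕ → A := fun n => star (x n)

/-- Action of a scalar series `c ∈ k[[λ]]` on series with coefficients in a `k`-module. -/
def fdSmul {k M : Type*} [Semiring k] [AddCommMonoid M] [Module k M]
    (c : ℕ → k) (x : ℕ → M) : ℕ → M := fun n =>
  ∑ p ∈ Finset.HasAntidiagonal.antidiagonal n, c p.1 • x p.2

/-- Order-by-order extension of a family of maps `T r : E → F` to formal series: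
`(T x) n = ∑_{r+j=n} T r (x j)`. -/
def fdMap {E F : Type*} [AddCommMonoid F] (T : ℕ → E → F) (x : ℕ → E) : ℕ → F :=
  fun n => ∑ p ∈ Finset.HasAntidiagonal.antidiagonal n, T p.1 (x p.2)

/-- A formal deformation (à la Gerstenhaber) of a unital `k`-algebra `A`:
a family of `k`-bilinear cochains `C r` with `C 0` the original product, whose
convolution product on `A[[λ]]` is associative and unital (with the same unit). -/
structure FormalDeformation (k A : Type*) [CommRing k] [Ring A] [Algebra k A] where
  C : ℕ → A →ₗ[k] A →ₗ[k] A
  C_zero : ∀ a b : A, C 0 a b = a * b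
  assoc : ∀ x y z : ℕ → A,
    fdConv (fun r a b => C r a b) (fdConv (fun r a b => C r a b) x y) z =
      fdConv (fun r a b => C r a b) x (fdConv (fun r a b => C r a b) y z)
  one_mul : ∀ x : ℕ → A, fdConv (fun r a b => C r a b) (fdOne A) x = x
  mul_one : ∀ x : ℕ → A, fdConv (fun r a b => C r a b) x (fdOne A) = x

namespace FormalDeformation

variable {k A : Type*} [CommRing k] [Ring A] [Algebra k A]

/-- The deformed product on `A[[λ]]`. -/
def mul (D : FormalDeformation k A) : (ℕ → A) → (ℕ → A) → ℕ → A :=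
  fdConv fun r a b => D.C r a b

/-- A deformation of a `*`-algebra is Hermitian if the coefficientwise extension of
the involution is still an involution for the deformed product. -/
def IsHermitian [StarRing A] (D : FormalDeformation k A) : Prop :=
  ∀ x y : ℕ → A, fdStar (D.mul x y) = D.mul (fdStar y) (fdStar x)

/-- The extension of the deformation cochains to matrices. -/
def matC (D : FormalDeformation k A) (n : ℕ) (r : ℕ)
    (L S : Matrix (Fin n) (Fin n) A) : Matrix (Fin n) (Fin n) A :=
  Matrix.of fun i j => ∑ s, D.C r (L i s) (S s j)

/-- The deformed product on `M_n(A)[[λ]] = M_n(A[[λ]])`. -/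
def matMul (D : FormalDeformation k A) (n : ℕ) :
    (ℕ → Matrix (Fin n) (Fin n) A) → (ℕ → Matrix (Fin n) (Fin n) A) →
      ℕ → Matrix (Fin n) (Fin n) A :=
  fdConv (D.matC n)

/-- The deformed left action of `M_n(A)[[λ]]` on column vectors `A^n[[λ]]`. -/
def mvMul (D : FormalDeformation k A) (n : ℕ) :
    (ℕ → Matrix (Fin n) (Fin n) A) → (ℕ → Fin n → A) → ℕ → Fin n → A :=
  fdConv fun r L v => fun i => ∑ j, D.C r (L i j) (v j)

/-- The deformed right action of `A[[λ]]` on column vectors `A^n[[λ]]`. -/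
def vsMul (D : FormalDeformation k A) (n : ℕ) :
    (ℕ → Fin n → A) → (ℕ → A) → ℕ → Fin n → A :=
  fdConv fun r v a => fun i => D.C r (v i) a

end FormalDeformation

/-- A Hermitian deformation `(E[[λ]], •, h)` of the inner-product right `A`-module
`E = P₀Aⁿ` (with its canonical `A`-valued inner product `h₀(x,y) = ∑ᵢ xᵢ* yᵢ`)
corresponding to a Hermitian deformation `qA = (A[[λ]], ⋆)`:  `C`-bilinear cochains
`R r : E × A → E` with `R 0` the original action, making `E[[λ]]` a unital right
`qA`-module, together with `C`-sesquilinear cochains `h r : E × E → A` with `h 0 = h₀`,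
whose extension to `E[[λ]]` is Hermitian-symmetric and `qA`-linear in the second
argument.  (Membership in `E = P₀Aⁿ` is expressed by `P₀.mulVec x = x`.) -/
structure HermitianDeformedModule {C A : Type*} [CommRing C] [StarRing C]
    [Ring A] [Algebra C A] [StarRing A] [StarModule C A]
    {n : ℕ} (D : FormalDeformation C A) (P₀ : Matrix (Fin n) (Fin n) A) where
  R : ℕ → (Fin n → A) → A → Fin n → A
  h : ℕ → (Fin n → A) → (Fin n → A) → A
  R_zero : ∀ x a, P₀.mulVec x = x → R 0 x a = fun i => x i * a
  R_mem : ∀ r x a, P₀.mulVec x = x → P₀.mulVec (R r x a) = R r x a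
  R_add_left : ∀ r x x' a, P₀.mulVec x = x → P₀.mulVec x' = x' →
    R r (x + x') a = R r x a + R r x' a
  R_add_right : ∀ r x a a', P₀.mulVec x = x → R r x (a + a') = R r x a + R r x a'
  R_smul_left : ∀ r (c : C) x a, P₀.mulVec x = x → R r (c • x) a = c • R r x a
  R_smul_right : ∀ r (c : C) x a, P₀.mulVec x = x → R r x (c • a) = c • R r x a
  act_one : ∀ x : ℕ → Fin n → A, (∀ m, P₀.mulVec (x m) = x m) →
    fdConv R x (fdOne A) = x
  act_assoc : ∀ (x : ℕ → Fin n → A) (a b : ℕ → A), (∀ m, P₀.mulVec (x m) = x m) →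
    fdConv R (fdConv R x a) b = fdConv R x (D.mul a b)
  h_zero : ∀ x y, P₀.mulVec x = x → P₀.mulVec y = y →
    h 0 x y = ∑ i, star (x i) * y i
  h_add_left : ∀ r x x' y, P₀.mulVec x = x → P₀.mulVec x' = x' → P₀.mulVec y = y →
    h r (x + x') y = h r x y + h r x' y
  h_add_right : ∀ r x y y', P₀.mulVec x = x → P₀.mulVec y = y → P₀.mulVec y' = y' →
    h r x (y + y') = h r x y + h r x y'
  h_smul_left : ∀ r (c : C) x y, P₀.mulVec x = x → P₀.mulVec y = y →
    h r (c • x) y = star c • h r x y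
  h_smul_right : ∀ r (c : C) x y, P₀.mulVec x = x → P₀.mulVec y = y →
    h r x (c • y) = c • h r x y
  h_herm : ∀ x y : ℕ → Fin n → A, (∀ m, P₀.mulVec (x m) = x m) →
    (∀ m, P₀.mulVec (y m) = y m) → fdStar (fdConv h x y) = fdConv h y x
  h_mod : ∀ (x y : ℕ → Fin n → A) (a : ℕ → A), (∀ m, P₀.mulVec (x m) = x m) →
    (∀ m, P₀.mulVec (y m) = y m) →
    fdConv h x (fdConv R y a) = D.mul (fdConv h x y) a


/-! ### Combinatorial helpers -/
section Tri
open Finset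

def tri (m : ℕ) : Finset (ℕ × ℕ × ℕ) :=
  (range (m+1) ×ˢ range (m+1) ×ˢ range (m+1)).filter fun t => t.1 + t.2.1 + t.2.2 = m

lemma mem_tri {m : ℕ} {t : ℕ × ℕ × ℕ} : t ∈ tri m ↔ t.1 + t.2.1 + t.2.2 = m := by
  simp only [tri, Finset.mem_filter, Finset.mem_product, Finset.mem_range]
  omega

lemma mem_tri' {m r p q : ℕ} : (r, p, q) ∈ tri m ↔ r + p + q = m := mem_tri

lemma range_sigma_eq_tri {P : Type*} [AddCommMonoid P] (f : ℕ → ℕ → ℕ → P) (m : ℕ) :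
    (∑ r ∈ range (m+1), ∑ p ∈ range (m - r + 1), f r p (m - r - p))
      = ∑ t ∈ tri m, f t.1 t.2.1 t.2.2 := by
  rw [Finset.sum_sigma']
  refine Finset.sum_nbij' (fun t => (t.1, t.2, m - t.1 - t.2))
    (fun t => ⟨t.1, t.2.1⟩) ?_ ?_ ?_ ?_ ?_
  · rintro ⟨r, p⟩ h
    simp only [Finset.mem_sigma, Finset.mem_range] at h
    simp only [mem_tri']
    omega
  · rintro ⟨r, p, q⟩ h
    simp only [mem_tri'] at h
    simp only [Finset.mem_sigma, Finset.mem_range]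
    omega
  · rintro ⟨r, p⟩ h; rfl
  · rintro ⟨r, p, q⟩ h
    simp only [mem_tri'] at h
    simp only [Prod.mk.injEq]
    exact ⟨trivial, trivial, by omega⟩
  · rintro ⟨r, p⟩ h; rfl

lemma fdConv_eq_tri {M N P : Type*} [AddCommMonoid P] (B : ℕ → M → N → P)
    (x : ℕ → M) (y : ℕ → N) (m : ℕ) :
    fdConv B x y m = ∑ t ∈ tri m, B t.1 (x t.2.1) (y t.2.2) := by
  rw [fdConv, Finset.Nat.sum_antidiagonal_eq_sum_range_succ_mk]
  rw [← range_sigma_eq_tri (fun r p q => B r (x p) (y q)) m]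
  refine Finset.sum_congr rfl fun r hr => ?_
  rw [Finset.Nat.sum_antidiagonal_eq_sum_range_succ_mk]

lemma tri_rot {P : Type*} [AddCommMonoid P] (f : ℕ → ℕ → ℕ → P) (m : ℕ) :
    ∑ t ∈ tri m, f t.1 t.2.1 t.2.2 = ∑ t ∈ tri m, f t.2.2 t.1 t.2.1 := by
  refine Finset.sum_nbij' (fun t => (t.2.1, t.2.2, t.1)) (fun t => (t.2.2, t.1, t.2.1))
    ?_ ?_ ?_ ?_ ?_
  · rintro ⟨r, p, q⟩ ht; simp only [mem_tri'] at ht ⊢; omega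
  · rintro ⟨r, p, q⟩ ht; simp only [mem_tri'] at ht ⊢; omega
  · rintro ⟨r, p, q⟩ _; rfl
  · rintro ⟨r, p, q⟩ _; rfl
  · rintro ⟨r, p, q⟩ _; rfl

end Tri

/-! ### The deformed algebra as a ring -/
section FdRing
variable {k A : Type*} [CommRing k] [Ring A] [Algebra k A]

def Fd (_D : FormalDeformation k A) : Type _ := ℕ → A

variable (D : FormalDeformation k A)

instance : AddCommGroup (Fd D) := Pi.addCommGroup
instance : Module k (Fd D) := Pi.module _ _ _

instance : Ring (Fd D) :=
  { (inferInstance : AddCommGroup (Fd D)) with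
    mul := fun x y => D.mul x y
    one := fdOne A
    mul_assoc := D.assoc
    one_mul := D.one_mul
    mul_one := D.mul_one
    left_distrib := by
      intro x y z
      show D.mul x (y + z) = D.mul x y + D.mul x z
      funext m
      have hyz : ∀ t, (y + z) t = y t + z t := fun _ => rfl
      show fdConv (fun r a b => D.C r a b) x (y+z) m
        = fdConv (fun r a b => D.C r a b) x y m + fdConv (fun r a b => D.C r a b) x z m
      simp only [fdConv, hyz, map_add, Finset.sum_add_distrib]
    right_distrib := by
      intro x y z
      show D.mul (x + y) z = D.mul x z + D.mul y z
      funext m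
      have hxy : ∀ t, (x + y) t = x t + y t := fun _ => rfl
      show fdConv (fun r a b => D.C r a b) (x+y) z m
        = fdConv (fun r a b => D.C r a b) x z m + fdConv (fun r a b => D.C r a b) y z m
      simp only [fdConv, hxy, map_add, LinearMap.add_apply, Finset.sum_add_distrib]
    zero_mul := by
      intro x
      show D.mul 0 x = 0
      funext m
      have h0 : ∀ t, (0 : Fd D) t = 0 := fun _ => rfl
      show fdConv (fun r a b => D.C r a b) (0 : Fd D) x m = (0 : Fd D) m
      simp only [fdConv, h0, map_zero, LinearMap.zero_apply, Finset.sum_const_zero]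
    mul_zero := by
      intro x
      show D.mul x 0 = 0
      funext m
      have h0 : ∀ t, (0 : Fd D) t = 0 := fun _ => rfl
      show fdConv (fun r a b => D.C r a b) x (0 : Fd D) m = (0 : Fd D) m
      simp only [fdConv, h0, map_zero, Finset.sum_const_zero] }

namespace Fd

lemma mul_def (x y : Fd D) : x * y = D.mul x y := rfl
lemma one_def : (1 : Fd D) = fdOne A := rfl

variable {D}

lemma mul_coef (x y : Fd D) (m : ℕ) :
    (x * y) m = ∑ t ∈ tri m, D.C t.1 (x t.2.1) (y t.2.2) := by
  show fdConv (fun r a b => D.C r a b) x y m = _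
  exact fdConv_eq_tri _ x y m

lemma add_coef (x y : Fd D) (m : ℕ) : (x + y) m = x m + y m := rfl
lemma sub_coef (x y : Fd D) (m : ℕ) : (x - y) m = x m - y m := rfl
lemma zero_coef (m : ℕ) : (0 : Fd D) m = 0 := rfl
lemma smul_coef (c : k) (x : Fd D) (m : ℕ) : (c • x) m = c • x m := rfl

/-- evaluation at a coefficient, as an additive map -/
def ev (D : FormalDeformation k A) (m : ℕ) : Fd D →+ A :=
  { toFun := fun x => x m, map_zero' := rfl, map_add' := fun _ _ => rfl }

lemma ev_apply (m : ℕ) (x : Fd D) : ev D m x = x m := rfl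

lemma sum_coef {ι : Type*} (s : Finset ι) (f : ι → Fd D) (m : ℕ) :
    (∑ i ∈ s, f i) m = ∑ i ∈ s, f i m :=
  map_sum (ev D m) f s

lemma coef_zero_mul (x y : Fd D) : (x * y) 0 = x 0 * y 0 := by
  rw [mul_coef]
  rw [show tri 0 = {(0,0,0)} from rfl]
  rw [Finset.sum_singleton, D.C_zero]

lemma mul_coef_congr {m : ℕ} {x x' y y' : Fd D}
    (hx : ∀ t ≤ m, x t = x' t) (hy : ∀ t ≤ m, y t = y' t) :
    (x * y) m = (x' * y') m := by
  rw [mul_coef, mul_coef]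
  refine Finset.sum_congr rfl fun t ht => ?_
  rw [mem_tri] at ht
  rw [hx t.2.1 (by omega), hy t.2.2 (by omega)]

/-- truncation below `m` -/
def trunc (m : ℕ) (x : Fd D) : Fd D := fun t => if t < m then x t else 0

def single (D : FormalDeformation k A) (m : ℕ) (a : A) : Fd D :=
  fun t => if t = m then a else 0

lemma mul_single_top (x : Fd D) (m : ℕ) (a : A) :
    (x * single D m a) m = x 0 * a := by
  rw [mul_coef]
  rw [Finset.sum_eq_single (0, 0, m)]
  · show D.C 0 (x 0) (if m = m then a else 0) = _
    rw [if_pos rfl, D.C_zero]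
  · intro t ht hne
    rw [mem_tri] at ht
    rcases eq_or_ne t.2.2 m with h | h
    · exfalso; apply hne
      have h1 : t.1 = 0 := by omega
      have h2 : t.2.1 = 0 := by omega
      exact Prod.ext h1 (Prod.ext h2 h)
    · have : single D m a t.2.2 = 0 := by
        show (if t.2.2 = m then a else 0) = 0
        rw [if_neg h]
      rw [this, map_zero]
  · intro h
    exact absurd (mem_tri.2 (by simp)) h

lemma mul_coef_lower (x y : Fd D) (m : ℕ) :
    (x * y) m = (x * trunc m y) m + x 0 * y m := by
  have h1 : (x * y) m = (x * (trunc m y + single D m (y m))) m := by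
    refine mul_coef_congr (fun t _ => rfl) fun t ht => ?_
    show y t = (if t < m then y t else 0) + (if t = m then y m else 0)
    rcases lt_or_eq_of_le ht with h | h
    · rw [if_pos h, if_neg (by omega), add_zero]
    · rw [if_neg (by omega), if_pos h, zero_add, h]
  rw [h1, mul_add, add_coef, mul_single_top]

/-- shift (multiplication by λ) -/
def sh (x : Fd D) : Fd D := fun t => match t with
  | 0 => 0
  | t+1 => x t

lemma sh_coef_zero (x : Fd D) : sh x 0 = 0 := rfl
lemma sh_coef_succ (x : Fd D) (m : ℕ) : sh x (m+1) = x m := rfl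

lemma sh_add (x y : Fd D) : sh (x + y) = sh x + sh y := by
  funext t; cases t with
  | zero => show (0:A) = 0 + 0; rw [add_zero]
  | succ t => rfl

lemma sh_smul (c : k) (x : Fd D) : sh (c • x) = c • sh x := by
  funext t; cases t with
  | zero => show (0:A) = c • 0; rw [smul_zero]
  | succ t => rfl

lemma sh_sum {ι : Type*} (s : Finset ι) (f : ι → Fd D) :
    sh (∑ i ∈ s, f i) = ∑ i ∈ s, sh (f i) := by
  funext t; cases t with
  | zero =>
    rw [sum_coef]
    exact (Finset.sum_const_zero).symm
  | succ t =>
    rw [sh_coef_succ, sum_coef, sum_coef]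
    exact Finset.sum_congr rfl fun i _ => rfl

lemma sh_mul (x y : Fd D) : sh x * y = sh (x * y) := by
  funext m
  cases m with
  | zero =>
    rw [coef_zero_mul, sh_coef_zero, zero_mul]; rfl
  | succ m =>
    rw [sh_coef_succ, mul_coef, mul_coef]
    have hfil : ∑ t ∈ tri (m+1), D.C t.1 (sh x t.2.1) (y t.2.2)
        = ∑ t ∈ (tri (m+1)).filter (fun t : ℕ × ℕ × ℕ => t.2.1 ≠ 0),
            D.C t.1 (sh x t.2.1) (y t.2.2) := by
      refine (Finset.sum_filter_of_ne fun t ht h => ?_).symm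
      intro ht21
      apply h
      have hz : sh x t.2.1 = 0 := by rw [ht21]; rfl
      rw [hz, map_zero, LinearMap.zero_apply]
    rw [hfil]
    refine (Finset.sum_nbij' (fun t : ℕ × ℕ × ℕ => (t.1, t.2.1 + 1, t.2.2))
      (fun t : ℕ × ℕ × ℕ => (t.1, t.2.1 - 1, t.2.2)) ?_ ?_ ?_ ?_ ?_).symm
    · rintro ⟨r, p, q⟩ ht; simp only [mem_tri'] at ht
      simp only [Finset.mem_filter, mem_tri']
      omega
    · rintro ⟨r, p, q⟩ ht
      simp only [Finset.mem_filter, mem_tri'] at ht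
      simp only [mem_tri']
      omega
    · rintro ⟨r, p, q⟩ _; rfl
    · rintro ⟨r, p, q⟩ ht
      simp only [Finset.mem_filter, mem_tri'] at ht
      simp only [Prod.mk.injEq]
      exact ⟨trivial, by omega, trivial⟩
    · rintro ⟨r, p, q⟩ _; rfl

lemma mul_sh (x y : Fd D) : x * sh y = sh (x * y) := by
  funext m
  cases m with
  | zero =>
    rw [coef_zero_mul, sh_coef_zero, mul_zero]; rfl
  | succ m =>
    rw [sh_coef_succ, mul_coef, mul_coef]
    have hfil : ∑ t ∈ tri (m+1), D.C t.1 (x t.2.1) (sh y t.2.2)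
        = ∑ t ∈ (tri (m+1)).filter (fun t : ℕ × ℕ × ℕ => t.2.2 ≠ 0),
            D.C t.1 (x t.2.1) (sh y t.2.2) := by
      refine (Finset.sum_filter_of_ne fun t ht h => ?_).symm
      intro ht22
      apply h
      have hz : sh y t.2.2 = 0 := by rw [ht22]; rfl
      rw [hz, map_zero]
    rw [hfil]
    refine (Finset.sum_nbij' (fun t : ℕ × ℕ × ℕ => (t.1, t.2.1, t.2.2 + 1))
      (fun t : ℕ × ℕ × ℕ => (t.1, t.2.1, t.2.2 - 1)) ?_ ?_ ?_ ?_ ?_).symm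
    · rintro ⟨r, p, q⟩ ht; simp only [mem_tri'] at ht
      simp only [Finset.mem_filter, mem_tri']
      omega
    · rintro ⟨r, p, q⟩ ht
      simp only [Finset.mem_filter, mem_tri'] at ht
      simp only [mem_tri']
      omega
    · rintro ⟨r, p, q⟩ _; rfl
    · rintro ⟨r, p, q⟩ ht
      simp only [Finset.mem_filter, mem_tri'] at ht
      simp only [Prod.mk.injEq]
      exact ⟨trivial, trivial, by omega⟩
    · rintro ⟨r, p, q⟩ _; rfl

lemma smul_mul (c : k) (x y : Fd D) : (c • x) * y = c • (x * y) := by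
  funext m
  rw [smul_coef, mul_coef, mul_coef, Finset.smul_sum]
  refine Finset.sum_congr rfl fun t ht => ?_
  rw [smul_coef, map_smul, LinearMap.smul_apply]

lemma mul_smul' (c : k) (x y : Fd D) : x * (c • y) = c • (x * y) := by
  funext m
  rw [smul_coef, mul_coef, mul_coef, Finset.smul_sum]
  refine Finset.sum_congr rfl fun t ht => ?_
  rw [smul_coef, map_smul]

end Fd
end FdRing

/-! ### Star structure on the deformed algebra -/
section FdStar
variable {k A : Type*} [CommRing k] [StarRing k] [Ring A] [Algebra k A]
  [StarRing A] [StarModule k A] {D : FormalDeformation k A}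

namespace Fd

def st (x : Fd D) : Fd D := fdStar x

lemma st_coef (x : Fd D) (m : ℕ) : st x m = star (x m) := rfl

lemma st_add (x y : Fd D) : st (x + y) = st x + st y := by
  funext m; exact star_add (x m) (y m)

lemma st_sub (x y : Fd D) : st (x - y) = st x - st y := by
  funext m; exact star_sub (x m) (y m)

lemma st_st (x : Fd D) : st (st x) = x := by
  funext m; exact star_star (x m)

lemma st_zero : st (0 : Fd D) = 0 := by
  funext m; exact star_zero A

lemma st_one : st (1 : Fd D) = 1 := by
  funext m
  show star (fdOne A m) = fdOne A m
  unfold fdOne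
  split
  · exact star_one A
  · exact star_zero A

lemma st_smul (c : k) (x : Fd D) : st (c • x) = star c • st x := by
  funext m; exact star_smul c (x m)

lemma st_sum {ι : Type*} (s : Finset ι) (f : ι → Fd D) :
    st (∑ i ∈ s, f i) = ∑ i ∈ s, st (f i) := by
  funext m
  rw [st_coef, sum_coef, sum_coef]
  exact star_sum _ _

lemma st_sh (x : Fd D) : st (sh x) = sh (st x) := by
  funext m
  cases m with
  | zero => exact star_zero A
  | succ m => rfl

lemma st_mul (hD : D.IsHermitian) (x y : Fd D) : st (x * y) = st y * st x := hD x y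

end Fd
end FdStar

/-! ### Matrices over the deformed algebra; deformation of the projection -/
section FdMat
variable {k A : Type*} [CommRing k] [StarRing k] [Ring A] [Algebra k A]
  [StarRing A] [StarModule k A]
variable {n : ℕ} (D : FormalDeformation k A)

namespace Fd

variable {D}

/-- conjugate transpose on matrices over the deformed algebra -/
def mst (X : Matrix (Fin n) (Fin n) (Fd D)) : Matrix (Fin n) (Fin n) (Fd D) :=
  Matrix.of fun i j => st (X j i)

lemma mst_apply (X : Matrix (Fin n) (Fin n) (Fd D)) (i j : Fin n) :
    mst X i j = st (X j i) := rfl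

lemma mst_add (X Y : Matrix (Fin n) (Fin n) (Fd D)) :
    mst (X + Y) = mst X + mst Y := by
  ext i j; exact st_add (X j i) (Y j i)

lemma mst_sub (X Y : Matrix (Fin n) (Fin n) (Fd D)) :
    mst (X - Y) = mst X - mst Y := by
  ext i j; exact st_sub (X j i) (Y j i)

lemma mst_mul (hD : D.IsHermitian) (X Y : Matrix (Fin n) (Fin n) (Fd D)) :
    mst (X * Y) = mst Y * mst X := by
  ext i j
  show st ((X * Y) j i) = (mst Y * mst X) i j
  rw [Matrix.mul_apply, Matrix.mul_apply, st_sum]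
  exact Finset.sum_congr rfl fun s _ => st_mul hD (X j s) (Y s i)

lemma mst_one : mst (1 : Matrix (Fin n) (Fin n) (Fd D)) = 1 := by
  ext i j
  show st ((1 : Matrix (Fin n) (Fin n) (Fd D)) j i) = (1 : Matrix (Fin n) (Fin n) (Fd D)) i j
  by_cases h : i = j
  · subst h
    rw [Matrix.one_apply_eq, st_one]
  · rw [Matrix.one_apply_ne (Ne.symm h), Matrix.one_apply_ne h, st_zero]

lemma mst_pow (hD : D.IsHermitian) (X : Matrix (Fin n) (Fin n) (Fd D)) (p : ℕ) :
    mst (X ^ p) = mst X ^ p := by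
  induction p with
  | zero => rw [pow_zero, pow_zero, mst_one]
  | succ p ih =>
    rw [pow_succ, mst_mul hD, ih, pow_succ']

/-! #### vanishing orders -/

lemma vanish_mul {a b : ℕ} {x y : Fd D}
    (hx : ∀ r < a, x r = 0) (hy : ∀ r < b, y r = 0) :
    ∀ r < a + b, (x * y) r = 0 := by
  intro r hr
  rw [mul_coef]
  refine Finset.sum_eq_zero fun t ht => ?_
  rw [mem_tri] at ht
  rcases lt_or_ge t.2.1 a with h | h
  · rw [hx _ h, map_zero, LinearMap.zero_apply]
  · rw [hy _ (by omega), map_zero]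

variable (D) in
def MV (m : ℕ) (X : Matrix (Fin n) (Fin n) (Fd D)) : Prop :=
  ∀ i j, ∀ r < m, X i j r = 0

lemma MV_mul {a b : ℕ} {X Y : Matrix (Fin n) (Fin n) (Fd D)}
    (hX : MV D a X) (hY : MV D b Y) : MV D (a + b) (X * Y) := by
  intro i j r hr
  rw [Matrix.mul_apply, sum_coef]
  refine Finset.sum_eq_zero fun s _ => ?_
  exact vanish_mul (hX i s) (hY s j) r hr

lemma MV_zero_any (X : Matrix (Fin n) (Fin n) (Fd D)) : MV D 0 X :=
  fun _ _ _ h => absurd h (Nat.not_lt_zero _)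

lemma MV_mul_right {a : ℕ} {X : Matrix (Fin n) (Fin n) (Fd D)}
    (hX : MV D a X) (Y : Matrix (Fin n) (Fin n) (Fd D)) : MV D a (X * Y) := by
  have := MV_mul hX (MV_zero_any Y)
  rwa [add_zero] at this

variable (D) in
def AG (m : ℕ) (X Y : Matrix (Fin n) (Fin n) (Fd D)) : Prop :=
  ∀ i j, ∀ r < m, X i j r = Y i j r

lemma AG_mul {m : ℕ} {X X' Y Y' : Matrix (Fin n) (Fin n) (Fd D)}
    (hX : AG D m X X') (hY : AG D m Y Y') : AG D m (X * Y) (X' * Y') := by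
  intro i j r hr
  rw [Matrix.mul_apply, Matrix.mul_apply, sum_coef, sum_coef]
  refine Finset.sum_congr rfl fun s _ => ?_
  exact mul_coef_congr (fun t ht => hX i s t (lt_of_le_of_lt ht hr))
    (fun t ht => hY s j t (lt_of_le_of_lt ht hr))

/-! #### the deformed projection -/

variable (D) in
def Qit (P₀ : Matrix (Fin n) (Fin n) A) : ℕ → Matrix (Fin n) (Fin n) (Fd D)
  | 0 => P₀.map (fun a => (fdC a : Fd D))
  | (kk+1) =>
      (Qit P₀ kk)^2 + (Qit P₀ kk)^2 + (Qit P₀ kk)^2 - ((Qit P₀ kk)^3 + (Qit P₀ kk)^3)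

lemma qpoly_sq {R : Type*} [Ring R] (e : R) :
    (e^2+e^2+e^2 - (e^3+e^3))^2 - (e^2+e^2+e^2 - (e^3+e^3))
      = (e^2-e)*(e^2-e)*(4*(e^2-e) - 3) := by
  noncomm_ring

lemma qpoly_diff {R : Type*} [Ring R] (e : R) :
    (e^2+e^2+e^2 - (e^3+e^3)) - e = (e^2-e) * (1 - 2*e) := by
  noncomm_ring

variable {P₀ : Matrix (Fin n) (Fin n) A}

lemma Qit_zero_coef (i j : Fin n) : Qit D P₀ 0 i j 0 = P₀ i j := rfl

lemma MV_fQ (hP₀ : P₀ * P₀ = P₀) :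
    ∀ kk, MV D (2^kk) ((Qit D P₀ kk)^2 - Qit D P₀ kk) := by
  intro kk
  induction kk with
  | zero =>
    intro i j r hr
    have hr0 : r = 0 := by omega
    subst hr0
    show ((Qit D P₀ 0)^2 - Qit D P₀ 0) i j 0 = 0
    have : ((Qit D P₀ 0)^2 - Qit D P₀ 0) i j = ((Qit D P₀ 0)^2) i j - Qit D P₀ 0 i j := rfl
    rw [this]
    rw [sub_coef, pow_two, Matrix.mul_apply, sum_coef]
    have : ∀ s, (Qit D P₀ 0 i s * Qit D P₀ 0 s j) 0 = P₀ i s * P₀ s j := by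
      intro s
      rw [coef_zero_mul, Qit_zero_coef, Qit_zero_coef]
    rw [Finset.sum_congr rfl fun s _ => this s, Qit_zero_coef, ← Matrix.mul_apply, hP₀,
      sub_self]
  | succ kk ih =>
    have key : (Qit D P₀ (kk+1))^2 - Qit D P₀ (kk+1)
        = ((Qit D P₀ kk)^2 - Qit D P₀ kk) * ((Qit D P₀ kk)^2 - Qit D P₀ kk)
          * (4*((Qit D P₀ kk)^2 - Qit D P₀ kk) - 3) := by
      show (_)^2 - (_) = _
      rw [show Qit D P₀ (kk+1) = (Qit D P₀ kk)^2+(Qit D P₀ kk)^2+(Qit D P₀ kk)^2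
        - ((Qit D P₀ kk)^3+(Qit D P₀ kk)^3) from rfl]
      exact qpoly_sq _
    rw [key]
    have h2 : MV D (2^kk + 2^kk) (((Qit D P₀ kk)^2 - Qit D P₀ kk)
        * ((Qit D P₀ kk)^2 - Qit D P₀ kk)) := MV_mul ih ih
    have h3 := MV_mul_right h2 (4*((Qit D P₀ kk)^2 - Qit D P₀ kk) - 3)
    have : 2^(kk+1) = 2^kk + 2^kk := by rw [pow_succ]; omega
    rwa [this]

lemma Q_stab (hP₀ : P₀ * P₀ = P₀) :
    ∀ kk l, kk ≤ l → ∀ i j, ∀ r < 2^kk, Qit D P₀ l i j r = Qit D P₀ kk i j r := by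
  intro kk l hkl
  induction l, hkl using Nat.le_induction with
  | base => intro i j r hr; rfl
  | succ l hl ih =>
    intro i j r hr
    have hdiff : Qit D P₀ (l+1) - Qit D P₀ l
        = ((Qit D P₀ l)^2 - Qit D P₀ l) * (1 - 2*Qit D P₀ l) := by
      rw [show Qit D P₀ (l+1) = (Qit D P₀ l)^2+(Qit D P₀ l)^2+(Qit D P₀ l)^2
        - ((Qit D P₀ l)^3+(Qit D P₀ l)^3) from rfl]
      exact qpoly_diff _
    have hMV : MV D (2^l) (Qit D P₀ (l+1) - Qit D P₀ l) := by
      rw [hdiff]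
      have := MV_mul_right (MV_fQ hP₀ l) (1 - 2*Qit D P₀ l)
      exact this
    have hvan : (Qit D P₀ (l+1) - Qit D P₀ l) i j r = 0 :=
      hMV i j r (lt_of_lt_of_le hr (Nat.pow_le_pow_right (by norm_num) hl))
    have heq : (Qit D P₀ (l+1) - Qit D P₀ l) i j r
        = Qit D P₀ (l+1) i j r - Qit D P₀ l i j r := rfl
    rw [heq, sub_eq_zero] at hvan
    rw [hvan]
    exact ih i j r hr

variable (D P₀) in
def Pm : Matrix (Fin n) (Fin n) (Fd D) :=
  Matrix.of fun i j => (fun m => Qit D P₀ (m+1) i j m : Fd D)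

lemma Pm_coef (i j : Fin n) (m : ℕ) : Pm D P₀ i j m = Qit D P₀ (m+1) i j m := rfl

lemma lt_two_pow_succ (m : ℕ) : m < 2^(m+1) :=
  lt_of_lt_of_le (Nat.lt_two_pow_self) (Nat.pow_le_pow_right (by norm_num) (Nat.le_succ m))

lemma Pm_agree (hP₀ : P₀ * P₀ = P₀) (kk : ℕ) : AG D (2^kk) (Pm D P₀) (Qit D P₀ kk) := by
  intro i j r hr
  rw [Pm_coef]
  rcases le_total (r+1) kk with h | h
  · rw [← Q_stab hP₀ (r+1) kk h i j r (lt_two_pow_succ r)]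
  · rw [Q_stab hP₀ kk (r+1) h i j r hr]

lemma Pm_idem (hP₀ : P₀ * P₀ = P₀) : Pm D P₀ * Pm D P₀ = Pm D P₀ := by
  ext i j
  funext m
  set kk := m + 1 with hkk
  have hm : m < 2^kk := lt_two_pow_succ m
  have h1 : (Pm D P₀ * Pm D P₀) i j m = (Qit D P₀ kk * Qit D P₀ kk) i j m :=
    AG_mul (Pm_agree hP₀ kk) (Pm_agree hP₀ kk) i j m hm
  have h2 : (Qit D P₀ kk * Qit D P₀ kk) i j m = ((Qit D P₀ kk)^2) i j m := by
    rw [pow_two]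
  have h3 : ((Qit D P₀ kk)^2) i j m = Qit D P₀ kk i j m := by
    have := MV_fQ (D := D) hP₀ kk i j m hm
    have hsub : ((Qit D P₀ kk)^2 - Qit D P₀ kk) i j m
        = ((Qit D P₀ kk)^2) i j m - Qit D P₀ kk i j m := rfl
    rw [hsub, sub_eq_zero] at this
    exact this
  rw [h1, h2, h3, ← Pm_agree hP₀ kk i j m hm]

lemma Pm_coef_zero (hP₀ : P₀ * P₀ = P₀) (i j : Fin n) : Pm D P₀ i j 0 = P₀ i j := by
  rw [Pm_coef, Q_stab hP₀ 0 1 (by norm_num) i j 0 (by norm_num)]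
  rfl

lemma Q_herm (hD : D.IsHermitian) (hP₀h : P₀ᴴ = P₀) (kk : ℕ) :
    mst (Qit D P₀ kk) = Qit D P₀ kk := by
  induction kk with
  | zero =>
    ext i j
    funext m
    show star ((fdC (P₀ j i) : Fd D) m) = (fdC (P₀ i j) : Fd D) m
    have hstar : star (P₀ j i) = P₀ i j := by
      conv_rhs => rw [← hP₀h]
      rw [Matrix.conjTranspose_apply]
    show star (if m = 0 then P₀ j i else 0) = (if m = 0 then P₀ i j else 0)
    by_cases h : m = 0
    · rw [if_pos h, if_pos h, hstar]
    · rw [if_neg h, if_neg h, star_zero]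
  | succ kk ih =>
    show mst ((Qit D P₀ kk)^2+(Qit D P₀ kk)^2+(Qit D P₀ kk)^2
      - ((Qit D P₀ kk)^3+(Qit D P₀ kk)^3)) = _
    rw [mst_sub, mst_add, mst_add, mst_add, mst_pow hD, mst_pow hD, ih]
    rfl

lemma Pm_herm (hD : D.IsHermitian) (hP₀h : P₀ᴴ = P₀) :
    mst (Pm D P₀) = Pm D P₀ := by
  ext i j
  funext m
  show star (Pm D P₀ j i m) = Pm D P₀ i j m
  rw [Pm_coef, Pm_coef]
  have h2 : mst (Qit D P₀ (m+1)) i j = Qit D P₀ (m+1) i j := by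
    rw [Q_herm hD hP₀h (m+1)]
  exact congrFun h2 m

end Fd
end FdMat

/-! ### Module operators -/
section ModOps
variable {k A : Type*} [CommRing k] [StarRing k] [Ring A] [Algebra k A]
  [StarRing A] [StarModule k A]
variable {n : ℕ}

namespace Fd

variable (D : FormalDeformation k A) (P₀ : Matrix (Fin n) (Fin n) A)

/-- the classical (coefficientwise) action of `P₀` -/
def psi (v : Fin n → Fd D) : Fin n → Fd D :=
  fun i => (fun m => ∑ j, P₀ i j * v j m : Fd D)

/-- the deformed action of the deformed projection -/
def Phi (v : Fin n → Fd D) : Fin n → Fd D := (Pm D P₀).mulVec v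

/-- right scalar multiplication -/
def rsc {D' : FormalDeformation k A} (v : Fin n → Fd D') (a : Fd D') : Fin n → Fd D' :=
  fun i => v i * a

def Lop (v : Fin n → Fd D) : Fin n → Fd D := fun i => Phi D P₀ v i - psi D P₀ v i

def Uop (v : Fin n → Fd D) : Fin n → Fd D := psi D P₀ (Lop D P₀ v)

variable {D P₀}

lemma psi_coef (v : Fin n → Fd D) (i : Fin n) (m : ℕ) :
    psi D P₀ v i m = ∑ j, P₀ i j * v j m := rfl

lemma mulVec_apply (M : Matrix (Fin n) (Fin n) (Fd D)) (v : Fin n → Fd D) (i : Fin n) :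
    M.mulVec v i = ∑ j, M i j * v j := rfl

lemma Phi_coef (v : Fin n → Fd D) (i : Fin n) (m : ℕ) :
    Phi D P₀ v i m = ∑ j, (Pm D P₀ i j * v j) m := by
  rw [Phi, mulVec_apply, sum_coef]

lemma L_coef (hP₀ : P₀ * P₀ = P₀) (v : Fin n → Fd D) (i : Fin n) (m : ℕ) :
    Lop D P₀ v i m = ∑ j, (Pm D P₀ i j * trunc m (v j)) m := by
  show Phi D P₀ v i m - psi D P₀ v i m = _
  rw [Phi_coef, psi_coef]
  have h1 : ∀ j : Fin n, (Pm D P₀ i j * v j) m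
      = (Pm D P₀ i j * trunc m (v j)) m + P₀ i j * v j m := by
    intro j
    rw [mul_coef_lower, Pm_coef_zero hP₀]
  rw [Finset.sum_congr rfl fun j _ => h1 j, Finset.sum_add_distrib,
    add_sub_cancel_right]

lemma U_coef (v : Fin n → Fd D) (i : Fin n) (m : ℕ) :
    Uop D P₀ v i m = ∑ l, P₀ i l * Lop D P₀ v l m := rfl

lemma trunc_congr {m : ℕ} {x y : Fd D} (h : ∀ t < m, x t = y t) :
    trunc m x = trunc m y := by
  funext t
  show (if t < m then x t else 0) = (if t < m then y t else 0)
  split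
  · exact h t (by assumption)
  · rfl

lemma U_congr (hP₀ : P₀ * P₀ = P₀) {v w : Fin n → Fd D} {m : ℕ}
    (h : ∀ j t, t < m → v j t = w j t) (i : Fin n) :
    Uop D P₀ v i m = Uop D P₀ w i m := by
  rw [U_coef, U_coef]
  refine Finset.sum_congr rfl fun l _ => ?_
  rw [L_coef hP₀, L_coef hP₀]
  refine congrArg _ (Finset.sum_congr rfl fun j _ => ?_)
  rw [trunc_congr (fun t ht => h j t ht)]

lemma trunc_zero' (x : Fd D) : trunc 0 x = 0 := by
  funext t
  show (if t < 0 then x t else 0) = 0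
  rw [if_neg (Nat.not_lt_zero t)]

lemma U_zero_coef (hP₀ : P₀ * P₀ = P₀) (v : Fin n → Fd D) (i : Fin n) :
    Uop D P₀ v i 0 = 0 := by
  rw [U_coef]
  refine Finset.sum_eq_zero fun l _ => ?_
  rw [L_coef hP₀]
  have : ∀ j, (Pm D P₀ l j * trunc 0 (v j)) 0 = 0 := by
    intro j
    rw [trunc_zero', mul_zero]
    rfl
  rw [Finset.sum_congr rfl fun j _ => this j, Finset.sum_const_zero, mul_zero]

/-! additivity / linearity / shift lemmas -/

lemma psi_add (v w : Fin n → Fd D) : psi D P₀ (v + w) = psi D P₀ v + psi D P₀ w := by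
  funext i m
  show ∑ j, P₀ i j * (v j m + w j m) = (∑ j, P₀ i j * v j m) + ∑ j, P₀ i j * w j m
  rw [← Finset.sum_add_distrib]
  exact Finset.sum_congr rfl fun j _ => mul_add _ _ _

lemma psi_sub (v w : Fin n → Fd D) : psi D P₀ (v - w) = psi D P₀ v - psi D P₀ w := by
  funext i m
  show ∑ j, P₀ i j * (v j m - w j m) = (∑ j, P₀ i j * v j m) - ∑ j, P₀ i j * w j m
  rw [← Finset.sum_sub_distrib]
  exact Finset.sum_congr rfl fun j _ => mul_sub _ _ _

lemma psi_smul (c : k) (v : Fin n → Fd D) : psi D P₀ (c • v) = c • psi D P₀ v := by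
  funext i m
  show ∑ j, P₀ i j * (c • v j m) = c • ∑ j, P₀ i j * v j m
  rw [Finset.smul_sum]
  exact Finset.sum_congr rfl fun j _ => mul_smul_comm _ _ _

/-- componentwise shift on vectors -/
def shV (v : Fin n → Fd D) : Fin n → Fd D := fun i => sh (v i)

lemma sh_sub (x y : Fd D) : sh (x - y) = sh x - sh y := by
  funext t; cases t with
  | zero => show (0:A) = 0 - 0; rw [sub_zero]
  | succ t => rfl

lemma psi_sh (v : Fin n → Fd D) : psi D P₀ (shV v) = shV (psi D P₀ v) := by
  funext i m
  cases m with
  | zero =>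
    show ∑ j, P₀ i j * (0:A) = (0:A)
    simp
  | succ m => rfl

lemma psi_congr {v w : Fin n → Fd D} {m : ℕ} (h : ∀ j, v j m = w j m) (i : Fin n) :
    psi D P₀ v i m = psi D P₀ w i m := by
  rw [psi_coef, psi_coef]
  exact Finset.sum_congr rfl fun j _ => by rw [h j]

lemma Phi_add (v w : Fin n → Fd D) : Phi D P₀ (v + w) = Phi D P₀ v + Phi D P₀ w :=
  Matrix.mulVec_add _ _ _

lemma Phi_sub (v w : Fin n → Fd D) : Phi D P₀ (v - w) = Phi D P₀ v - Phi D P₀ w :=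
  Matrix.mulVec_sub _ _ _

lemma Phi_smul (c : k) (v : Fin n → Fd D) : Phi D P₀ (c • v) = c • Phi D P₀ v := by
  funext i
  show ∑ j, Pm D P₀ i j * (c • v j) = c • ∑ j, Pm D P₀ i j * v j
  rw [Finset.smul_sum]
  exact Finset.sum_congr rfl fun j _ => mul_smul' c _ _

lemma Phi_sh (v : Fin n → Fd D) : Phi D P₀ (shV v) = shV (Phi D P₀ v) := by
  funext i
  show ∑ j, Pm D P₀ i j * sh (v j) = sh (∑ j, Pm D P₀ i j * v j)
  rw [sh_sum]
  exact Finset.sum_congr rfl fun j _ => mul_sh _ _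

lemma Phi_congr {v w : Fin n → Fd D} {m : ℕ} (h : ∀ j t, t ≤ m → v j t = w j t)
    (i : Fin n) : Phi D P₀ v i m = Phi D P₀ w i m := by
  rw [Phi_coef, Phi_coef]
  exact Finset.sum_congr rfl fun j _ => mul_coef_congr (fun t _ => rfl) (h j)

lemma L_add (v w : Fin n → Fd D) : Lop D P₀ (v + w) = Lop D P₀ v + Lop D P₀ w := by
  funext i
  show Phi D P₀ (v+w) i - psi D P₀ (v+w) i = _
  rw [Phi_add, psi_add]
  show Phi D P₀ v i + Phi D P₀ w i - (psi D P₀ v i + psi D P₀ w i) = _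
  show _ = (Phi D P₀ v i - psi D P₀ v i) + (Phi D P₀ w i - psi D P₀ w i)
  abel

lemma L_smul (c : k) (v : Fin n → Fd D) : Lop D P₀ (c • v) = c • Lop D P₀ v := by
  funext i
  show Phi D P₀ (c • v) i - psi D P₀ (c • v) i = c • (Phi D P₀ v i - psi D P₀ v i)
  rw [Phi_smul, psi_smul, smul_sub]
  rfl

lemma L_sh (v : Fin n → Fd D) : Lop D P₀ (shV v) = shV (Lop D P₀ v) := by
  funext i
  show Phi D P₀ (shV v) i - psi D P₀ (shV v) i = sh (Phi D P₀ v i - psi D P₀ v i)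
  rw [Phi_sh, psi_sh, sh_sub]
  rfl

lemma U_add (v w : Fin n → Fd D) : Uop D P₀ (v + w) = Uop D P₀ v + Uop D P₀ w := by
  rw [Uop, L_add, psi_add]; rfl

lemma U_smul (c : k) (v : Fin n → Fd D) : Uop D P₀ (c • v) = c • Uop D P₀ v := by
  rw [Uop, L_smul, psi_smul]; rfl

lemma U_sh (v : Fin n → Fd D) : Uop D P₀ (shV v) = shV (Uop D P₀ v) := by
  rw [Uop, L_sh, psi_sh]; rfl

/-! the inverse of `ψ ∘ Φ` -/

variable (D P₀) in
def Scoef (v : Fin n → Fd D) : (m : ℕ) → Fin n → A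
  | m => fun i =>
      v i m - Uop D P₀
        (fun j => (fun t => if h : t < m then Scoef v t j else 0 : Fd D)) i m
  termination_by m => m
  decreasing_by exact h

variable (D P₀) in
def Spart (v : Fin n → Fd D) (m : ℕ) : Fin n → Fd D :=
  fun j => (fun t => if t < m then Scoef D P₀ v t j else 0 : Fd D)

lemma Scoef_eq (v : Fin n → Fd D) (m : ℕ) (i : Fin n) :
    Scoef D P₀ v m i = v i m - Uop D P₀ (Spart D P₀ v m) i m := by
  rw [Scoef]
  have : (fun j => (fun t => if h : t < m then Scoef D P₀ v t j else 0 : Fd D))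
      = Spart D P₀ v m := by
    funext j t
    show (if h : t < m then Scoef D P₀ v t j else 0) = _
    rw [dite_eq_ite]
    rfl
  rw [this]

variable (D P₀) in
def Sop (v : Fin n → Fd D) : Fin n → Fd D := fun i => (fun m => Scoef D P₀ v m i : Fd D)

lemma Sop_coef (v : Fin n → Fd D) (i : Fin n) (m : ℕ) : Sop D P₀ v i m = Scoef D P₀ v m i := rfl

lemma Spart_agree (v : Fin n → Fd D) (m : ℕ) :
    ∀ j t, t < m → Spart D P₀ v m j t = Sop D P₀ v j t := by
  intro j t ht
  show (if t < m then Scoef D P₀ v t j else 0) = _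
  rw [if_pos ht]
  rfl

lemma Scoef_congr (hP₀ : P₀ * P₀ = P₀) {v w : Fin n → Fd D} :
    ∀ m, (∀ j t, t ≤ m → v j t = w j t) → ∀ i, Scoef D P₀ v m i = Scoef D P₀ w m i := by
  intro m
  induction m using Nat.strong_induction_on with
  | _ m ih =>
    intro h i
    rw [Scoef_eq, Scoef_eq, h i m le_rfl]
    have hsp : ∀ j t, t < m → Spart D P₀ v m j t = Spart D P₀ w m j t := by
      intro j t ht
      show (if t < m then Scoef D P₀ v t j else 0) = (if t < m then Scoef D P₀ w t j else 0)
      rw [if_pos ht, if_pos ht]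
      exact ih t ht (fun j' t' ht' => h j' t' (le_of_lt (lt_of_le_of_lt ht' ht))) j
    rw [U_congr hP₀ hsp i]

lemma Scoef_add (hP₀ : P₀ * P₀ = P₀) (v w : Fin n → Fd D) :
    ∀ m i, Scoef D P₀ (v + w) m i = Scoef D P₀ v m i + Scoef D P₀ w m i := by
  intro m
  induction m using Nat.strong_induction_on with
  | _ m ih =>
    intro i
    rw [Scoef_eq, Scoef_eq, Scoef_eq]
    have hsp : Spart D P₀ (v + w) m = Spart D P₀ v m + Spart D P₀ w m := by
      funext j t
      show (if t < m then Scoef D P₀ (v+w) t j else 0)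
          = (if t < m then Scoef D P₀ v t j else 0) + (if t < m then Scoef D P₀ w t j else 0)
      split
      · exact ih t (by assumption) j
      · rw [add_zero]
    rw [hsp, U_add]
    show v i m + w i m - (Uop D P₀ (Spart D P₀ v m) i m + Uop D P₀ (Spart D P₀ w m) i m) = _
    abel

lemma Scoef_smul (hP₀ : P₀ * P₀ = P₀) (c : k) (v : Fin n → Fd D) :
    ∀ m i, Scoef D P₀ (c • v) m i = c • Scoef D P₀ v m i := by
  intro m
  induction m using Nat.strong_induction_on with
  | _ m ih =>
    intro i
    rw [Scoef_eq, Scoef_eq]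
    have hsp : Spart D P₀ (c • v) m = c • Spart D P₀ v m := by
      funext j t
      show (if t < m then Scoef D P₀ (c • v) t j else 0)
          = c • (if t < m then Scoef D P₀ v t j else 0)
      split
      · exact ih t (by assumption) j
      · rw [smul_zero]
    rw [hsp, U_smul]
    show c • v i m - c • Uop D P₀ (Spart D P₀ v m) i m
      = c • (v i m - Uop D P₀ (Spart D P₀ v m) i m)
    rw [smul_sub]

lemma Scoef_sh (hP₀ : P₀ * P₀ = P₀) (v : Fin n → Fd D) :
    ∀ m i, Scoef D P₀ (shV v) m i = sh (Sop D P₀ v i) m := by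
  intro m
  induction m using Nat.strong_induction_on with
  | _ m ih =>
    intro i
    match m with
    | 0 =>
      rw [Scoef_eq, U_zero_coef hP₀]
      show (0:A) - 0 = 0
      rw [sub_zero]
    | Nat.succ m =>
      rw [Scoef_eq]
      have hsp : Spart D P₀ (shV v) (m+1) = shV (Spart D P₀ v m) := by
        funext j t
        show (if t < m + 1 then Scoef D P₀ (shV v) t j else 0) = sh (Spart D P₀ v m j) t
        match t with
        | 0 =>
          rw [if_pos (Nat.succ_pos m)]
          rw [ih 0 (Nat.succ_pos m) j]
          rfl
        | Nat.succ t =>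
          rw [sh_coef_succ]
          show _ = (if t < m then Scoef D P₀ v t j else 0)
          by_cases ht : t < m
          · rw [if_pos (by omega), if_pos ht, ih (t+1) (by omega) j]
            rfl
          · rw [if_neg (by omega), if_neg ht]
      rw [hsp, U_sh]
      show shV v i (m+1) - shV (Uop D P₀ (Spart D P₀ v m)) i (m+1) = Scoef D P₀ v m i
      show v i m - Uop D P₀ (Spart D P₀ v m) i m = _
      rw [Scoef_eq]

lemma psi_psi (hP₀ : P₀ * P₀ = P₀) (v : Fin n → Fd D) :
    psi D P₀ (psi D P₀ v) = psi D P₀ v := by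
  funext i m
  rw [psi_coef]
  have : ∀ j, P₀ i j * psi D P₀ v j m = ∑ l, (P₀ i j * P₀ j l) * v l m := by
    intro j
    rw [psi_coef, Finset.mul_sum]
    exact Finset.sum_congr rfl fun l _ => (mul_assoc _ _ _).symm
  rw [Finset.sum_congr rfl fun j _ => this j, Finset.sum_comm]
  rw [psi_coef]
  refine Finset.sum_congr rfl fun l _ => ?_
  rw [← Finset.sum_mul, ← Matrix.mul_apply, hP₀]

lemma psi_U (hP₀ : P₀ * P₀ = P₀) (v : Fin n → Fd D) :
    psi D P₀ (Uop D P₀ v) = Uop D P₀ v := by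
  rw [Uop, psi_psi hP₀]

lemma S_psi (hP₀ : P₀ * P₀ = P₀) {v : Fin n → Fd D} (hv : psi D P₀ v = v) :
    psi D P₀ (Sop D P₀ v) = Sop D P₀ v := by
  funext i m
  rw [psi_coef, Sop_coef, Scoef_eq]
  have : ∀ j, Sop D P₀ v j m = v j m - Uop D P₀ (Spart D P₀ v m) j m := fun j => by
    rw [Sop_coef, Scoef_eq]
  rw [Finset.sum_congr rfl fun j _ => by rw [this j, mul_sub]]
  rw [Finset.sum_sub_distrib]
  have h1 : ∑ j, P₀ i j * v j m = v i m := by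
    have := congrFun (congrFun hv i) m
    rw [← this]
    rfl
  have h2 : ∑ j, P₀ i j * Uop D P₀ (Spart D P₀ v m) j m = Uop D P₀ (Spart D P₀ v m) i m := by
    have := congrFun (congrFun (psi_U hP₀ (Spart D P₀ v m)) i) m
    rw [← this]
    rfl
  rw [h1, h2]

variable (D P₀) in
def Top (v : Fin n → Fd D) : Fin n → Fd D := psi D P₀ (Phi D P₀ v)

lemma T_eq (hP₀ : P₀ * P₀ = P₀) {v : Fin n → Fd D} (hv : psi D P₀ v = v) :
    Top D P₀ v = Uop D P₀ v + v := by
  have hdec : Phi D P₀ v = Lop D P₀ v + psi D P₀ v := by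
    funext i
    show Phi D P₀ v i = (Phi D P₀ v i - psi D P₀ v i) + psi D P₀ v i
    rw [sub_add_cancel]
  rw [Top, hdec, psi_add, psi_psi hP₀, hv]
  rfl

lemma psi_T (hP₀ : P₀ * P₀ = P₀) (v : Fin n → Fd D) :
    psi D P₀ (Top D P₀ v) = Top D P₀ v := psi_psi hP₀ _

lemma T_S (hP₀ : P₀ * P₀ = P₀) {v : Fin n → Fd D} (hv : psi D P₀ v = v) :
    Top D P₀ (Sop D P₀ v) = v := by
  rw [T_eq hP₀ (S_psi hP₀ hv)]
  funext i m
  show Uop D P₀ (Sop D P₀ v) i m + Sop D P₀ v i m = v i m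
  have h1 : Uop D P₀ (Sop D P₀ v) i m = Uop D P₀ (Spart D P₀ v m) i m :=
    U_congr hP₀ (fun j t ht => (Spart_agree v m j t ht).symm) i
  rw [h1, Sop_coef, Scoef_eq]
  abel

lemma T_inj (hP₀ : P₀ * P₀ = P₀) {v w : Fin n → Fd D} (hv : psi D P₀ v = v)
    (hw : psi D P₀ w = w) (hT : Top D P₀ v = Top D P₀ w) : v = w := by
  have key : ∀ m, ∀ j, v j m = w j m := by
    intro m
    induction m using Nat.strong_induction_on with
    | _ m ih =>
      intro j
      have h1 : v j m = Top D P₀ v j m - Uop D P₀ v j m := by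
        rw [T_eq hP₀ hv]
        show v j m = Uop D P₀ v j m + v j m - Uop D P₀ v j m
        abel
      have h2 : w j m = Top D P₀ w j m - Uop D P₀ w j m := by
        rw [T_eq hP₀ hw]
        show w j m = Uop D P₀ w j m + w j m - Uop D P₀ w j m
        abel
      rw [h1, h2, hT, U_congr hP₀ (fun j' t ht => ih t ht j') j]
  funext j m
  exact key m j

lemma S_T (hP₀ : P₀ * P₀ = P₀) {v : Fin n → Fd D} (hv : psi D P₀ v = v) :
    Sop D P₀ (Top D P₀ v) = v := by
  refine T_inj hP₀ (S_psi hP₀ (psi_T hP₀ v)) hv ?_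
  rw [T_S hP₀ (psi_T hP₀ v)]

lemma mulVec_Phi (hP₀ : P₀ * P₀ = P₀) (v : Fin n → Fd D) :
    (Pm D P₀).mulVec (Phi D P₀ v) = Phi D P₀ v := by
  rw [Phi, Matrix.mulVec_mulVec, Pm_idem hP₀]

lemma psi_inj (hP₀ : P₀ * P₀ = P₀) {w : Fin n → Fd D}
    (hw : (Pm D P₀).mulVec w = w) (h0 : psi D P₀ w = 0) : w = 0 := by
  have key : ∀ m, ∀ j, w j m = 0 := by
    intro m
    induction m using Nat.strong_induction_on with
    | _ m ih =>
      intro j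
      have h1 : w j m = Lop D P₀ w j m + psi D P₀ w j m := by
        conv_lhs => rw [← hw]
        show Phi D P₀ w j m = (Phi D P₀ w j m - psi D P₀ w j m) + psi D P₀ w j m
        rw [sub_add_cancel]
      have h2 : psi D P₀ w j m = 0 := by rw [h0]; rfl
      have h3 : Lop D P₀ w j m = 0 := by
        rw [L_coef hP₀]
        refine Finset.sum_eq_zero fun l _ => ?_
        have : trunc m (w l) = 0 := by
          funext t
          show (if t < m then w l t else 0) = 0
          split
          · exact ih t (by assumption) l
          · rfl
        rw [this, mul_zero]
        rfl
      rw [h1, h2, h3, add_zero]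
  funext j m
  exact key m j

lemma Phi_S_psi (hP₀ : P₀ * P₀ = P₀) {w : Fin n → Fd D}
    (hw : (Pm D P₀).mulVec w = w) : Phi D P₀ (Sop D P₀ (psi D P₀ w)) = w := by
  have hpsiw : psi D P₀ (psi D P₀ w) = psi D P₀ w := psi_psi hP₀ w
  have hTS : Top D P₀ (Sop D P₀ (psi D P₀ w)) = psi D P₀ w := T_S hP₀ hpsiw
  set u := Phi D P₀ (Sop D P₀ (psi D P₀ w)) with hu
  have hPu : (Pm D P₀).mulVec u = u := mulVec_Phi hP₀ _
  have hPd : (Pm D P₀).mulVec (u - w) = u - w := by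
    rw [Matrix.mulVec_sub, hPu, hw]
  have hpsid : psi D P₀ (u - w) = 0 := by
    rw [psi_sub]
    have : psi D P₀ u = psi D P₀ w := hTS
    rw [this, sub_self]
  have := psi_inj hP₀ hPd hpsid
  rw [sub_eq_zero] at this
  exact this

/-! the deformed action and metric -/

variable (D P₀) in
def act (v : Fin n → Fd D) (a : Fd D) : Fin n → Fd D :=
  Sop D P₀ (psi D P₀ (rsc (Phi D P₀ v) a))

variable (D P₀) in
def hq (v w : Fin n → Fd D) : Fd D :=
  ∑ i, st (Phi D P₀ v i) * Phi D P₀ w i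

lemma mulVec_rsc (M : Matrix (Fin n) (Fin n) (Fd D)) (w : Fin n → Fd D) (a : Fd D) :
    M.mulVec (rsc w a) = rsc (M.mulVec w) a := by
  funext i
  rw [mulVec_apply]
  show ∑ j, M i j * (w j * a) = (∑ j, M i j * w j) * a
  rw [Finset.sum_mul]
  exact Finset.sum_congr rfl fun j _ => (mul_assoc _ _ _).symm

lemma Phi_act (hP₀ : P₀ * P₀ = P₀) (v : Fin n → Fd D) (a : Fd D) :
    Phi D P₀ (act D P₀ v a) = rsc (Phi D P₀ v) a := by
  refine Phi_S_psi hP₀ ?_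
  rw [mulVec_rsc, mulVec_Phi hP₀]

lemma act_psi (hP₀ : P₀ * P₀ = P₀) (v : Fin n → Fd D) (a : Fd D) :
    psi D P₀ (act D P₀ v a) = act D P₀ v a :=
  S_psi hP₀ (psi_psi hP₀ _)

lemma act_one (hP₀ : P₀ * P₀ = P₀) {v : Fin n → Fd D} (hv : psi D P₀ v = v) :
    act D P₀ v 1 = v := by
  have : rsc (Phi D P₀ v) 1 = Phi D P₀ v := by
    funext i; exact mul_one _
  rw [act, this]
  exact S_T hP₀ hv

lemma act_assoc (hP₀ : P₀ * P₀ = P₀) (v : Fin n → Fd D) (a b : Fd D) :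
    act D P₀ (act D P₀ v a) b = act D P₀ v (a * b) := by
  rw [act, Phi_act hP₀]
  have : rsc (rsc (Phi D P₀ v) a) b = rsc (Phi D P₀ v) (a * b) := by
    funext i; exact mul_assoc _ _ _
  rw [this]
  rfl

end Fd
end ModOps

/-! ### More operator lemmas -/
section ModOps2
variable {k A : Type*} [CommRing k] [StarRing k] [Ring A] [Algebra k A]
  [StarRing A] [StarModule k A]
variable {n : ℕ} {D : FormalDeformation k A} {P₀ : Matrix (Fin n) (Fin n) A}

namespace Fd

lemma rsc_add_left (v w : Fin n → Fd D) (a : Fd D) :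
    rsc (v + w) a = rsc v a + rsc w a := by
  funext i; exact add_mul _ _ _

lemma rsc_add_right (v : Fin n → Fd D) (a b : Fd D) :
    rsc v (a + b) = rsc v a + rsc v b := by
  funext i; exact mul_add _ _ _

lemma rsc_smul_left (c : k) (v : Fin n → Fd D) (a : Fd D) :
    rsc (c • v) a = c • rsc v a := by
  funext i; exact smul_mul c _ _

lemma rsc_smul_right (c : k) (v : Fin n → Fd D) (a : Fd D) :
    rsc v (c • a) = c • rsc v a := by
  funext i; exact mul_smul' c _ _

lemma rsc_sh_left (v : Fin n → Fd D) (a : Fd D) :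
    rsc (shV v) a = shV (rsc v a) := by
  funext i; exact sh_mul _ _

lemma rsc_sh_right (v : Fin n → Fd D) (a : Fd D) :
    rsc v (sh a) = shV (rsc v a) := by
  funext i; exact mul_sh _ _

lemma rsc_congr {m : ℕ} {v w : Fin n → Fd D} {a b : Fd D}
    (hv : ∀ i t, t ≤ m → v i t = w i t) (ha : ∀ t ≤ m, a t = b t) (i : Fin n) :
    rsc v a i m = rsc w b i m :=
  mul_coef_congr (hv i) ha

lemma S_add (hP₀ : P₀ * P₀ = P₀) (v w : Fin n → Fd D) :
    Sop D P₀ (v + w) = Sop D P₀ v + Sop D P₀ w := by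
  funext i m; exact Scoef_add hP₀ v w m i

lemma S_smul (hP₀ : P₀ * P₀ = P₀) (c : k) (v : Fin n → Fd D) :
    Sop D P₀ (c • v) = c • Sop D P₀ v := by
  funext i m; exact Scoef_smul hP₀ c v m i

lemma S_sh (hP₀ : P₀ * P₀ = P₀) (v : Fin n → Fd D) :
    Sop D P₀ (shV v) = shV (Sop D P₀ v) := by
  funext i m; exact Scoef_sh hP₀ v m i

lemma S_congr (hP₀ : P₀ * P₀ = P₀) {m : ℕ} {v w : Fin n → Fd D}
    (h : ∀ j t, t ≤ m → v j t = w j t) (i : Fin n) :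
    Sop D P₀ v i m = Sop D P₀ w i m :=
  Scoef_congr hP₀ m h i

lemma act_add_left (hP₀ : P₀ * P₀ = P₀) (v w : Fin n → Fd D) (a : Fd D) :
    act D P₀ (v + w) a = act D P₀ v a + act D P₀ w a := by
  rw [act, Phi_add, rsc_add_left, psi_add, S_add hP₀]; rfl

lemma act_add_right (hP₀ : P₀ * P₀ = P₀) (v : Fin n → Fd D) (a b : Fd D) :
    act D P₀ v (a + b) = act D P₀ v a + act D P₀ v b := by
  rw [act, rsc_add_right, psi_add, S_add hP₀]; rfl

lemma act_smul_left (hP₀ : P₀ * P₀ = P₀) (c : k) (v : Fin n → Fd D) (a : Fd D) :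
    act D P₀ (c • v) a = c • act D P₀ v a := by
  rw [act, Phi_smul, rsc_smul_left, psi_smul, S_smul hP₀]; rfl

lemma act_smul_right (hP₀ : P₀ * P₀ = P₀) (c : k) (v : Fin n → Fd D) (a : Fd D) :
    act D P₀ v (c • a) = c • act D P₀ v a := by
  rw [act, rsc_smul_right, psi_smul, S_smul hP₀]; rfl

lemma act_sh_left (hP₀ : P₀ * P₀ = P₀) (v : Fin n → Fd D) (a : Fd D) :
    act D P₀ (shV v) a = shV (act D P₀ v a) := by
  rw [act, Phi_sh, rsc_sh_left, psi_sh, S_sh hP₀]; rfl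

lemma act_sh_right (hP₀ : P₀ * P₀ = P₀) (v : Fin n → Fd D) (a : Fd D) :
    act D P₀ v (sh a) = shV (act D P₀ v a) := by
  rw [act, rsc_sh_right, psi_sh, S_sh hP₀]; rfl

lemma act_congr (hP₀ : P₀ * P₀ = P₀) {m : ℕ} {v v' : Fin n → Fd D} {a a' : Fd D}
    (hv : ∀ j t, t ≤ m → v j t = v' j t) (ha : ∀ t ≤ m, a t = a' t) (i : Fin n) :
    act D P₀ v a i m = act D P₀ v' a' i m := by
  rw [act, act]
  refine S_congr hP₀ (fun j t ht => ?_) i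
  refine psi_congr (fun j' => ?_) j
  refine rsc_congr (fun i' t' ht' => ?_) (fun t' ht' => ha t' (le_trans ht' ht)) j'
  exact Phi_congr (fun j'' t'' ht'' => hv j'' t'' (le_trans ht'' (le_trans ht' ht))) i'

/-! hq lemmas -/

lemma hq_st (hD : D.IsHermitian) (v w : Fin n → Fd D) :
    st (hq D P₀ v w) = hq D P₀ w v := by
  rw [hq, st_sum, hq]
  refine Finset.sum_congr rfl fun i _ => ?_
  rw [st_mul hD, st_st]

lemma hq_mod (hP₀ : P₀ * P₀ = P₀) (v w : Fin n → Fd D) (a : Fd D) :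
    hq D P₀ v (act D P₀ w a) = hq D P₀ v w * a := by
  rw [hq, hq, Phi_act hP₀, Finset.sum_mul]
  refine Finset.sum_congr rfl fun i _ => ?_
  show st (Phi D P₀ v i) * (Phi D P₀ w i * a) = _
  rw [mul_assoc]

lemma hq_add_left (v w u : Fin n → Fd D) :
    hq D P₀ (v + w) u = hq D P₀ v u + hq D P₀ w u := by
  rw [hq, hq, hq, Phi_add, ← Finset.sum_add_distrib]
  refine Finset.sum_congr rfl fun i _ => ?_
  show st (Phi D P₀ v i + Phi D P₀ w i) * _ = _
  rw [st_add, add_mul]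

lemma hq_add_right (v w u : Fin n → Fd D) :
    hq D P₀ v (w + u) = hq D P₀ v w + hq D P₀ v u := by
  rw [hq, hq, hq, Phi_add, ← Finset.sum_add_distrib]
  refine Finset.sum_congr rfl fun i _ => ?_
  show st (Phi D P₀ v i) * (Phi D P₀ w i + Phi D P₀ u i) = _
  rw [mul_add]

lemma hq_smul_left (c : k) (v w : Fin n → Fd D) :
    hq D P₀ (c • v) w = star c • hq D P₀ v w := by
  rw [hq, hq, Phi_smul, Finset.smul_sum]
  refine Finset.sum_congr rfl fun i _ => ?_
  show st (c • Phi D P₀ v i) * _ = _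
  rw [st_smul, smul_mul]

lemma hq_smul_right (c : k) (v w : Fin n → Fd D) :
    hq D P₀ v (c • w) = c • hq D P₀ v w := by
  rw [hq, hq, Phi_smul, Finset.smul_sum]
  refine Finset.sum_congr rfl fun i _ => ?_
  show st (Phi D P₀ v i) * (c • Phi D P₀ w i) = _
  rw [mul_smul']

lemma hq_sh_left (v w : Fin n → Fd D) :
    hq D P₀ (shV v) w = sh (hq D P₀ v w) := by
  rw [hq, hq, Phi_sh, sh_sum]
  refine Finset.sum_congr rfl fun i _ => ?_
  show st (sh (Phi D P₀ v i)) * _ = _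
  rw [st_sh, sh_mul]

lemma hq_sh_right (v w : Fin n → Fd D) :
    hq D P₀ v (shV w) = sh (hq D P₀ v w) := by
  rw [hq, hq, Phi_sh, sh_sum]
  refine Finset.sum_congr rfl fun i _ => ?_
  show st (Phi D P₀ v i) * sh (Phi D P₀ w i) = _
  rw [mul_sh]

lemma hq_congr {m : ℕ} {v v' w w' : Fin n → Fd D}
    (hv : ∀ j t, t ≤ m → v j t = v' j t) (hw : ∀ j t, t ≤ m → w j t = w' j t) :
    hq D P₀ v w m = hq D P₀ v' w' m := by
  rw [hq, hq, sum_coef, sum_coef]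
  refine Finset.sum_congr rfl fun i _ => ?_
  refine mul_coef_congr (fun t ht => ?_) (fun t ht => Phi_congr
    (fun j t' ht' => hw j t' (le_trans ht' ht)) i)
  show star (Phi D P₀ v i t) = star (Phi D P₀ v' i t)
  rw [Phi_congr (fun j t' ht' => hv j t' (le_trans ht' ht)) i]

end Fd
end ModOps2

/-! ### The representation lemma -/
section Repr
variable {M N P : Type*} [AddCommMonoid M] [AddCommMonoid N] [AddCommGroup P]

def shf {M : Type*} [Zero M] (x : ℕ → M) : ℕ → M := fun t => match t with
  | 0 => 0
  | t+1 => x t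

def shfn {M : Type*} [Zero M] (p : ℕ) (x : ℕ → M) : ℕ → M :=
  fun t => if p ≤ t then x (t - p) else 0

lemma shfn_zero {M : Type*} [Zero M] (x : ℕ → M) : shfn 0 x = x := by
  funext t
  show (if 0 ≤ t then x (t - 0) else 0) = x t
  rw [if_pos (Nat.zero_le t), Nat.sub_zero]

lemma shf_shfn {M : Type*} [Zero M] (p : ℕ) (x : ℕ → M) :
    shf (shfn p x) = shfn (p+1) x := by
  funext t
  cases t with
  | zero =>
    show (0 : M) = if p + 1 ≤ 0 then _ else 0
    rw [if_neg (by omega)]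
  | succ t =>
    show (if p ≤ t then x (t - p) else 0) = if p + 1 ≤ t + 1 then x (t + 1 - (p+1)) else 0
    by_cases h : p ≤ t
    · rw [if_pos h, if_pos (by omega)]
      congr 1
      omega
    · rw [if_neg h, if_neg (by omega)]

lemma shfn_shfn {M : Type*} [Zero M] (p q : ℕ) (x : ℕ → M) :
    shfn p (shfn q x) = shfn (p + q) x := by
  funext t
  show (if p ≤ t then shfn q x (t - p) else 0) = if p + q ≤ t then x (t - (p+q)) else 0
  by_cases h : p ≤ t
  · rw [if_pos h]
    show (if q ≤ t - p then x (t - p - q) else 0) = _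
    by_cases h2 : q ≤ t - p
    · rw [if_pos h2, if_pos (by omega)]
      congr 1
      omega
    · rw [if_neg h2, if_neg (by omega)]
  · rw [if_neg h, if_neg (by omega)]

lemma shfn_coef {M : Type*} [Zero M] (p : ℕ) (x : ℕ → M) (t : ℕ) :
    shfn p x t = if p ≤ t then x (t - p) else 0 := rfl

lemma sum_shfn_coef (x : ℕ → M) (m t : ℕ) (ht : t ≤ m) :
    (∑ p ∈ Finset.range (m+1), shfn p (fdC (x p))) t = x t := by
  rw [Finset.sum_apply]
  have h1 : ∀ p, shfn p (fdC (x p)) t = if p = t then x t else 0 := by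
    intro p
    rw [shfn_coef]
    by_cases h : p ≤ t
    · rw [if_pos h]
      show (if t - p = 0 then x p else 0) = _
      by_cases h2 : p = t
      · subst h2
        rw [if_pos (by omega), if_pos rfl]
      · rw [if_neg (by omega), if_neg h2]
    · rw [if_neg h, if_neg (by omega)]
  rw [Finset.sum_congr rfl fun p _ => h1 p]
  exact Finset.sum_ite_eq' _ t (fun _ => x t) |>.trans (if_pos (Finset.mem_range.2 (by omega)))

theorem conv_repr (F : (ℕ → M) → (ℕ → N) → ℕ → P)
    (hadd1 : ∀ x x' y, F (x + x') y = F x y + F x' y)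
    (hadd2 : ∀ x y y', F x (y + y') = F x y + F x y')
    (hsh1 : ∀ x y, F (shf x) y = shf (F x y))
    (hsh2 : ∀ x y, F x (shf y) = shf (F x y))
    (hcont : ∀ m x x' y y', (∀ t ≤ m, x t = x' t) → (∀ t ≤ m, y t = y' t)
      → F x y m = F x' y' m)
    (x : ℕ → M) (y : ℕ → N) (m : ℕ) :
    fdConv (fun r u v => F (fdC u) (fdC v) r) x y m = F x y m := by
  classical
  -- zero laws
  have F0l : ∀ y, F 0 y = 0 := by
    intro y
    have h := hadd1 0 0 y
    rw [add_zero] at h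
    exact (add_eq_left.mp h.symm)
  have F0r : ∀ x, F x 0 = 0 := by
    intro x
    have h := hadd2 x 0 0
    rw [add_zero] at h
    exact (add_eq_left.mp h.symm)
  -- finite sums
  have Fsum1 : ∀ {ι : Type} (s : Finset ι) (g : ι → ℕ → M) (y),
      F (∑ i ∈ s, g i) y = ∑ i ∈ s, F (g i) y := by
    intro ι s g y
    induction s using Finset.cons_induction with
    | empty => rw [Finset.sum_empty, Finset.sum_empty, F0l]
    | cons a s ha ih =>
      rw [Finset.sum_cons, Finset.sum_cons, hadd1, ih]
  have Fsum2 : ∀ {ι : Type} (s : Finset ι) (g : ι → ℕ → N) (x),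
      F x (∑ i ∈ s, g i) = ∑ i ∈ s, F x (g i) := by
    intro ι s g x
    induction s using Finset.cons_induction with
    | empty => rw [Finset.sum_empty, Finset.sum_empty, F0r]
    | cons a s ha ih =>
      rw [Finset.sum_cons, Finset.sum_cons, hadd2, ih]
  -- shift equivariance, iterated
  have Fshfn1 : ∀ p x y, F (shfn p x) y = shfn p (F x y) := by
    intro p
    induction p with
    | zero => intro x y; rw [shfn_zero, shfn_zero]
    | succ p ih =>
      intro x y
      rw [← shf_shfn, hsh1, ih, shf_shfn]
  have Fshfn2 : ∀ p x y, F x (shfn p y) = shfn p (F x y) := by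
    intro p
    induction p with
    | zero => intro x y; rw [shfn_zero, shfn_zero]
    | succ p ih =>
      intro x y
      rw [← shf_shfn, hsh2, ih, shf_shfn]
  -- truncate
  set X := ∑ p ∈ Finset.range (m+1), shfn p (fdC (x p)) with hX
  set Y := ∑ q ∈ Finset.range (m+1), shfn q (fdC (y q)) with hY
  have h1 : F x y m = F X Y m :=
    hcont m x X y Y (fun t ht => (sum_shfn_coef x m t ht).symm)
      (fun t ht => (sum_shfn_coef y m t ht).symm)
  have h2 : F X Y = ∑ p ∈ Finset.range (m+1), ∑ q ∈ Finset.range (m+1),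
      shfn (p + q) (F (fdC (x p)) (fdC (y q))) := by
    rw [hX, Fsum1]
    refine Finset.sum_congr rfl fun p _ => ?_
    rw [hY, Fsum2]
    refine Finset.sum_congr rfl fun q _ => ?_
    rw [Fshfn1, Fshfn2, shfn_shfn]
  have h3 : F X Y m = ∑ p ∈ Finset.range (m+1), ∑ q ∈ Finset.range (m+1),
      (if p + q ≤ m then F (fdC (x p)) (fdC (y q)) (m - p - q) else 0) := by
    rw [h2, Finset.sum_apply]
    refine Finset.sum_congr rfl fun p _ => ?_
    rw [Finset.sum_apply]
    refine Finset.sum_congr rfl fun q _ => ?_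
    rw [shfn_coef]
    by_cases h : p + q ≤ m
    · rw [if_pos h, if_pos h, Nat.sub_sub]
    · rw [if_neg h, if_neg h]
  have h4 : ∀ p ∈ Finset.range (m+1),
      (∑ q ∈ Finset.range (m+1),
        (if p + q ≤ m then F (fdC (x p)) (fdC (y q)) (m - p - q) else 0))
      = ∑ q ∈ Finset.range (m - p + 1), F (fdC (x p)) (fdC (y q)) (m - p - q) := by
    intro p hp
    rw [Finset.mem_range] at hp
    have hsub : Finset.range (m - p + 1) ⊆ Finset.range (m+1) :=
      Finset.range_subset_range.2 (by omega)
    rw [← Finset.sum_subset hsub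
      (fun q _ hq => by
        rw [Finset.mem_range, not_lt] at hq
        rw [if_neg (by omega)])]
    refine Finset.sum_congr rfl fun q hq => ?_
    rw [Finset.mem_range] at hq
    rw [if_pos (by omega)]
  rw [h1, h3, Finset.sum_congr rfl h4]
  rw [range_sigma_eq_tri (fun p q r => F (fdC (x p)) (fdC (y q)) r) m]
  rw [fdConv_eq_tri]
  exact tri_rot (fun a b c => F (fdC (x b)) (fdC (y c)) a) m

end Repr

/-! ### Zero coefficient computations -/
section ZeroCoef
variable {k A : Type*} [CommRing k] [StarRing k] [Ring A] [Algebra k A]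
  [StarRing A] [StarModule k A]
variable {n : ℕ} {D : FormalDeformation k A} {P₀ : Matrix (Fin n) (Fin n) A}

namespace Fd

lemma Phi_coef_zero (hP₀ : P₀ * P₀ = P₀) (v : Fin n → Fd D) (i : Fin n) :
    Phi D P₀ v i 0 = ∑ j, P₀ i j * v j 0 := by
  rw [Phi_coef]
  exact Finset.sum_congr rfl fun j _ => by rw [coef_zero_mul, Pm_coef_zero hP₀]

lemma act_coef_zero (hP₀ : P₀ * P₀ = P₀) (v : Fin n → Fd D) (a : Fd D) (i : Fin n) :
    act D P₀ v a i 0 = ∑ j, P₀ i j * (Phi D P₀ v j 0 * a 0) := by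
  show Sop D P₀ (psi D P₀ (rsc (Phi D P₀ v) a)) i 0 = _
  rw [Sop_coef, Scoef_eq, U_zero_coef hP₀, sub_zero, psi_coef]
  exact Finset.sum_congr rfl fun j _ => by
    rw [show rsc (Phi D P₀ v) a j 0 = (Phi D P₀ v j * a) 0 from rfl, coef_zero_mul]

lemma hq_coef_zero (v w : Fin n → Fd D) :
    hq D P₀ v w 0 = ∑ i, star (Phi D P₀ v i 0) * Phi D P₀ w i 0 := by
  rw [hq, sum_coef]
  exact Finset.sum_congr rfl fun i _ => by rw [coef_zero_mul]; rfl

end Fd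
end ZeroCoef

/-! ### fdC helpers -/
section FdCHelp
variable {B : Type*}

lemma fdC_add [AddMonoid B] (a b : B) : fdC (a + b) = fdC a + fdC b := by
  funext m
  show (if m = 0 then a + b else 0) = (if m = 0 then a else 0) + (if m = 0 then b else 0)
  split
  · rfl
  · rw [add_zero]

lemma fdC_smul {k : Type*} [Semiring k] [AddCommMonoid B] [Module k B] (c : k) (a : B) :
    fdC (c • a) = c • fdC a := by
  funext m
  show (if m = 0 then c • a else 0) = c • (if m = 0 then a else 0)
  split
  · rfl
  · rw [smul_zero]

end FdCHelp

/-! ### Glue: transposed operators on statement-level series -/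
section Glue
variable {k A : Type*} [CommRing k] [StarRing k] [Ring A] [Algebra k A]
  [StarRing A] [StarModule k A]
variable {n : ℕ} (D : FormalDeformation k A) (P₀ : Matrix (Fin n) (Fin n) A)

def vtr (x : ℕ → Fin n → A) : Fin n → Fd D := fun i => (fun m => x m i : Fd D)

def FF (x : ℕ → Fin n → A) (a : ℕ → A) : ℕ → Fin n → A :=
  fun m i => Fd.act D P₀ (vtr D x) (a : Fd D) i m

def HH (x y : ℕ → Fin n → A) : ℕ → A := Fd.hq D P₀ (vtr D x) (vtr D y)

variable {D P₀}

lemma vtr_add (x x' : ℕ → Fin n → A) : vtr D (x + x') = vtr D x + vtr D x' := rfl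

lemma vtr_smul (c : k) (x : ℕ → Fin n → A) : vtr D (c • x) = c • vtr D x := rfl

lemma vtr_shf (x : ℕ → Fin n → A) : vtr D (shf x) = Fd.shV (vtr D x) := by
  funext i t
  cases t <;> rfl

lemma vtr_mem (x : ℕ → Fin n → A) (hx : ∀ m, P₀.mulVec (x m) = x m) :
    Fd.psi D P₀ (vtr D x) = vtr D x := by
  funext i m
  show ∑ j, P₀ i j * x m j = x m i
  exact congrFun (hx m) i

variable (hP₀ : P₀ * P₀ = P₀)
include hP₀

lemma FF_add1 (x x' : ℕ → Fin n → A) (a : ℕ → A) :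
    FF D P₀ (x + x') a = FF D P₀ x a + FF D P₀ x' a := by
  funext m i
  show Fd.act D P₀ (vtr D (x + x')) (a : Fd D) i m = _
  erw [vtr_add, Fd.act_add_left hP₀]
  rfl

lemma FF_add2 (x : ℕ → Fin n → A) (a a' : ℕ → A) :
    FF D P₀ x (a + a') = FF D P₀ x a + FF D P₀ x a' := by
  funext m i
  show Fd.act D P₀ (vtr D x) ((a : Fd D) + (a' : Fd D)) i m = _
  erw [Fd.act_add_right hP₀]
  rfl

lemma FF_smul1 (c : k) (x : ℕ → Fin n → A) (a : ℕ → A) :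
    FF D P₀ (c • x) a = c • FF D P₀ x a := by
  funext m i
  show Fd.act D P₀ (vtr D (c • x)) (a : Fd D) i m = _
  erw [vtr_smul, Fd.act_smul_left hP₀]
  rfl

lemma FF_smul2 (c : k) (x : ℕ → Fin n → A) (a : ℕ → A) :
    FF D P₀ x (c • a) = c • FF D P₀ x a := by
  funext m i
  show Fd.act D P₀ (vtr D x) (c • (a : Fd D)) i m = _
  erw [Fd.act_smul_right hP₀]
  rfl

lemma FF_sh1 (x : ℕ → Fin n → A) (a : ℕ → A) :
    FF D P₀ (shf x) a = shf (FF D P₀ x a) := by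
  funext m i
  show Fd.act D P₀ (vtr D (shf x)) (a : Fd D) i m = _
  erw [vtr_shf, Fd.act_sh_left hP₀]
  cases m <;> rfl

lemma FF_sh2 (x : ℕ → Fin n → A) (a : ℕ → A) :
    FF D P₀ x (shf a) = shf (FF D P₀ x a) := by
  funext m i
  show Fd.act D P₀ (vtr D x) (Fd.sh (a : Fd D)) i m = _
  erw [Fd.act_sh_right hP₀]
  cases m <;> rfl

lemma FF_cont (m : ℕ) (x x' : ℕ → Fin n → A) (a a' : ℕ → A)
    (hx : ∀ t ≤ m, x t = x' t) (ha : ∀ t ≤ m, a t = a' t) :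
    FF D P₀ x a m = FF D P₀ x' a' m := by
  funext i
  exact Fd.act_congr hP₀ (fun j t ht => congrFun (hx t ht) j) ha i

lemma conv_FF (x : ℕ → Fin n → A) (a : ℕ → A) :
    fdConv (fun r u v => FF D P₀ (fdC u) (fdC v) r) x a = FF D P₀ x a := by
  funext m
  exact conv_repr (FF D P₀) (FF_add1 hP₀) (FF_add2 hP₀) (FF_sh1 hP₀) (FF_sh2 hP₀)
    (FF_cont hP₀) x a m

omit hP₀

lemma HH_add1 (x x' y : ℕ → Fin n → A) :
    HH D P₀ (x + x') y = HH D P₀ x y + HH D P₀ x' y := by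
  show Fd.hq D P₀ (vtr D (x + x')) (vtr D y) = _
  rw [vtr_add, Fd.hq_add_left]
  rfl

lemma HH_add2 (x y y' : ℕ → Fin n → A) :
    HH D P₀ x (y + y') = HH D P₀ x y + HH D P₀ x y' := by
  show Fd.hq D P₀ (vtr D x) (vtr D (y + y')) = _
  rw [vtr_add, Fd.hq_add_right]
  rfl

lemma HH_sh1 (x y : ℕ → Fin n → A) :
    HH D P₀ (shf x) y = shf (HH D P₀ x y) := by
  show Fd.hq D P₀ (vtr D (shf x)) (vtr D y) = _
  rw [vtr_shf, Fd.hq_sh_left]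
  funext t
  cases t <;> rfl

lemma HH_sh2 (x y : ℕ → Fin n → A) :
    HH D P₀ x (shf y) = shf (HH D P₀ x y) := by
  show Fd.hq D P₀ (vtr D x) (vtr D (shf y)) = _
  rw [vtr_shf, Fd.hq_sh_right]
  funext t
  cases t <;> rfl

lemma HH_cont (m : ℕ) (x x' y y' : ℕ → Fin n → A)
    (hx : ∀ t ≤ m, x t = x' t) (hy : ∀ t ≤ m, y t = y' t) :
    HH D P₀ x y m = HH D P₀ x' y' m :=
  Fd.hq_congr (fun j t ht => congrFun (hx t ht) j) (fun j t ht => congrFun (hy t ht) j)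

lemma conv_HH (x y : ℕ → Fin n → A) :
    fdConv (fun r u v => HH D P₀ (fdC u) (fdC v) r) x y = HH D P₀ x y := by
  funext m
  exact conv_repr (HH D P₀) HH_add1 HH_add2 HH_sh1 HH_sh2 HH_cont x y m

lemma vtr_fdC_coef_zero (x : Fin n → A) (l : Fin n) : vtr D (fdC x) l 0 = x l := rfl

include hP₀ in
lemma Phi_vtr_fdC (x : Fin n → A) (hx : P₀.mulVec x = x) (j : Fin n) :
    Fd.Phi D P₀ (vtr D (fdC x)) j 0 = x j := by
  rw [Fd.Phi_coef_zero hP₀]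
  rw [Finset.sum_congr rfl fun l _ => by rw [vtr_fdC_coef_zero]]
  exact congrFun hx j

end Glue

/-- Proposition 2.10, existence part. For a Hermitian deformation
`qA` of `A` and a projection `P₀ ∈ Mₙ(A)`, the inner-product module
`(E = P₀Aⁿ, h₀)` admits a Hermitian deformation; moreover `h(x,x)` is a sum of
`n` elements of the form `b* ⋆ b`, hence algebraically positive. -/
theorem hermitian_module_deformation_exists {C A : Type*} [CommRing C] [StarRing C]
    [Invertible (2 : C)] [Ring A] [Algebra C A] [StarRing A] [StarModule C A]
    (D : FormalDeformation C A) (hD : D.IsHermitian) (n : ℕ)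
    (P₀ : Matrix (Fin n) (Fin n) A)
    (hP₀idem : P₀ * P₀ = P₀) (hP₀herm : P₀ᴴ = P₀) :
    ∃ M : HermitianDeformedModule D P₀,
      ∀ x : ℕ → Fin n → A, (∀ m, P₀.mulVec (x m) = x m) →
        ∃ b : Fin n → ℕ → A,
          fdConv M.h x x = ∑ i, D.mul (fdStar (b i)) (b i) := by
  classical
  refine ⟨{
    R := fun r u v => FF D P₀ (fdC u) (fdC v) r
    h := fun r u v => HH D P₀ (fdC u) (fdC v) r
    R_zero := ?_
    R_mem := ?_
    R_add_left := ?_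
    R_add_right := ?_
    R_smul_left := ?_
    R_smul_right := ?_
    act_one := ?_
    act_assoc := ?_
    h_zero := ?_
    h_add_left := ?_
    h_add_right := ?_
    h_smul_left := ?_
    h_smul_right := ?_
    h_herm := ?_
    h_mod := ?_ }, ?_⟩
  · -- R_zero
    intro x a hx
    funext i
    show Fd.act D P₀ (vtr D (fdC x)) ((fdC a : ℕ → A) : Fd D) i 0 = x i * a
    erw [Fd.act_coef_zero hP₀idem]
    have h1 : ∀ j, P₀ i j * (Fd.Phi D P₀ (vtr D (fdC x)) j 0 * (fdC a : Fd D) 0)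
        = P₀ i j * x j * a := by
      intro j
      rw [Phi_vtr_fdC hP₀idem x hx j]
      show P₀ i j * (x j * a) = _
      rw [mul_assoc]
    rw [Finset.sum_congr rfl fun j _ => h1 j, ← Finset.sum_mul]
    rw [show ∑ j, P₀ i j * x j = x i from congrFun hx i]
  · -- R_mem
    intro r x a _
    funext i
    show ∑ j, P₀ i j * Fd.act D P₀ (vtr D (fdC x)) ((fdC a : ℕ → A) : Fd D) j r = _
    have := congrFun (congrFun
      (Fd.act_psi hP₀idem (vtr D (fdC x)) ((fdC a : ℕ → A) : Fd D)) i) r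
    exact this
  · -- R_add_left
    intro r x x' a _ _
    show FF D P₀ (fdC (x + x')) (fdC a) r = _
    rw [fdC_add, FF_add1 hP₀idem]
    rfl
  · -- R_add_right
    intro r x a a' _
    show FF D P₀ (fdC x) (fdC (a + a')) r = _
    rw [fdC_add, FF_add2 hP₀idem]
    rfl
  · -- R_smul_left
    intro r c x a _
    show FF D P₀ (fdC (c • x)) (fdC a) r = _
    rw [fdC_smul, FF_smul1 hP₀idem]
    rfl
  · -- R_smul_right
    intro r c x a _
    show FF D P₀ (fdC x) (fdC (c • a)) r = _
    rw [fdC_smul, FF_smul2 hP₀idem]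
    rfl
  · -- act_one
    intro x hx
    rw [conv_FF hP₀idem]
    funext m i
    show Fd.act D P₀ (vtr D x) (1 : Fd D) i m = x m i
    rw [Fd.act_one hP₀idem (vtr_mem x hx)]
    rfl
  · -- act_assoc
    intro x a b _
    rw [conv_FF hP₀idem, conv_FF hP₀idem, conv_FF hP₀idem]
    funext m i
    have h := Fd.act_assoc hP₀idem (vtr D x) ((a : ℕ → A) : Fd D) ((b : ℕ → A) : Fd D)
    exact congrFun (congrFun h i) m
  · -- h_zero
    intro x y hx hy
    show Fd.hq D P₀ (vtr D (fdC x)) (vtr D (fdC y)) 0 = _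
    rw [Fd.hq_coef_zero]
    refine Finset.sum_congr rfl fun i _ => ?_
    rw [Phi_vtr_fdC hP₀idem x hx i, Phi_vtr_fdC hP₀idem y hy i]
  · -- h_add_left
    intro r x x' y _ _ _
    show HH D P₀ (fdC (x + x')) (fdC y) r = _
    rw [fdC_add, HH_add1]
    rfl
  · -- h_add_right
    intro r x y y' _ _ _
    show HH D P₀ (fdC x) (fdC (y + y')) r = _
    rw [fdC_add, HH_add2]
    rfl
  · -- h_smul_left
    intro r c x y _ _
    show HH D P₀ (fdC (c • x)) (fdC y) r = _
    rw [fdC_smul]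
    show Fd.hq D P₀ (vtr D (c • fdC x)) (vtr D (fdC y)) r = _
    rw [vtr_smul, Fd.hq_smul_left]
    rfl
  · -- h_smul_right
    intro r c x y _ _
    show HH D P₀ (fdC x) (fdC (c • y)) r = _
    rw [fdC_smul]
    show Fd.hq D P₀ (vtr D (fdC x)) (vtr D (c • fdC y)) r = _
    rw [vtr_smul, Fd.hq_smul_right]
    rfl
  · -- h_herm
    intro x y _ _
    rw [conv_HH, conv_HH]
    exact Fd.hq_st hD (vtr D x) (vtr D y)
  · -- h_mod
    intro x y a _ _
    rw [conv_FF hP₀idem, conv_HH, conv_HH]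
    show Fd.hq D P₀ (vtr D x) (Fd.act D P₀ (vtr D y) (a : Fd D)) = _
    erw [Fd.hq_mod hP₀idem]
    rfl
  · -- positivity
    intro x hx
    refine ⟨fun i => Fd.Phi D P₀ (vtr D x) i, ?_⟩
    rw [conv_HH]
    show Fd.hq D P₀ (vtr D x) (vtr D x) = _
    funext m
    rw [Fd.hq, Fd.sum_coef, Finset.sum_apply]
    rfl
end

section
/- Let C be a commutative star ring in which 2 is invertible, A a unital *-algebra over C, P_0 ∈ M_n(A) a projection, E = P_0 A^n with canonical inner product h_0(x,y) = Σ_{i=1}^n x_i* y_i, and qA = (A[[λ]], ⋆) a Hermitian formal deformation of A. Let (E[[λ]], •, h) and (E[[λ]], •', h') be two Hermitian deformations of (E, h_0) corresponding to qA (deformed module structures •, •' together with C[[λ]]-sesquilinear maps h and h' deforming h_0 that satisfy h(x,y)* = h(y,x), h(x, y • a) = h(x,y) ⋆ a, and likewise for h' with •'). Then they are isometrically equivalent: there exist C-linear maps T_r : E → E for r ≥ 1 such that T = id + Σ_{r≥1} T_r λ^r is a bijective qA-module map from (E[[λ]], •) to (E[[λ]], •') satisfying h'(T x, T y) = h(x,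 y) for all x, y ∈ E[[λ]]. -/
open scoped Matrix

section Toolkit
variable {β : Type*} [AddCommMonoid β]

/-- canonical triple antidiagonal sum -/
def flat3 (g : ℕ → ℕ → ℕ → β) (n : ℕ) : β :=
  ∑ p ∈ Finset.HasAntidiagonal.antidiagonal n, ∑ q ∈ Finset.HasAntidiagonal.antidiagonal p.2, g p.1 q.1 q.2

lemma flat3_assoc (g : ℕ → ℕ → ℕ → β) (n : ℕ) :
    (∑ p ∈ Finset.HasAntidiagonal.antidiagonal n, ∑ q ∈ Finset.HasAntidiagonal.antidiagonal p.1, g q.1 q.2 p.2)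
      = flat3 g n := by
  unfold flat3
  rw [Finset.sum_sigma', Finset.sum_sigma']
  refine Finset.sum_nbij' (i := fun x => ⟨(x.2.1, x.2.2 + x.1.2), (x.2.2, x.1.2)⟩)
    (j := fun x => ⟨(x.1.1 + x.2.1, x.2.2), (x.1.1, x.2.1)⟩) ?_ ?_ ?_ ?_ ?_
  · rintro ⟨⟨a,b⟩,⟨c,d⟩⟩ h
    simp only [Finset.mem_sigma, Finset.HasAntidiagonal.mem_antidiagonal, and_true, true_and] at h ⊢
    omega
  · rintro ⟨⟨a,b⟩,⟨c,d⟩⟩ h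
    simp only [Finset.mem_sigma, Finset.HasAntidiagonal.mem_antidiagonal, and_true, true_and] at h ⊢
    omega
  · rintro ⟨⟨a,b⟩,⟨c,d⟩⟩ h
    simp only [Finset.mem_sigma, Finset.HasAntidiagonal.mem_antidiagonal] at h
    have : c + d = a := h.2
    subst this; rfl
  · rintro ⟨⟨a,b⟩,⟨c,d⟩⟩ h
    simp only [Finset.mem_sigma, Finset.HasAntidiagonal.mem_antidiagonal] at h
    have : c + d = b := h.2
    subst this; rfl
  · rintro ⟨⟨a,b⟩,⟨c,d⟩⟩ h
    rfl

lemma flat3_swap23 (g : ℕ → ℕ → ℕ → β) (n : ℕ) :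
    flat3 (fun a b c => g a c b) n = flat3 g n := by
  unfold flat3
  refine Finset.sum_congr rfl fun p _ => ?_
  exact Finset.Nat.sum_antidiagonal_swap (f := fun q => g p.1 q.1 q.2)

lemma flat3_rot (g : ℕ → ℕ → ℕ → β) (n : ℕ) :
    flat3 (fun a b c => g b c a) n = flat3 g n := by
  rw [← flat3_assoc g n]
  rw [← Finset.Nat.sum_antidiagonal_swap
    (f := fun p => ∑ q ∈ Finset.HasAntidiagonal.antidiagonal p.1, g q.1 q.2 p.2)]
  rfl

lemma flat3_rot' (g : ℕ → ℕ → ℕ → β) (n : ℕ) :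
    flat3 (fun a b c => g c a b) n = flat3 g n := by
  rw [← flat3_rot g n]
  exact flat3_rot (fun a b c => g b c a) n

lemma flat3_swap12 (g : ℕ → ℕ → ℕ → β) (n : ℕ) :
    flat3 (fun a b c => g b a c) n = flat3 g n := by
  rw [← flat3_rot' g n]
  exact flat3_swap23 (fun a b c => g c a b) n

lemma flat3_swap13 (g : ℕ → ℕ → ℕ → β) (n : ℕ) :
    flat3 (fun a b c => g c b a) n = flat3 g n := by
  rw [← flat3_rot g n]
  exact flat3_swap23 (fun a b c => g b c a) n

/-- canonical four-fold antidiagonal sum -/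
def flat4 (g : ℕ → ℕ → ℕ → ℕ → β) (n : ℕ) : β :=
  ∑ p ∈ Finset.HasAntidiagonal.antidiagonal n, ∑ q ∈ Finset.HasAntidiagonal.antidiagonal p.2,
    ∑ r ∈ Finset.HasAntidiagonal.antidiagonal q.2, g p.1 q.1 r.1 r.2

lemma flat4_eq_flat3_pair3 (g : ℕ → ℕ → ℕ → ℕ → β) (n : ℕ) :
    flat4 g n = flat3 (fun a b c => ∑ r ∈ Finset.HasAntidiagonal.antidiagonal c, g a b r.1 r.2) n := rfl

lemma flat4_eq_sum_flat3 (g : ℕ → ℕ → ℕ → ℕ → β) (n : ℕ) :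
    flat4 g n = ∑ p ∈ Finset.HasAntidiagonal.antidiagonal n, flat3 (fun b c d => g p.1 b c d) p.2 := rfl

lemma flat4_perm234 (g : ℕ → ℕ → ℕ → ℕ → β) (σ : (ℕ → ℕ → ℕ → β) → (ℕ → ℕ → ℕ → β))
    (hσ : ∀ (h : ℕ → ℕ → ℕ → β) (m : ℕ), flat3 (σ h) m = flat3 h m) (n : ℕ) :
    (∑ p ∈ Finset.HasAntidiagonal.antidiagonal n, flat3 (σ (fun b c d => g p.1 b c d)) p.2) = flat4 g n := by
  rw [flat4_eq_sum_flat3]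
  exact Finset.sum_congr rfl fun p _ => hσ _ _

lemma flat4_swap12 (g : ℕ → ℕ → ℕ → ℕ → β) (n : ℕ) :
    flat4 (fun a b c d => g b a c d) n = flat4 g n := by
  rw [flat4_eq_flat3_pair3, flat4_eq_flat3_pair3]
  exact flat3_swap12 (fun a b c => ∑ r ∈ Finset.HasAntidiagonal.antidiagonal c, g a b r.1 r.2) n

lemma flat4_swap23 (g : ℕ → ℕ → ℕ → ℕ → β) (n : ℕ) :
    flat4 (fun a b c d => g a c b d) n = flat4 g n := by
  rw [flat4_eq_sum_flat3, flat4_eq_sum_flat3]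
  exact Finset.sum_congr rfl fun p _ => flat3_swap12 (fun b c d => g p.1 b c d) p.2

lemma flat4_swap34 (g : ℕ → ℕ → ℕ → ℕ → β) (n : ℕ) :
    flat4 (fun a b c d => g a b d c) n = flat4 g n := by
  rw [flat4_eq_sum_flat3, flat4_eq_sum_flat3]
  exact Finset.sum_congr rfl fun p _ => flat3_swap23 (fun b c d => g p.1 b c d) p.2

lemma flat4_swap13 (g : ℕ → ℕ → ℕ → ℕ → β) (n : ℕ) :
    flat4 (fun a b c d => g c b a d) n = flat4 g n := by
  rw [← flat4_swap23 g n, ← flat4_swap12 (fun a b c d => g a c b d) n]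
  exact flat4_swap23 _ n

lemma flat4_swap24 (g : ℕ → ℕ → ℕ → ℕ → β) (n : ℕ) :
    flat4 (fun a b c d => g a d c b) n = flat4 g n := by
  rw [← flat4_swap34 g n, ← flat4_swap23 (fun a b c d => g a b d c) n]
  exact flat4_swap34 _ n

lemma flat4_swap14 (g : ℕ → ℕ → ℕ → ℕ → β) (n : ℕ) :
    flat4 (fun a b c d => g d b c a) n = flat4 g n := by
  rw [← flat4_swap34 g n, ← flat4_swap13 (fun a b c d => g a b d c) n]
  exact flat4_swap34 _ n

lemma flat4_rot234 (g : ℕ → ℕ → ℕ → ℕ → β) (n : ℕ) :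
    flat4 (fun a b c d => g a c d b) n = flat4 g n := by
  rw [flat4_eq_sum_flat3, flat4_eq_sum_flat3]
  exact Finset.sum_congr rfl fun p _ => flat3_rot (fun b c d => g p.1 b c d) p.2

lemma flat4_rot (g : ℕ → ℕ → ℕ → ℕ → β) (n : ℕ) :
    flat4 (fun a b c d => g b c d a) n = flat4 g n :=
  (flat4_swap12 (fun a b c d => g a c d b) n).trans (flat4_rot234 g n)

end Toolkit
section Aux
set_option linter.unusedSectionVars false
set_option linter.unnecessarySimpa false

variable {C A : Type*} [CommRing C] [StarRing C] [Invertible (2 : C)]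
  [Ring A] [Algebra C A] [StarRing A] [StarModule C A] {n : ℕ}

/-- right scalar multiplication on vectors -/
def rmul (x : Fin n → A) (a : A) : Fin n → A := fun i => x i * a

/-- columns of `P₀` -/
def xi (P₀ : Matrix (Fin n) (Fin n) A) (j : Fin n) : Fin n → A := fun i => P₀ i j

variable {P₀ : Matrix (Fin n) (Fin n) A}

lemma mem_zero : P₀.mulVec (0 : Fin n → A) = 0 := by
  funext i; simp [Matrix.mulVec, dotProduct]

lemma mem_add {x y : Fin n → A} (hx : P₀.mulVec x = x) (hy : P₀.mulVec y = y) :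
    P₀.mulVec (x + y) = x + y := by
  rw [Matrix.mulVec_add, hx, hy]

lemma mem_smul {x : Fin n → A} (c : C) (hx : P₀.mulVec x = x) :
    P₀.mulVec (c • x) = c • x := by
  have : P₀.mulVec (c • x) = c • P₀.mulVec x := by
    funext i
    simp [Matrix.mulVec, dotProduct, mul_smul_comm, Finset.smul_sum]
  rw [this, hx]

lemma mem_neg {x : Fin n → A} (hx : P₀.mulVec x = x) : P₀.mulVec (-x) = -x := by
  have : P₀.mulVec (-x) = -(P₀.mulVec x) := by
    funext i
    simp [Matrix.mulVec, dotProduct]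
  rw [this, hx]

lemma mem_sub {x y : Fin n → A} (hx : P₀.mulVec x = x) (hy : P₀.mulVec y = y) :
    P₀.mulVec (x - y) = x - y := by
  rw [sub_eq_add_neg]; exact mem_add hx (mem_neg hy)

lemma mem_sum {ι : Type*} {s : Finset ι} {g : ι → Fin n → A}
    (hg : ∀ i ∈ s, P₀.mulVec (g i) = g i) : P₀.mulVec (∑ i ∈ s, g i) = ∑ i ∈ s, g i := by
  classical
  induction s using Finset.induction_on with
  | empty => simpa using mem_zero
  | insert _ _ hni ih =>
    rename_i a s
    rw [Finset.sum_insert hni]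
    exact mem_add (hg a (Finset.mem_insert_self a s))
      (ih fun i hi => hg i (Finset.mem_insert_of_mem hi))

lemma mem_rmul {x : Fin n → A} (hx : P₀.mulVec x = x) (a : A) :
    P₀.mulVec (rmul x a) = rmul x a := by
  have : P₀.mulVec (rmul x a) = rmul (P₀.mulVec x) a := by
    funext i
    simp [Matrix.mulVec, dotProduct, rmul, Finset.sum_mul, mul_assoc]
  rw [this, hx]

lemma mem_xi (hP₀idem : P₀ * P₀ = P₀) (j : Fin n) : P₀.mulVec (xi P₀ j) = xi P₀ j := by
  funext i
  simp only [Matrix.mulVec, dotProduct, xi]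
  rw [← Matrix.mul_apply, hP₀idem]

lemma sum_xi_rmul {x : Fin n → A} (hx : P₀.mulVec x = x) :
    ∑ j, rmul (xi P₀ j) (x j) = x := by
  funext i
  rw [← congrFun hx i]
  simp [rmul, xi, Matrix.mulVec, dotProduct]

/-- generic: maps additive on the submodule kill zero -/
lemma memmap_zero {β : Type*} [AddCommGroup β] (f : (Fin n → A) → β)
    (hf : ∀ u v, P₀.mulVec u = u → P₀.mulVec v = v → f (u + v) = f u + f v) :
    f 0 = 0 := by
  have := hf 0 0 mem_zero mem_zero
  simp only [add_zero] at this
  exact left_eq_add.mp this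

lemma memmap_sum {β : Type*} [AddCommGroup β] (f : (Fin n → A) → β)
    (hf : ∀ u v, P₀.mulVec u = u → P₀.mulVec v = v → f (u + v) = f u + f v)
    {ι : Type*} (s : Finset ι) (g : ι → Fin n → A)
    (hg : ∀ i ∈ s, P₀.mulVec (g i) = g i) :
    f (∑ i ∈ s, g i) = ∑ i ∈ s, f (g i) := by
  classical
  induction s using Finset.induction_on with
  | empty => simpa using memmap_zero f hf
  | insert _ _ hni ih =>
    rename_i a s
    rw [Finset.sum_insert hni, Finset.sum_insert hni,
      hf _ _ (hg a (Finset.mem_insert_self a s)) (mem_sum fun i hi => hg i (Finset.mem_insert_of_mem hi)),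
      ih fun i hi => hg i (Finset.mem_insert_of_mem hi)]

lemma memmap_neg {β : Type*} [AddCommGroup β] (f : (Fin n → A) → β)
    (hf : ∀ u v, P₀.mulVec u = u → P₀.mulVec v = v → f (u + v) = f u + f v)
    {x : Fin n → A} (hx : P₀.mulVec x = x) : f (-x) = -f x := by
  have := hf x (-x) hx (mem_neg hx)
  simp only [add_neg_cancel] at this
  rw [memmap_zero f hf] at this
  exact eq_neg_of_add_eq_zero_right this.symm

lemma memmap_sub {β : Type*} [AddCommGroup β] (f : (Fin n → A) → β)
    (hf : ∀ u v, P₀.mulVec u = u → P₀.mulVec v = v → f (u + v) = f u + f v)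
    {x y : Fin n → A} (hx : P₀.mulVec x = x) (hy : P₀.mulVec y = y) :
    f (x - y) = f x - f y := by
  rw [sub_eq_add_neg, hf x (-y) hx (mem_neg hy), memmap_neg f hf hy, sub_eq_add_neg]

end Aux
section Collapse
variable {V W P : Type*} [Zero V] [Zero W] [AddCommMonoid P]

lemma fdConv_const_const (B : ℕ → V → W → P) (x : V) (a : W)
    (h1 : ∀ r, B r 0 a = 0) (h10 : ∀ r, B r 0 0 = 0) (h2 : ∀ r, B r x 0 = 0) (s : ℕ) :
    fdConv B (fdC x) (fdC a) s = B s x a := by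
  unfold fdConv fdC
  rw [Finset.sum_eq_single (s, 0)]
  · simp
  · rintro ⟨p1, p2⟩ hp hne
    have hp' := Finset.HasAntidiagonal.mem_antidiagonal.mp hp
    have hp2 : p2 ≠ 0 := by
      rintro rfl
      refine hne ?_
      have : p1 = s := by simpa using hp'
      simp [this]
    apply Finset.sum_eq_zero
    rintro ⟨q1, q2⟩ hq
    have hq' := Finset.HasAntidiagonal.mem_antidiagonal.mp hq
    by_cases h : q1 = 0
    · subst h
      have hq2 : q2 ≠ 0 := by
        simp only [Finset.HasAntidiagonal.mem_antidiagonal] at hq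
        intro h0; exact hp2 (by omega)
      simp [hq2, h2]
    · by_cases h' : q2 = 0
      · simp [h, h', h1]
      · simp [h, h', h10]
  · intro hs
    exact absurd (Finset.HasAntidiagonal.mem_antidiagonal.mpr (by simp)) hs

lemma fdConv_right_const (B : ℕ → V → W → P) (z : ℕ → V) (b : W)
    (h2 : ∀ r k, B r (z k) 0 = 0) (s : ℕ) :
    fdConv B z (fdC b) s = ∑ p ∈ Finset.HasAntidiagonal.antidiagonal s, B p.1 (z p.2) b := by
  unfold fdConv fdC
  refine Finset.sum_congr rfl ?_
  rintro ⟨p1, p2⟩ hp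
  rw [Finset.sum_eq_single (p2, 0)]
  · simp
  · rintro ⟨q1, q2⟩ hq hne
    have hq' := Finset.HasAntidiagonal.mem_antidiagonal.mp hq
    have hq2 : q2 ≠ 0 := by
      rintro rfl
      refine hne ?_
      have : q1 = p2 := by simpa using hq'
      simp [this]
    simp [hq2, h2]
  · intro hs
    exact absurd (Finset.HasAntidiagonal.mem_antidiagonal.mpr (by simp)) hs

lemma fdConv_left_const (B : ℕ → V → W → P) (x : V) (w : ℕ → W)
    (h1 : ∀ r k, B r 0 (w k) = 0) (s : ℕ) :
    fdConv B (fdC x) w s = ∑ p ∈ Finset.HasAntidiagonal.antidiagonal s, B p.1 x (w p.2) := by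
  unfold fdConv fdC
  refine Finset.sum_congr rfl ?_
  rintro ⟨p1, p2⟩ hp
  rw [Finset.sum_eq_single (0, p2)]
  · simp
  · rintro ⟨q1, q2⟩ hq hne
    have hq' := Finset.HasAntidiagonal.mem_antidiagonal.mp hq
    have hq1 : q1 ≠ 0 := by
      rintro rfl
      refine hne ?_
      have : q2 = p2 := by simpa using hq'
      simp [this]
    simp [hq1, h1]
  · intro hs
    exact absurd (Finset.HasAntidiagonal.mem_antidiagonal.mpr (by simp)) hs

end Collapse

lemma fdStar_fdC {A : Type*} [AddMonoid A] [StarAddMonoid A] (a : A) :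
    fdStar (fdC a) = fdC (star a) := by
  funext m
  unfold fdStar fdC
  split <;> simp
section Coeff
set_option linter.unusedSectionVars false

variable {C A : Type*} [CommRing C] [StarRing C] [Invertible (2 : C)]
  [Ring A] [Algebra C A] [StarRing A] [StarModule C A] {n : ℕ}
  {D : FormalDeformation C A} {P₀ : Matrix (Fin n) (Fin n) A}
  (M : HermitianDeformedModule D P₀)

lemma fdC_mem {x : Fin n → A} (hx : P₀.mulVec x = x) :
    ∀ m, P₀.mulVec (fdC x m) = fdC x m := by
  intro m; unfold fdC; split
  · exact hx
  · exact mem_zero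

lemma R_zero_left (r : ℕ) (a : A) : M.R r 0 a = 0 := by
  have := M.R_add_left r 0 0 a mem_zero mem_zero
  simp only [add_zero] at this
  exact left_eq_add.mp this

lemma R_zero_right (r : ℕ) {x : Fin n → A} (hx : P₀.mulVec x = x) : M.R r x 0 = 0 := by
  have := M.R_add_right r x 0 0 hx
  simp only [add_zero] at this
  exact left_eq_add.mp this

lemma h_zero_left (r : ℕ) {y : Fin n → A} (hy : P₀.mulVec y = y) : M.h r 0 y = 0 := by
  have := M.h_add_left r 0 0 y mem_zero mem_zero hy
  simp only [add_zero] at this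
  exact left_eq_add.mp this

lemma h_zero_right (r : ℕ) {x : Fin n → A} (hx : P₀.mulVec x = x) : M.h r x 0 = 0 := by
  have := M.h_add_right r x 0 0 hx mem_zero mem_zero
  simp only [add_zero] at this
  exact left_eq_add.mp this

lemma fdConv_R_const {x : Fin n → A} (hx : P₀.mulVec x = x) (a : A) :
    fdConv M.R (fdC x) (fdC a) = fun k => M.R k x a := by
  funext k
  exact fdConv_const_const M.R x a (fun r => R_zero_left M r a) (fun r => R_zero_left M r 0)
    (fun r => R_zero_right M r hx) k

lemma Dmul_const (a b : A) : D.mul (fdC a) (fdC b) = fun k => D.C k a b := by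
  funext k
  exact fdConv_const_const _ a b (by simp) (by simp) (by simp) k

lemma fdConv_h_const {x y : Fin n → A} (hx : P₀.mulVec x = x) (hy : P₀.mulVec y = y) :
    fdConv M.h (fdC x) (fdC y) = fun k => M.h k x y := by
  funext k
  exact fdConv_const_const M.h x y (fun r => h_zero_left M r hy)
    (fun r => h_zero_left M r mem_zero) (fun r => h_zero_right M r hx) k

/-- key coefficient form of associativity -/
lemma assocC {x : Fin n → A} (hx : P₀.mulVec x = x) (s : ℕ) (a b : A) :
    ∑ p ∈ Finset.HasAntidiagonal.antidiagonal s, M.R p.1 (M.R p.2 x a) b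
      = ∑ p ∈ Finset.HasAntidiagonal.antidiagonal s, M.R p.1 x (D.C p.2 a b) := by
  have H := congrFun (M.act_assoc (fdC x) (fdC a) (fdC b) (fdC_mem hx)) s
  rw [fdConv_R_const M hx a, Dmul_const] at H
  rw [fdConv_right_const M.R _ b (fun r k => R_zero_right M r (M.R_mem k x a hx)) s] at H
  rw [fdConv_left_const M.R x _ (fun r k => R_zero_left M r _) s] at H
  exact H

/-- key coefficient form of h-R compatibility -/
lemma hmodC {x y : Fin n → A} (hx : P₀.mulVec x = x) (hy : P₀.mulVec y = y) (s : ℕ) (a : A) :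
    ∑ p ∈ Finset.HasAntidiagonal.antidiagonal s, M.h p.1 x (M.R p.2 y a)
      = ∑ p ∈ Finset.HasAntidiagonal.antidiagonal s, D.C p.1 (M.h p.2 x y) a := by
  have H := congrFun (M.h_mod (fdC x) (fdC y) (fdC a) (fdC_mem hx) (fdC_mem hy)) s
  rw [fdConv_R_const M hy a, fdConv_h_const M hx hy] at H
  rw [fdConv_left_const M.h x _ (fun r k => h_zero_left M r (M.R_mem k y a hy)) s] at H
  rw [show D.mul = fdConv (fun r a b => D.C r a b) from rfl] at H
  rw [fdConv_right_const (fun r a b => D.C r a b) _ a (fun r k => by simp) s] at H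
  exact H

/-- coefficient form of hermitian symmetry of h -/
lemma hhermC {x y : Fin n → A} (hx : P₀.mulVec x = x) (hy : P₀.mulVec y = y) (s : ℕ) :
    star (M.h s x y) = M.h s y x := by
  have H := congrFun (M.h_herm (fdC x) (fdC y) (fdC_mem hx) (fdC_mem hy)) s
  rw [fdConv_h_const M hx hy, fdConv_h_const M hy hx] at H
  exact H

/-- coefficient form of hermitian property of the deformation -/
lemma ChermC {D' : FormalDeformation C A} (hD : D'.IsHermitian) (s : ℕ) (a b : A) :
    star (D'.C s a b) = D'.C s (star b) (star a) := by
  have H := congrFun (hD (fdC a) (fdC b)) s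
  rw [Dmul_const, fdStar_fdC, fdStar_fdC, Dmul_const] at H
  exact H

/-- coefficient form: h is conjugate-linear against the action in the first slot -/
lemma hfirstC (hD : D.IsHermitian) {x y : Fin n → A}
    (hx : P₀.mulVec x = x) (hy : P₀.mulVec y = y) (s : ℕ) (a : A) :
    ∑ p ∈ Finset.HasAntidiagonal.antidiagonal s, M.h p.1 (M.R p.2 x a) y
      = ∑ p ∈ Finset.HasAntidiagonal.antidiagonal s, D.C p.1 (star a) (M.h p.2 x y) := by
  have H := congrArg star (hmodC M hy hx s a)
  rw [star_sum, star_sum] at H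
  calc ∑ p ∈ Finset.HasAntidiagonal.antidiagonal s, M.h p.1 (M.R p.2 x a) y
      = ∑ p ∈ Finset.HasAntidiagonal.antidiagonal s, star (M.h p.1 y (M.R p.2 x a)) :=
        Finset.sum_congr rfl fun p _ =>
          (hhermC M hy (M.R_mem p.2 x a hx) p.1).symm
    _ = ∑ p ∈ Finset.HasAntidiagonal.antidiagonal s, star (D.C p.1 (M.h p.2 y x) a) := H
    _ = ∑ p ∈ Finset.HasAntidiagonal.antidiagonal s, D.C p.1 (star a) (M.h p.2 x y) := by
        refine Finset.sum_congr rfl fun p _ => ?_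
        rw [ChermC hD, hhermC M hy hx]

lemma star_invOf_two : star (⅟2 : C) = ⅟2 := by
  have h : (2 : C) * star (⅟2 : C) = 1 := by
    calc (2 : C) * star (⅟2 : C) = star (⅟2 * 2 : C) := by rw [star_mul, star_ofNat]
    _ = 1 := by rw [invOf_mul_self, star_one]
  exact (invOf_eq_right_inv h).symm

end Coeff
section Defs
set_option linter.unusedSectionVars false

variable {C A : Type*} [CommRing C] [StarRing C] [Invertible (2 : C)]
  [Ring A] [Algebra C A] [StarRing A] [StarModule C A] {n : ℕ}
  {D : FormalDeformation C A} {P₀ : Matrix (Fin n) (Fin n) A}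

/-- goodness of a single coefficient map -/
def GoodAt (C : Type*) [CommRing C] [Algebra C A] (P₀ : Matrix (Fin n) (Fin n) A)
    (T : (Fin n → A) → Fin n → A) : Prop :=
  (∀ x, P₀.mulVec x = x → P₀.mulVec (T x) = T x) ∧
  (∀ x y, P₀.mulVec x = x → P₀.mulVec y = y → T (x + y) = T x + T y) ∧
  (∀ (c : C) x, P₀.mulVec x = x → T (c • x) = c • T x)

lemma goodAt_id : GoodAt C P₀ (fun x => x) := ⟨fun _ hx => hx, fun _ _ _ _ => rfl, fun _ _ _ => rfl⟩

lemma goodAt_zero : GoodAt C P₀ (0 : (Fin n → A) → Fin n → A) := by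
  refine ⟨fun _ _ => mem_zero, fun _ _ _ _ => by simp, fun _ _ _ => by simp⟩

lemma GoodAt.map_zero' {T : (Fin n → A) → Fin n → A} (hT : GoodAt C P₀ T) : T 0 = 0 :=
  memmap_zero T hT.2.1

variable (M M' : HermitianDeformedModule D P₀)

/-- level-`t` module defect of a coefficient family `Q` -/
def ddl (Q : ℕ → (Fin n → A) → Fin n → A) (t : ℕ) (x : Fin n → A) (a : A) : Fin n → A :=
  ∑ r ∈ Finset.HasAntidiagonal.antidiagonal t, (Q r.1 (M.R r.2 x a) - M'.R r.2 (Q r.1 x) a)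

/-- the module correction at level m+1 -/
def uu (Q : ℕ → (Fin n → A) → Fin n → A) (m : ℕ) (x : Fin n → A) : Fin n → A :=
  -∑ j, ddl M M' Q (m + 1) (xi P₀ j) (x j)

/-- family with the module correction inserted at slot m+1 -/
def TuF (Q : ℕ → (Fin n → A) → Fin n → A) (m : ℕ) : ℕ → (Fin n → A) → Fin n → A :=
  fun k => if k = m + 1 then uu M M' Q m else Q k

/-- level-`t` isometry defect of the corrected family -/
def eel (Q' : ℕ → (Fin n → A) → Fin n → A) (t : ℕ) (x y : Fin n → A) : A :=
  (∑ p ∈ Finset.HasAntidiagonal.antidiagonal t, ∑ q ∈ Finset.HasAntidiagonal.antidiagonal p.2,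
    M'.h p.1 (Q' q.1 x) (Q' q.2 y)) - M.h t x y

/-- the isometry correction at level m+1 -/
def BB (Q : ℕ → (Fin n → A) → Fin n → A) (m : ℕ) (x : Fin n → A) : Fin n → A :=
  fun i => star ((-(⅟2 : C)) • eel M M' (TuF M M' Q m) (m + 1) x (xi P₀ i))

/-- the full correction at level m+1 -/
def stepT (Q : ℕ → (Fin n → A) → Fin n → A) (m : ℕ) : (Fin n → A) → Fin n → A :=
  fun x => uu M M' Q m x + BB M M' Q m x

/-- truncation of a family -/
def Ttrunc (Q : ℕ → (Fin n → A) → Fin n → A) (m : ℕ) : ℕ → (Fin n → A) → Fin n → A :=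
  fun i => if i ≤ m then Q i else 0

/-- the recursive construction: `Tup m` is the family of the first `m+1` coefficients -/
def Tup : ℕ → ℕ → (Fin n → A) → Fin n → A
  | 0 => fun i => if i = 0 then (fun x => x) else 0
  | m + 1 => fun i =>
      if i = m + 1 then stepT M M' (Ttrunc (Tup m) m) m else Tup m i

/-- the equivalence -/
def Tt : ℕ → (Fin n → A) → Fin n → A := fun i => Tup M M' i i

lemma Tt_zero : Tt M M' 0 = fun x => x := by simp [Tt, Tup]

lemma Tup_le : ∀ m i, i ≤ m → Tup M M' m i = Tt M M' i := by
  intro m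
  induction m with
  | zero => intro i hi; interval_cases i; rfl
  | succ m ih =>
    intro i hi
    rcases Nat.eq_or_lt_of_le hi with h | h
    · subst h; rfl
    · have hi' : i ≤ m := by omega
      show Tup M M' (m+1) i = _
      simp only [Tup]
      rw [if_neg (show ¬ i = m + 1 by omega)]
      exact ih i hi'

lemma Ttrunc_Tup (m : ℕ) : Ttrunc (Tup M M' m) m = Ttrunc (Tt M M') m := by
  funext i
  unfold Ttrunc
  split
  · exact Tup_le M M' m i (by assumption)
  · rfl

lemma Tt_succ (m : ℕ) : Tt M M' (m + 1) = stepT M M' (Ttrunc (Tt M M') m) m := by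
  show Tup M M' (m+1) (m+1) = _
  simp only [Tup, if_true]
  rw [Ttrunc_Tup]

lemma Ttrunc_le {Q : ℕ → (Fin n → A) → Fin n → A} {m i : ℕ} (h : i ≤ m) :
    Ttrunc Q m i = Q i := if_pos h

lemma Ttrunc_gt {Q : ℕ → (Fin n → A) → Fin n → A} {m i : ℕ} (h : ¬ i ≤ m) :
    Ttrunc Q m i = 0 := if_neg h

end Defs
section SumSingle
variable {β : Type*} [AddCommMonoid β]

lemma sum_ad_single_left (f : ℕ × ℕ → β) (N : ℕ)
    (hf : ∀ p ∈ Finset.HasAntidiagonal.antidiagonal N, p.1 ≠ N → f p = 0) :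
    ∑ p ∈ Finset.HasAntidiagonal.antidiagonal N, f p = f (N, 0) := by
  rw [Finset.sum_eq_single (N, 0)]
  · rintro ⟨p1, p2⟩ hp hne
    refine hf _ hp ?_
    have := Finset.HasAntidiagonal.mem_antidiagonal.mp hp
    intro h
    exact hne (by simp at this ⊢; omega)
  · intro hs; exact absurd (Finset.HasAntidiagonal.mem_antidiagonal.mpr (by simp)) hs

lemma sum_ad_single_right (f : ℕ × ℕ → β) (N : ℕ)
    (hf : ∀ p ∈ Finset.HasAntidiagonal.antidiagonal N, p.2 ≠ N → f p = 0) :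
    ∑ p ∈ Finset.HasAntidiagonal.antidiagonal N, f p = f (0, N) := by
  rw [Finset.sum_eq_single (0, N)]
  · rintro ⟨p1, p2⟩ hp hne
    refine hf _ hp ?_
    have := Finset.HasAntidiagonal.mem_antidiagonal.mp hp
    intro h
    exact hne (by simp at this ⊢; omega)
  · intro hs; exact absurd (Finset.HasAntidiagonal.mem_antidiagonal.mpr (by simp)) hs

end SumSingle

section DD
set_option linter.unusedSectionVars false
set_option maxHeartbeats 1000000

variable {C A : Type*} [CommRing C] [StarRing C] [Invertible (2 : C)]
  [Ring A] [Algebra C A] [StarRing A] [StarModule C A] {n : ℕ}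
  {D : FormalDeformation C A} {P₀ : Matrix (Fin n) (Fin n) A}
  (M M' : HermitianDeformedModule D P₀)
  {Q : ℕ → (Fin n → A) → Fin n → A}

lemma ddl_mem (hQg : ∀ i, GoodAt C P₀ (Q i)) (t : ℕ) {x : Fin n → A} (a : A)
    (hx : P₀.mulVec x = x) : P₀.mulVec (ddl M M' Q t x a) = ddl M M' Q t x a := by
  refine mem_sum fun r _ => mem_sub ?_ ?_
  · exact (hQg r.1).1 _ (M.R_mem r.2 x a hx)
  · exact M'.R_mem r.2 _ a ((hQg r.1).1 _ hx)

lemma ddl_add_right (hQg : ∀ i, GoodAt C P₀ (Q i)) (t : ℕ) {x : Fin n → A} (a b : A)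
    (hx : P₀.mulVec x = x) :
    ddl M M' Q t x (a + b) = ddl M M' Q t x a + ddl M M' Q t x b := by
  unfold ddl
  rw [← Finset.sum_add_distrib]
  refine Finset.sum_congr rfl fun r _ => ?_
  rw [M.R_add_right r.2 x a b hx, (hQg r.1).2.1 _ _ (M.R_mem r.2 x a hx) (M.R_mem r.2 x b hx),
    M'.R_add_right r.2 _ a b ((hQg r.1).1 _ hx)]
  abel

lemma ddl_smul_right (hQg : ∀ i, GoodAt C P₀ (Q i)) (t : ℕ) {x : Fin n → A} (c : C) (a : A)
    (hx : P₀.mulVec x = x) :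
    ddl M M' Q t x (c • a) = c • ddl M M' Q t x a := by
  unfold ddl
  rw [Finset.smul_sum]
  refine Finset.sum_congr rfl fun r _ => ?_
  rw [M.R_smul_right r.2 c x a hx, (hQg r.1).2.2 c _ (M.R_mem r.2 x a hx),
    M'.R_smul_right r.2 c _ a ((hQg r.1).1 _ hx), smul_sub]

lemma ddl_add_left (hQg : ∀ i, GoodAt C P₀ (Q i)) (t : ℕ) {x x' : Fin n → A} (a : A)
    (hx : P₀.mulVec x = x) (hx' : P₀.mulVec x' = x') :
    ddl M M' Q t (x + x') a = ddl M M' Q t x a + ddl M M' Q t x' a := by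
  unfold ddl
  rw [← Finset.sum_add_distrib]
  refine Finset.sum_congr rfl fun r _ => ?_
  rw [M.R_add_left r.2 x x' a hx hx',
    (hQg r.1).2.1 _ _ (M.R_mem r.2 x a hx) (M.R_mem r.2 x' a hx'),
    (hQg r.1).2.1 _ _ hx hx',
    M'.R_add_left r.2 _ _ a ((hQg r.1).1 _ hx) ((hQg r.1).1 _ hx')]
  abel

lemma ddl_smul_left (hQg : ∀ i, GoodAt C P₀ (Q i)) (t : ℕ) {x : Fin n → A} (c : C) (a : A)
    (hx : P₀.mulVec x = x) :
    ddl M M' Q t (c • x) a = c • ddl M M' Q t x a := by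
  unfold ddl
  rw [Finset.smul_sum]
  refine Finset.sum_congr rfl fun r _ => ?_
  rw [M.R_smul_left r.2 c x a hx, (hQg r.1).2.2 c _ (M.R_mem r.2 x a hx),
    (hQg r.1).2.2 c _ hx, M'.R_smul_left r.2 c _ a ((hQg r.1).1 _ hx), smul_sub]

lemma double_sum_sub {β σ τ : Type*} [AddCommGroup β] (s : Finset σ) (t : σ → Finset τ)
    (f g : σ → τ → β) :
    ∑ w ∈ s, ∑ r ∈ t w, (f w r - g w r)
      = (∑ w ∈ s, ∑ r ∈ t w, f w r) - ∑ w ∈ s, ∑ r ∈ t w, g w r := by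
  rw [← Finset.sum_sub_distrib]
  exact Finset.sum_congr rfl fun w _ => by rw [Finset.sum_sub_distrib]

/-- The Hochschild cocycle identity for the level-(m+1) defect. -/
lemma ddl_cocycle (hQg : ∀ i, GoodAt C P₀ (Q i)) (m : ℕ)
    (hQmod : ∀ t, t ≤ m → ∀ x a, P₀.mulVec x = x → ddl M M' Q t x a = 0)
    {x : Fin n → A} (a b : A) (hx : P₀.mulVec x = x) :
    ddl M M' Q (m + 1) x (a * b)
      = ddl M M' Q (m + 1) (rmul x a) b + rmul (ddl M M' Q (m + 1) x a) b := by
  have key : ∑ w ∈ Finset.HasAntidiagonal.antidiagonal (m + 1), ddl M M' Q w.1 x (D.C w.2 a b)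
      = (∑ w ∈ Finset.HasAntidiagonal.antidiagonal (m + 1), ddl M M' Q w.1 (M.R w.2 x a) b)
        + ∑ w ∈ Finset.HasAntidiagonal.antidiagonal (m + 1), M'.R w.1 (ddl M M' Q w.2 x a) b := by
    have eL : ∑ w ∈ Finset.HasAntidiagonal.antidiagonal (m + 1), ddl M M' Q w.1 x (D.C w.2 a b)
        = flat3 (fun i j v => Q i (M.R j (M.R v x a) b)) (m+1)
          - flat3 (fun i j v => M'.R j (M'.R v (Q i x) a) b) (m+1) := by
      unfold ddl
      rw [double_sum_sub]
      congr 1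
      · calc ∑ w ∈ Finset.HasAntidiagonal.antidiagonal (m+1), ∑ r ∈ Finset.HasAntidiagonal.antidiagonal w.1,
              Q r.1 (M.R r.2 x (D.C w.2 a b))
            = flat3 (fun i j v => Q i (M.R j x (D.C v a b))) (m+1) :=
              flat3_assoc (fun i j v => Q i (M.R j x (D.C v a b))) (m+1)
          _ = flat3 (fun i j v => Q i (M.R j (M.R v x a) b)) (m+1) := by
              unfold flat3
              refine Finset.sum_congr rfl fun p _ => ?_
              calc ∑ q ∈ Finset.HasAntidiagonal.antidiagonal p.2, Q p.1 (M.R q.1 x (D.C q.2 a b))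
                  = Q p.1 (∑ q ∈ Finset.HasAntidiagonal.antidiagonal p.2, M.R q.1 x (D.C q.2 a b)) :=
                    (memmap_sum (Q p.1) (hQg p.1).2.1 _ _
                      (fun q _ => M.R_mem _ _ _ hx)).symm
                _ = Q p.1 (∑ q ∈ Finset.HasAntidiagonal.antidiagonal p.2, M.R q.1 (M.R q.2 x a) b) := by
                    rw [← assocC M hx p.2 a b]
                _ = ∑ q ∈ Finset.HasAntidiagonal.antidiagonal p.2, Q p.1 (M.R q.1 (M.R q.2 x a) b) :=
                    memmap_sum (Q p.1) (hQg p.1).2.1 _ _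
                      (fun q _ => M.R_mem _ _ _ (M.R_mem _ _ _ hx))
      · calc ∑ w ∈ Finset.HasAntidiagonal.antidiagonal (m+1), ∑ r ∈ Finset.HasAntidiagonal.antidiagonal w.1,
              M'.R r.2 (Q r.1 x) (D.C w.2 a b)
            = flat3 (fun i j v => M'.R j (Q i x) (D.C v a b)) (m+1) :=
              flat3_assoc (fun i j v => M'.R j (Q i x) (D.C v a b)) (m+1)
          _ = flat3 (fun i j v => M'.R j (M'.R v (Q i x) a) b) (m+1) := by
              unfold flat3
              refine Finset.sum_congr rfl fun p _ => ?_
              exact (assocC M' ((hQg p.1).1 _ hx) p.2 a b).symm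
    have eR1 : ∑ w ∈ Finset.HasAntidiagonal.antidiagonal (m + 1), ddl M M' Q w.1 (M.R w.2 x a) b
        = flat3 (fun i j v => Q i (M.R j (M.R v x a) b)) (m+1)
          - flat3 (fun i j v => M'.R i (Q j (M.R v x a)) b) (m+1) := by
      unfold ddl
      rw [double_sum_sub]
      congr 1
      · exact flat3_assoc (fun i j v => Q i (M.R j (M.R v x a) b)) (m+1)
      · calc ∑ w ∈ Finset.HasAntidiagonal.antidiagonal (m+1), ∑ r ∈ Finset.HasAntidiagonal.antidiagonal w.1,
              M'.R r.2 (Q r.1 (M.R w.2 x a)) b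
            = flat3 (fun i j v => M'.R j (Q i (M.R v x a)) b) (m+1) :=
              flat3_assoc (fun i j v => M'.R j (Q i (M.R v x a)) b) (m+1)
          _ = flat3 (fun i j v => M'.R i (Q j (M.R v x a)) b) (m+1) :=
              flat3_swap12 (fun i j v => M'.R i (Q j (M.R v x a)) b) (m+1)
    have eR2 : ∑ w ∈ Finset.HasAntidiagonal.antidiagonal (m + 1), M'.R w.1 (ddl M M' Q w.2 x a) b
        = flat3 (fun i j v => M'.R i (Q j (M.R v x a)) b) (m+1)
          - flat3 (fun i j v => M'.R i (M'.R v (Q j x) a) b) (m+1) := by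
      unfold ddl
      have expand : ∀ w ∈ Finset.HasAntidiagonal.antidiagonal (m+1),
          M'.R w.1 (∑ r ∈ Finset.HasAntidiagonal.antidiagonal w.2,
            (Q r.1 (M.R r.2 x a) - M'.R r.2 (Q r.1 x) a)) b
          = ∑ r ∈ Finset.HasAntidiagonal.antidiagonal w.2,
              (M'.R w.1 (Q r.1 (M.R r.2 x a)) b - M'.R w.1 (M'.R r.2 (Q r.1 x) a) b) := by
        intro w _
        rw [memmap_sum (fun z => M'.R w.1 z b)
          (fun u v hu hv => M'.R_add_left w.1 u v b hu hv) _ _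
          (fun r _ => mem_sub ((hQg r.1).1 _ (M.R_mem _ _ _ hx))
            (M'.R_mem _ _ _ ((hQg r.1).1 _ hx)))]
        refine Finset.sum_congr rfl fun r _ => ?_
        exact memmap_sub (fun z => M'.R w.1 z b)
          (fun u v hu hv => M'.R_add_left w.1 u v b hu hv)
          ((hQg r.1).1 _ (M.R_mem _ _ _ hx)) (M'.R_mem _ _ _ ((hQg r.1).1 _ hx))
      rw [Finset.sum_congr rfl expand, double_sum_sub]
      rfl
    have sw : flat3 (fun i j v => M'.R j (M'.R v (Q i x) a) b) (m+1)
        = flat3 (fun i j v => M'.R i (M'.R v (Q j x) a) b) (m+1) :=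
      flat3_swap12 (fun i j v => M'.R i (M'.R v (Q j x) a) b) (m+1)
    rw [eL, eR1, eR2, sw]
    abel
  -- extraction of top terms
  have L0 : ∑ w ∈ Finset.HasAntidiagonal.antidiagonal (m + 1), ddl M M' Q w.1 x (D.C w.2 a b)
      = ddl M M' Q (m+1) x (a * b) := by
    rw [sum_ad_single_left (fun w => ddl M M' Q w.1 x (D.C w.2 a b)) (m+1) ?side]
    · show ddl M M' Q (m+1) x (D.C 0 a b) = _
      rw [D.C_zero]
    case side =>
      intro p hp hne
      have := Finset.HasAntidiagonal.mem_antidiagonal.mp hp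
      exact hQmod p.1 (by omega) x _ hx
  have R10 : ∑ w ∈ Finset.HasAntidiagonal.antidiagonal (m + 1), ddl M M' Q w.1 (M.R w.2 x a) b
      = ddl M M' Q (m+1) (rmul x a) b := by
    rw [sum_ad_single_left (fun w => ddl M M' Q w.1 (M.R w.2 x a) b) (m+1) ?side]
    · show ddl M M' Q (m+1) (M.R 0 x a) b = _
      rw [M.R_zero x a hx]
      rfl
    case side =>
      intro p hp hne
      have := Finset.HasAntidiagonal.mem_antidiagonal.mp hp
      exact hQmod p.1 (by omega) _ _ (M.R_mem p.2 x a hx)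
  have R20 : ∑ w ∈ Finset.HasAntidiagonal.antidiagonal (m + 1), M'.R w.1 (ddl M M' Q w.2 x a) b
      = rmul (ddl M M' Q (m+1) x a) b := by
    rw [sum_ad_single_right (fun w => M'.R w.1 (ddl M M' Q w.2 x a) b) (m+1) ?side]
    · show M'.R 0 (ddl M M' Q (m+1) x a) b = _
      rw [M'.R_zero _ b (ddl_mem M M' hQg (m+1) a hx)]
      rfl
    case side =>
      intro p hp hne
      have := Finset.HasAntidiagonal.mem_antidiagonal.mp hp
      show M'.R p.1 (ddl M M' Q p.2 x a) b = 0
      rw [hQmod p.2 (by omega) x a hx]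
      exact R_zero_left M' p.1 b
  rw [← L0, key, R10, R20]

end DD
section UU
set_option linter.unusedSectionVars false
set_option maxHeartbeats 1000000

variable {C A : Type*} [CommRing C] [StarRing C] [Invertible (2 : C)]
  [Ring A] [Algebra C A] [StarRing A] [StarModule C A] {n : ℕ}
  {D : FormalDeformation C A} {P₀ : Matrix (Fin n) (Fin n) A}
  (M M' : HermitianDeformedModule D P₀)
  {Q : ℕ → (Fin n → A) → Fin n → A}

lemma rmul_sum {ι : Type*} (s : Finset ι) (z : ι → Fin n → A) (a : A) :
    rmul (∑ i ∈ s, z i) a = ∑ i ∈ s, rmul (z i) a := by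
  funext k
  simp [rmul, Finset.sum_apply, Finset.sum_mul]

lemma rmul_neg (z : Fin n → A) (a : A) : rmul (-z) a = -rmul z a := by
  funext k; simp [rmul]

lemma rmul_add (z w : Fin n → A) (a : A) : rmul (z + w) a = rmul z a + rmul w a := by
  funext k; simp [rmul, add_mul]

lemma uu_mem (hQg : ∀ i, GoodAt C P₀ (Q i)) (hP₀idem : P₀ * P₀ = P₀) (m : ℕ)
    (x : Fin n → A) : P₀.mulVec (uu M M' Q m x) = uu M M' Q m x := by
  exact mem_neg (mem_sum fun j _ => ddl_mem M M' hQg (m+1) (x j) (mem_xi hP₀idem j))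

lemma uu_add (hQg : ∀ i, GoodAt C P₀ (Q i)) (hP₀idem : P₀ * P₀ = P₀) (m : ℕ)
    (x y : Fin n → A) : uu M M' Q m (x + y) = uu M M' Q m x + uu M M' Q m y := by
  unfold uu
  rw [← neg_add, ← Finset.sum_add_distrib]
  congr 1
  refine Finset.sum_congr rfl fun j _ => ?_
  rw [show (x + y) j = x j + y j from rfl,
    ddl_add_right M M' hQg (m+1) (x j) (y j) (mem_xi hP₀idem j)]

lemma uu_smul (hQg : ∀ i, GoodAt C P₀ (Q i)) (hP₀idem : P₀ * P₀ = P₀) (m : ℕ)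
    (c : C) (x : Fin n → A) : uu M M' Q m (c • x) = c • uu M M' Q m x := by
  unfold uu
  rw [smul_neg]
  congr 1
  rw [Finset.smul_sum]
  refine Finset.sum_congr rfl fun j _ => ?_
  rw [show (c • x) j = c • x j from rfl,
    ddl_smul_right M M' hQg (m+1) c (x j) (mem_xi hP₀idem j)]

lemma uu_goodAt (hQg : ∀ i, GoodAt C P₀ (Q i)) (hP₀idem : P₀ * P₀ = P₀) (m : ℕ) :
    GoodAt C P₀ (uu M M' Q m) :=
  ⟨fun x _ => uu_mem M M' hQg hP₀idem m x,
   fun x y _ _ => uu_add M M' hQg hP₀idem m x y,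
   fun c x _ => uu_smul M M' hQg hP₀idem m c x⟩

lemma uu_module (hQg : ∀ i, GoodAt C P₀ (Q i)) (hP₀idem : P₀ * P₀ = P₀) (m : ℕ)
    (hQmod : ∀ t, t ≤ m → ∀ x a, P₀.mulVec x = x → ddl M M' Q t x a = 0)
    {x : Fin n → A} (a : A) (hx : P₀.mulVec x = x) :
    uu M M' Q m (rmul x a)
      = rmul (uu M M' Q m x) a - ddl M M' Q (m+1) x a := by
  unfold uu
  have step1 : ∀ j, ddl M M' Q (m+1) (xi P₀ j) (rmul x a j)
      = ddl M M' Q (m+1) (rmul (xi P₀ j) (x j)) a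
        + rmul (ddl M M' Q (m+1) (xi P₀ j) (x j)) a := by
    intro j
    rw [show rmul x a j = x j * a from rfl]
    exact ddl_cocycle M M' hQg m hQmod (x j) a (mem_xi hP₀idem j)
  rw [Finset.sum_congr rfl fun j _ => step1 j, Finset.sum_add_distrib]
  have sum1 : ∑ j, ddl M M' Q (m+1) (rmul (xi P₀ j) (x j)) a
      = ddl M M' Q (m+1) x a := by
    rw [← memmap_sum (fun z => ddl M M' Q (m+1) z a)
      (fun u v hu hv => ddl_add_left M M' hQg (m+1) a hu hv) _ _
      (fun j _ => mem_rmul (mem_xi hP₀idem j) (x j)),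
      sum_xi_rmul hx]
  have sum2 : ∑ j, rmul (ddl M M' Q (m+1) (xi P₀ j) (x j)) a
      = rmul (-uu M M' Q m x) a := by
    rw [← rmul_sum]
    congr 1
    unfold uu
    rw [neg_neg]
  rw [sum1, sum2, rmul_neg]
  abel

end UU
section EE
set_option linter.unusedSectionVars false
set_option maxHeartbeats 1000000

variable {C A : Type*} [CommRing C] [StarRing C] [Invertible (2 : C)]
  [Ring A] [Algebra C A] [StarRing A] [StarModule C A] {n : ℕ}
  {D : FormalDeformation C A} {P₀ : Matrix (Fin n) (Fin n) A}
  (M M' : HermitianDeformedModule D P₀)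
  {Q : ℕ → (Fin n → A) → Fin n → A}

lemma TuF_goodAt (hQg : ∀ i, GoodAt C P₀ (Q i)) (hP₀idem : P₀ * P₀ = P₀) (m : ℕ) (k : ℕ) :
    GoodAt C P₀ (TuF M M' Q m k) := by
  unfold TuF
  split
  · exact uu_goodAt M M' hQg hP₀idem m
  · exact hQg k

lemma TuF_ne {m k : ℕ} (h : k ≠ m + 1) : TuF M M' Q m k = Q k := if_neg h

lemma TuF_top (m : ℕ) : TuF M M' Q m (m + 1) = uu M M' Q m := if_pos rfl

/-- the corrected family has vanishing module defect up to level m+1 -/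
lemma TuF_ddl_zero (hQg : ∀ i, GoodAt C P₀ (Q i)) (hP₀idem : P₀ * P₀ = P₀) (m : ℕ)
    (hQtop : Q (m + 1) = 0)
    (hQmod : ∀ t, t ≤ m → ∀ x a, P₀.mulVec x = x → ddl M M' Q t x a = 0)
    (t : ℕ) (ht : t ≤ m + 1) {y : Fin n → A} (a : A) (hy : P₀.mulVec y = y) :
    ddl M M' (TuF M M' Q m) t y a = 0 := by
  rcases Nat.lt_or_ge t (m + 1) with h | h
  · have : ddl M M' (TuF M M' Q m) t y a = ddl M M' Q t y a := by
      unfold ddl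
      refine Finset.sum_congr rfl fun r hr => ?_
      have := Finset.HasAntidiagonal.mem_antidiagonal.mp hr
      rw [TuF_ne M M' (show r.1 ≠ m + 1 by omega)]
    rw [this]
    exact hQmod t (by omega) y a hy
  · have ht' : t = m + 1 := by omega
    subst ht'
    unfold ddl
    rw [Finset.Nat.sum_antidiagonal_succ']
    have top : TuF M M' Q m (m+1) (M.R 0 y a) - M'.R 0 (TuF M M' Q m (m+1) y) a
        = -(ddl M M' Q (m+1) y a) := by
      rw [TuF_top, M.R_zero y a hy]
      rw [show (fun i => y i * a) = rmul y a from rfl]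
      rw [uu_module M M' hQg hP₀idem m hQmod a hy,
        M'.R_zero _ a (uu_mem M M' hQg hP₀idem m y)]
      rw [show (fun i => uu M M' Q m y i * a) = rmul (uu M M' Q m y) a from rfl]
      abel
    rw [top]
    have rest : ∑ p ∈ Finset.HasAntidiagonal.antidiagonal m,
        (TuF M M' Q m p.1 (M.R (p.2+1) y a) - M'.R (p.2+1) (TuF M M' Q m p.1 y) a)
        = ddl M M' Q (m+1) y a := by
      have expand : ddl M M' Q (m+1) y a
          = (Q (m+1) (M.R 0 y a) - M'.R 0 (Q (m+1) y) a)
            + ∑ p ∈ Finset.HasAntidiagonal.antidiagonal m,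
              (Q p.1 (M.R (p.2+1) y a) - M'.R (p.2+1) (Q p.1 y) a) := by
        unfold ddl
        rw [Finset.Nat.sum_antidiagonal_succ']
      rw [expand, hQtop]
      have z1 : (0 : (Fin n → A) → Fin n → A) (M.R 0 y a) = 0 := rfl
      have z2 : M'.R 0 ((0 : (Fin n → A) → Fin n → A) y) a = 0 := R_zero_left M' 0 a
      rw [z1, z2]
      simp only [sub_zero, zero_sub, neg_zero, zero_add]
      refine Finset.sum_congr rfl fun p hp => ?_
      have := Finset.HasAntidiagonal.mem_antidiagonal.mp hp
      rw [TuF_ne M M' (show p.1 ≠ m + 1 by omega)]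
    rw [rest]
    abel

/-- vanishing of the isometry defect of the corrected family below level m+1 -/
lemma eel_vanish (m : ℕ)
    (hQisom : ∀ t, t ≤ m → ∀ x y, P₀.mulVec x = x → P₀.mulVec y = y →
      eel M M' Q t x y = 0)
    (t : ℕ) (ht : t ≤ m) {x y : Fin n → A}
    (hx : P₀.mulVec x = x) (hy : P₀.mulVec y = y) :
    eel M M' (TuF M M' Q m) t x y = 0 := by
  have : eel M M' (TuF M M' Q m) t x y = eel M M' Q t x y := by
    unfold eel
    congr 1
    refine Finset.sum_congr rfl fun p hp => ?_
    refine Finset.sum_congr rfl fun q hq => ?_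
    have h1 := Finset.HasAntidiagonal.mem_antidiagonal.mp hp
    have h2 := Finset.HasAntidiagonal.mem_antidiagonal.mp hq
    rw [TuF_ne M M' (show q.1 ≠ m + 1 by omega), TuF_ne M M' (show q.2 ≠ m + 1 by omega)]
  rw [this]
  exact hQisom t ht x y hx hy

/-- hermitian symmetry of the isometry defect -/
lemma eel_herm (hQg : ∀ i, GoodAt C P₀ (Q i)) (hP₀idem : P₀ * P₀ = P₀) (m t : ℕ)
    {x y : Fin n → A} (hx : P₀.mulVec x = x) (hy : P₀.mulVec y = y) :
    star (eel M M' (TuF M M' Q m) t x y) = eel M M' (TuF M M' Q m) t y x := by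
  unfold eel
  rw [star_sub, star_sum]
  have e1 : ∀ p : ℕ × ℕ, star (∑ q ∈ Finset.HasAntidiagonal.antidiagonal p.2,
      M'.h p.1 (TuF M M' Q m q.1 x) (TuF M M' Q m q.2 y))
      = ∑ q ∈ Finset.HasAntidiagonal.antidiagonal p.2,
          M'.h p.1 (TuF M M' Q m q.1 y) (TuF M M' Q m q.2 x) := by
    intro p
    rw [star_sum]
    refine (Finset.sum_congr rfl fun q _ =>
      hhermC M' ((TuF_goodAt M M' hQg hP₀idem m q.1).1 x hx)
        ((TuF_goodAt M M' hQg hP₀idem m q.2).1 y hy) p.1).trans ?_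
    exact Finset.Nat.sum_antidiagonal_swap
      (f := fun q => M'.h p.1 (TuF M M' Q m q.1 y) (TuF M M' Q m q.2 x))
  rw [Finset.sum_congr rfl fun p _ => e1 p, hhermC M hx hy t]

end EE
section EELIN
set_option linter.unusedSectionVars false
set_option maxHeartbeats 2000000

variable {C A : Type*} [CommRing C] [StarRing C] [Invertible (2 : C)]
  [Ring A] [Algebra C A] [StarRing A] [StarModule C A] {n : ℕ}
  {D : FormalDeformation C A} {P₀ : Matrix (Fin n) (Fin n) A}
  (M M' : HermitianDeformedModule D P₀)
  {Q : ℕ → (Fin n → A) → Fin n → A}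

lemma C_sum_apply {σ : Type*} (r : ℕ) (u : Finset σ) (F : σ → A) (a : A) :
    D.C r (∑ i ∈ u, F i) a = ∑ i ∈ u, D.C r (F i) a := by
  rw [map_sum]
  exact LinearMap.sum_apply _ _ _

/-- right `A`-linearity of the level-(m+1) isometry defect -/
lemma eel_rlin (hQg : ∀ i, GoodAt C P₀ (Q i)) (hP₀idem : P₀ * P₀ = P₀) (m : ℕ)
    (hQtop : Q (m + 1) = 0)
    (hQmod : ∀ t, t ≤ m → ∀ x a, P₀.mulVec x = x → ddl M M' Q t x a = 0)
    (hQisom : ∀ t, t ≤ m → ∀ x y, P₀.mulVec x = x → P₀.mulVec y = y →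
      eel M M' Q t x y = 0)
    {x y : Fin n → A} (a : A) (hx : P₀.mulVec x = x) (hy : P₀.mulVec y = y) :
    eel M M' (TuF M M' Q m) (m + 1) x (rmul y a)
      = eel M M' (TuF M M' Q m) (m + 1) x y * a := by
  have TuFg : ∀ k, GoodAt C P₀ (TuF M M' Q m k) := TuF_goodAt M M' hQg hP₀idem m
  have TuFswap : ∀ t, t ≤ m + 1 → ∑ r ∈ Finset.HasAntidiagonal.antidiagonal t,
      TuF M M' Q m r.1 (M.R r.2 y a) = ∑ r ∈ Finset.HasAntidiagonal.antidiagonal t,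
        M'.R r.2 (TuF M M' Q m r.1 y) a := by
    intro t ht
    have hz := TuF_ddl_zero M M' hQg hP₀idem m hQtop hQmod t ht a hy
    unfold ddl at hz
    rw [Finset.sum_sub_distrib] at hz
    exact sub_eq_zero.mp hz
  have key : ∑ w ∈ Finset.HasAntidiagonal.antidiagonal (m + 1),
        eel M M' (TuF M M' Q m) w.1 x (M.R w.2 y a)
      = ∑ w ∈ Finset.HasAntidiagonal.antidiagonal (m + 1),
          D.C w.1 (eel M M' (TuF M M' Q m) w.2 x y) a := by
    unfold eel
    rw [Finset.sum_sub_distrib]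
    have rhs_expand : ∑ w ∈ Finset.HasAntidiagonal.antidiagonal (m + 1),
        D.C w.1 ((∑ p ∈ Finset.HasAntidiagonal.antidiagonal w.2, ∑ q ∈ Finset.HasAntidiagonal.antidiagonal p.2,
          M'.h p.1 (TuF M M' Q m q.1 x) (TuF M M' Q m q.2 y)) - M.h w.2 x y) a
        = (∑ w ∈ Finset.HasAntidiagonal.antidiagonal (m + 1), ∑ p ∈ Finset.HasAntidiagonal.antidiagonal w.2,
            ∑ q ∈ Finset.HasAntidiagonal.antidiagonal p.2,
              D.C w.1 (M'.h p.1 (TuF M M' Q m q.1 x) (TuF M M' Q m q.2 y)) a)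
          - ∑ w ∈ Finset.HasAntidiagonal.antidiagonal (m + 1), D.C w.1 (M.h w.2 x y) a := by
      rw [← Finset.sum_sub_distrib]
      refine Finset.sum_congr rfl fun w _ => ?_
      rw [map_sub, LinearMap.sub_apply]
      congr 1
      rw [C_sum_apply]
      exact Finset.sum_congr rfl fun p _ => C_sum_apply _ _ _ _
    rw [rhs_expand]
    congr 1
    · calc ∑ w ∈ Finset.HasAntidiagonal.antidiagonal (m + 1), ∑ p ∈ Finset.HasAntidiagonal.antidiagonal w.1,
            ∑ q ∈ Finset.HasAntidiagonal.antidiagonal p.2,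
              M'.h p.1 (TuF M M' Q m q.1 x) (TuF M M' Q m q.2 (M.R w.2 y a))
          = ∑ w ∈ Finset.HasAntidiagonal.antidiagonal (m + 1), ∑ p ∈ Finset.HasAntidiagonal.antidiagonal w.2,
              ∑ q ∈ Finset.HasAntidiagonal.antidiagonal p.2,
                M'.h p.1 (TuF M M' Q m q.1 x) (TuF M M' Q m q.2 (M.R w.1 y a)) :=
            Finset.Nat.sum_antidiagonal_swap
              (f := fun w => ∑ p ∈ Finset.HasAntidiagonal.antidiagonal w.2, ∑ q ∈ Finset.HasAntidiagonal.antidiagonal p.2,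
                M'.h p.1 (TuF M M' Q m q.1 x) (TuF M M' Q m q.2 (M.R w.1 y a)))
        _ = flat4 (fun i j k v =>
              M'.h i (TuF M M' Q m j x) (TuF M M' Q m k (M.R v y a))) (m+1) :=
            flat4_rot (fun i j k v =>
              M'.h i (TuF M M' Q m j x) (TuF M M' Q m k (M.R v y a))) (m+1)
        _ = flat4 (fun i j k v =>
              M'.h i (TuF M M' Q m j x) (M'.R v (TuF M M' Q m k y) a)) (m+1) := by
            rw [flat4_eq_flat3_pair3, flat4_eq_flat3_pair3]
            unfold flat3
            refine Finset.sum_congr rfl fun p hp => ?_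
            refine Finset.sum_congr rfl fun q hq => ?_
            have hb : q.2 ≤ m + 1 := by
              have h1 := Finset.HasAntidiagonal.mem_antidiagonal.mp hp
              have h2 := Finset.HasAntidiagonal.mem_antidiagonal.mp hq
              omega
            calc ∑ r ∈ Finset.HasAntidiagonal.antidiagonal q.2,
                  M'.h p.1 (TuF M M' Q m q.1 x) (TuF M M' Q m r.1 (M.R r.2 y a))
                = M'.h p.1 (TuF M M' Q m q.1 x) (∑ r ∈ Finset.HasAntidiagonal.antidiagonal q.2,
                    TuF M M' Q m r.1 (M.R r.2 y a)) :=
                  (memmap_sum (fun z => M'.h p.1 (TuF M M' Q m q.1 x) z)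
                    (fun u v hu hv => M'.h_add_right p.1 _ u v
                      ((TuFg q.1).1 x hx) hu hv) _ _
                    (fun r _ => (TuFg r.1).1 _ (M.R_mem r.2 y a hy))).symm
              _ = M'.h p.1 (TuF M M' Q m q.1 x) (∑ r ∈ Finset.HasAntidiagonal.antidiagonal q.2,
                    M'.R r.2 (TuF M M' Q m r.1 y) a) := by rw [TuFswap q.2 hb]
              _ = ∑ r ∈ Finset.HasAntidiagonal.antidiagonal q.2,
                    M'.h p.1 (TuF M M' Q m q.1 x) (M'.R r.2 (TuF M M' Q m r.1 y) a) :=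
                  memmap_sum (fun z => M'.h p.1 (TuF M M' Q m q.1 x) z)
                    (fun u v hu hv => M'.h_add_right p.1 _ u v
                      ((TuFg q.1).1 x hx) hu hv) _ _
                    (fun r _ => M'.R_mem r.2 _ a ((TuFg r.1).1 y hy))
        _ = flat4 (fun j k i v =>
              M'.h i (TuF M M' Q m j x) (M'.R v (TuF M M' Q m k y) a)) (m+1) := by
            have e1 : flat4 (fun i j k v =>
                  M'.h k (TuF M M' Q m j x) (M'.R v (TuF M M' Q m i y) a)) (m+1)
                = flat4 (fun i j k v =>
                    M'.h i (TuF M M' Q m j x) (M'.R v (TuF M M' Q m k y) a)) (m+1) :=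
              flat4_swap13 (fun i j k v =>
                M'.h i (TuF M M' Q m j x) (M'.R v (TuF M M' Q m k y) a)) (m+1)
            have e2 : flat4 (fun j k i v =>
                  M'.h i (TuF M M' Q m j x) (M'.R v (TuF M M' Q m k y) a)) (m+1)
                = flat4 (fun i j k v =>
                    M'.h k (TuF M M' Q m j x) (M'.R v (TuF M M' Q m i y) a)) (m+1) :=
              flat4_swap12 (fun i j k v =>
                M'.h k (TuF M M' Q m j x) (M'.R v (TuF M M' Q m i y) a)) (m+1)
            exact (e2.trans e1).symm
        _ = flat4 (fun j k i v =>
              D.C i (M'.h v (TuF M M' Q m j x) (TuF M M' Q m k y)) a) (m+1) := by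
            rw [flat4_eq_flat3_pair3, flat4_eq_flat3_pair3]
            unfold flat3
            refine Finset.sum_congr rfl fun p _ => ?_
            refine Finset.sum_congr rfl fun q _ => ?_
            exact hmodC M' ((TuFg p.1).1 x hx) ((TuFg q.1).1 y hy) q.2 a
        _ = ∑ w ∈ Finset.HasAntidiagonal.antidiagonal (m + 1), ∑ p ∈ Finset.HasAntidiagonal.antidiagonal w.2,
              ∑ q ∈ Finset.HasAntidiagonal.antidiagonal p.2,
                D.C w.1 (M'.h p.1 (TuF M M' Q m q.1 x) (TuF M M' Q m q.2 y)) a := by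
            have e1 : flat4 (fun a' b c d =>
                  D.C c (M'.h d (TuF M M' Q m a' x) (TuF M M' Q m b y)) a) (m+1)
                = flat4 (fun a' b c d =>
                    D.C a' (M'.h d (TuF M M' Q m c x) (TuF M M' Q m b y)) a) (m+1) :=
              flat4_swap13 (fun a' b c d =>
                D.C a' (M'.h d (TuF M M' Q m c x) (TuF M M' Q m b y)) a) (m+1)
            have e2 : flat4 (fun a' b c d =>
                  D.C a' (M'.h d (TuF M M' Q m c x) (TuF M M' Q m b y)) a) (m+1)
                = flat4 (fun a' b c d =>
                    D.C a' (M'.h b (TuF M M' Q m c x) (TuF M M' Q m d y)) a) (m+1) :=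
              flat4_swap24 (fun a' b c d =>
                D.C a' (M'.h b (TuF M M' Q m c x) (TuF M M' Q m d y)) a) (m+1)
            exact e1.trans e2
    · exact hmodC M hx hy (m+1) a
  have ext1 : ∑ w ∈ Finset.HasAntidiagonal.antidiagonal (m + 1),
      eel M M' (TuF M M' Q m) w.1 x (M.R w.2 y a)
      = eel M M' (TuF M M' Q m) (m+1) x (rmul y a) := by
    rw [sum_ad_single_left
      (fun w => eel M M' (TuF M M' Q m) w.1 x (M.R w.2 y a)) (m+1) ?side1]
    · show eel M M' (TuF M M' Q m) (m+1) x (M.R 0 y a) = _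
      rw [M.R_zero y a hy]
      rfl
    case side1 =>
      intro p hp hne
      have := Finset.HasAntidiagonal.mem_antidiagonal.mp hp
      show eel M M' (TuF M M' Q m) p.1 x (M.R p.2 y a) = 0
      exact eel_vanish M M' m hQisom p.1 (by omega) hx (M.R_mem p.2 y a hy)
  have ext2 : ∑ w ∈ Finset.HasAntidiagonal.antidiagonal (m + 1),
      D.C w.1 (eel M M' (TuF M M' Q m) w.2 x y) a
      = eel M M' (TuF M M' Q m) (m+1) x y * a := by
    rw [sum_ad_single_right
      (fun w => D.C w.1 (eel M M' (TuF M M' Q m) w.2 x y) a) (m+1) ?side2]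
    · show D.C 0 (eel M M' (TuF M M' Q m) (m+1) x y) a = _
      rw [D.C_zero]
    case side2 =>
      intro p hp hne
      have := Finset.HasAntidiagonal.mem_antidiagonal.mp hp
      show D.C p.1 (eel M M' (TuF M M' Q m) p.2 x y) a = 0
      rw [eel_vanish M M' m hQisom p.2 (by omega) hx hy]
      simp
  rw [← ext1, key, ext2]

end EELIN
section EEMORE
set_option linter.unusedSectionVars false
set_option maxHeartbeats 1000000

variable {C A : Type*} [CommRing C] [StarRing C] [Invertible (2 : C)]
  [Ring A] [Algebra C A] [StarRing A] [StarModule C A] {n : ℕ}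
  {D : FormalDeformation C A} {P₀ : Matrix (Fin n) (Fin n) A}
  (M M' : HermitianDeformedModule D P₀)
  {W : ℕ → (Fin n → A) → Fin n → A}

lemma eel_add_right (hWg : ∀ k, GoodAt C P₀ (W k)) (t : ℕ) {x y y' : Fin n → A}
    (hx : P₀.mulVec x = x) (hy : P₀.mulVec y = y) (hy' : P₀.mulVec y' = y') :
    eel M M' W t x (y + y') = eel M M' W t x y + eel M M' W t x y' := by
  unfold eel
  rw [M.h_add_right t x y y' hx hy hy']
  have : ∀ p q : ℕ × ℕ, M'.h p.1 (W q.1 x) (W q.2 (y + y'))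
      = M'.h p.1 (W q.1 x) (W q.2 y) + M'.h p.1 (W q.1 x) (W q.2 y') := by
    intro p q
    rw [(hWg q.2).2.1 y y' hy hy']
    exact M'.h_add_right p.1 _ _ _ ((hWg q.1).1 x hx) ((hWg q.2).1 y hy)
      ((hWg q.2).1 y' hy')
  rw [Finset.sum_congr rfl fun p _ => Finset.sum_congr rfl fun q _ => this p q]
  rw [Finset.sum_congr rfl fun p _ => Finset.sum_add_distrib, Finset.sum_add_distrib]
  abel

lemma eel_add_left (hWg : ∀ k, GoodAt C P₀ (W k)) (t : ℕ) {x x' y : Fin n → A}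
    (hx : P₀.mulVec x = x) (hx' : P₀.mulVec x' = x') (hy : P₀.mulVec y = y) :
    eel M M' W t (x + x') y = eel M M' W t x y + eel M M' W t x' y := by
  unfold eel
  rw [M.h_add_left t x x' y hx hx' hy]
  have : ∀ p q : ℕ × ℕ, M'.h p.1 (W q.1 (x + x')) (W q.2 y)
      = M'.h p.1 (W q.1 x) (W q.2 y) + M'.h p.1 (W q.1 x') (W q.2 y) := by
    intro p q
    rw [(hWg q.1).2.1 x x' hx hx']
    exact M'.h_add_left p.1 _ _ _ ((hWg q.1).1 x hx) ((hWg q.1).1 x' hx')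
      ((hWg q.2).1 y hy)
  rw [Finset.sum_congr rfl fun p _ => Finset.sum_congr rfl fun q _ => this p q]
  rw [Finset.sum_congr rfl fun p _ => Finset.sum_add_distrib, Finset.sum_add_distrib]
  abel

lemma eel_smul_right (hWg : ∀ k, GoodAt C P₀ (W k)) (t : ℕ) (c : C) {x y : Fin n → A}
    (hx : P₀.mulVec x = x) (hy : P₀.mulVec y = y) :
    eel M M' W t x (c • y) = c • eel M M' W t x y := by
  unfold eel
  rw [M.h_smul_right t c x y hx hy, smul_sub]
  congr 1
  rw [Finset.smul_sum]
  refine Finset.sum_congr rfl fun p _ => ?_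
  rw [Finset.smul_sum]
  refine Finset.sum_congr rfl fun q _ => ?_
  rw [(hWg q.2).2.2 c y hy]
  exact M'.h_smul_right p.1 c _ _ ((hWg q.1).1 x hx) ((hWg q.2).1 y hy)

lemma eel_smul_left (hWg : ∀ k, GoodAt C P₀ (W k)) (t : ℕ) (c : C) {x y : Fin n → A}
    (hx : P₀.mulVec x = x) (hy : P₀.mulVec y = y) :
    eel M M' W t (c • x) y = star c • eel M M' W t x y := by
  unfold eel
  rw [M.h_smul_left t c x y hx hy, smul_sub]
  congr 1
  rw [Finset.smul_sum]
  refine Finset.sum_congr rfl fun p _ => ?_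
  rw [Finset.smul_sum]
  refine Finset.sum_congr rfl fun q _ => ?_
  rw [(hWg q.1).2.2 c x hx]
  exact M'.h_smul_left p.1 c _ _ ((hWg q.1).1 x hx) ((hWg q.2).1 y hy)

end EEMORE

section BBL
set_option linter.unusedSectionVars false
set_option maxHeartbeats 1000000

variable {C A : Type*} [CommRing C] [StarRing C] [Invertible (2 : C)]
  [Ring A] [Algebra C A] [StarRing A] [StarModule C A] {n : ℕ}
  {D : FormalDeformation C A} {P₀ : Matrix (Fin n) (Fin n) A}
  (M M' : HermitianDeformedModule D P₀)
  {Q : ℕ → (Fin n → A) → Fin n → A}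

/-- conjugate linearity of the defect in the first slot -/
lemma eel_llin (hQg : ∀ i, GoodAt C P₀ (Q i)) (hP₀idem : P₀ * P₀ = P₀) (m : ℕ)
    (hQtop : Q (m + 1) = 0)
    (hQmod : ∀ t, t ≤ m → ∀ x a, P₀.mulVec x = x → ddl M M' Q t x a = 0)
    (hQisom : ∀ t, t ≤ m → ∀ x y, P₀.mulVec x = x → P₀.mulVec y = y →
      eel M M' Q t x y = 0)
    {x y : Fin n → A} (a : A) (hx : P₀.mulVec x = x) (hy : P₀.mulVec y = y) :
    eel M M' (TuF M M' Q m) (m + 1) (rmul x a) y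
      = star a * eel M M' (TuF M M' Q m) (m + 1) x y := by
  rw [← eel_herm M M' hQg hP₀idem m (m+1) hy (mem_rmul hx a),
    eel_rlin M M' hQg hP₀idem m hQtop hQmod hQisom a hy hx, star_mul,
    eel_herm M M' hQg hP₀idem m (m+1) hy hx]

/-- the representation identity: `h₀(BB x, y) = -(1/2) eel x y` -/
lemma BB_rep (hQg : ∀ i, GoodAt C P₀ (Q i)) (hP₀idem : P₀ * P₀ = P₀) (m : ℕ)
    (hQtop : Q (m + 1) = 0)
    (hQmod : ∀ t, t ≤ m → ∀ x a, P₀.mulVec x = x → ddl M M' Q t x a = 0)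
    (hQisom : ∀ t, t ≤ m → ∀ x y, P₀.mulVec x = x → P₀.mulVec y = y →
      eel M M' Q t x y = 0)
    {x y : Fin n → A} (hx : P₀.mulVec x = x) (hy : P₀.mulVec y = y) :
    ∑ i, star (BB M M' Q m x i) * y i
      = (-(⅟2 : C)) • eel M M' (TuF M M' Q m) (m + 1) x y := by
  have e1 : ∀ i, star (BB M M' Q m x i) * y i
      = (-(⅟2 : C)) • eel M M' (TuF M M' Q m) (m + 1) x (rmul (xi P₀ i) (y i)) := by
    intro i
    unfold BB
    rw [star_star, eel_rlin M M' hQg hP₀idem m hQtop hQmod hQisom (y i) hx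
      (mem_xi hP₀idem i), smul_mul_assoc]
  rw [Finset.sum_congr rfl fun i _ => e1 i, ← Finset.smul_sum]
  congr 1
  rw [← memmap_sum (fun z => eel M M' (TuF M M' Q m) (m+1) x z)
    (fun u v hu hv => eel_add_right M M' (TuF_goodAt M M' hQg hP₀idem m) (m+1) hx hu hv)
    _ _ (fun i _ => mem_rmul (mem_xi hP₀idem i) (y i)), sum_xi_rmul hy]

lemma BB_mem (hQg : ∀ i, GoodAt C P₀ (Q i)) (hP₀idem : P₀ * P₀ = P₀)
    (hP₀herm : P₀ᴴ = P₀) (m : ℕ) (hQtop : Q (m + 1) = 0)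
    (hQmod : ∀ t, t ≤ m → ∀ x a, P₀.mulVec x = x → ddl M M' Q t x a = 0)
    (hQisom : ∀ t, t ≤ m → ∀ x y, P₀.mulVec x = x → P₀.mulVec y = y →
      eel M M' Q t x y = 0)
    {x : Fin n → A} (hx : P₀.mulVec x = x) :
    P₀.mulVec (BB M M' Q m x) = BB M M' Q m x := by
  funext k
  show ∑ i, P₀ k i * BB M M' Q m x i = BB M M' Q m x k
  have e1 : ∀ i, P₀ k i * BB M M' Q m x i
      = star (((-(⅟2 : C)) • eel M M' (TuF M M' Q m) (m + 1) x (xi P₀ i))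
          * star (P₀ k i)) := by
    intro i
    unfold BB
    rw [star_mul, star_star]
  rw [Finset.sum_congr rfl fun i _ => e1 i, ← star_sum]
  have e2 : ∀ i, ((-(⅟2 : C)) • eel M M' (TuF M M' Q m) (m + 1) x (xi P₀ i))
      * star (P₀ k i)
      = (-(⅟2 : C)) • eel M M' (TuF M M' Q m) (m + 1) x (rmul (xi P₀ i) (P₀ i k)) := by
    intro i
    have hstar : star (P₀ k i) = P₀ i k := by
      have := congrFun (congrFun hP₀herm i) k
      simpa [Matrix.conjTranspose_apply] using this
    rw [hstar, smul_mul_assoc,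
      eel_rlin M M' hQg hP₀idem m hQtop hQmod hQisom (P₀ i k) hx (mem_xi hP₀idem i)]
  rw [Finset.sum_congr rfl fun i _ => e2 i, ← Finset.smul_sum]
  rw [← memmap_sum (fun z => eel M M' (TuF M M' Q m) (m+1) x z)
    (fun u v hu hv => eel_add_right M M' (TuF_goodAt M M' hQg hP₀idem m) (m+1) hx hu hv)
    _ _ (fun i _ => mem_rmul (mem_xi hP₀idem i) (P₀ i k))]
  rw [show ∑ i, rmul (xi P₀ i) (P₀ i k) = xi P₀ k from sum_xi_rmul (mem_xi hP₀idem k)]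
  rfl

lemma BB_rmul (hQg : ∀ i, GoodAt C P₀ (Q i)) (hP₀idem : P₀ * P₀ = P₀) (m : ℕ)
    (hQtop : Q (m + 1) = 0)
    (hQmod : ∀ t, t ≤ m → ∀ x a, P₀.mulVec x = x → ddl M M' Q t x a = 0)
    (hQisom : ∀ t, t ≤ m → ∀ x y, P₀.mulVec x = x → P₀.mulVec y = y →
      eel M M' Q t x y = 0)
    {x : Fin n → A} (a : A) (hx : P₀.mulVec x = x) :
    BB M M' Q m (rmul x a) = rmul (BB M M' Q m x) a := by
  funext i
  unfold BB rmul
  show star ((-(⅟2 : C)) • eel M M' (TuF M M' Q m) (m + 1) (rmul x a) (xi P₀ i)) = _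
  rw [eel_llin M M' hQg hP₀idem m hQtop hQmod hQisom a hx (mem_xi hP₀idem i),
    ← mul_smul_comm, star_mul, star_star]

lemma BB_add (hQg : ∀ i, GoodAt C P₀ (Q i)) (hP₀idem : P₀ * P₀ = P₀) (m : ℕ)
    {x y : Fin n → A} (hx : P₀.mulVec x = x) (hy : P₀.mulVec y = y) :
    BB M M' Q m (x + y) = BB M M' Q m x + BB M M' Q m y := by
  funext i
  unfold BB
  show star (_ : A) = star (_ : A) + star (_ : A)
  rw [eel_add_left M M' (TuF_goodAt M M' hQg hP₀idem m) (m+1) hx hy (mem_xi hP₀idem i),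
    smul_add, star_add]

lemma BB_smul (hQg : ∀ i, GoodAt C P₀ (Q i)) (hP₀idem : P₀ * P₀ = P₀) (m : ℕ)
    (c : C) {x : Fin n → A} (hx : P₀.mulVec x = x) :
    BB M M' Q m (c • x) = c • BB M M' Q m x := by
  funext i
  unfold BB
  show star (_ : A) = c • star (_ : A)
  rw [eel_smul_left M M' (TuF_goodAt M M' hQg hP₀idem m) (m+1) c hx (mem_xi hP₀idem i),
    smul_comm, star_smul, star_star]

end BBL
section Single3
variable {β : Type*} [AddCommMonoid β]

lemma flat3_single_mid (F : ℕ → ℕ → ℕ → β) (N : ℕ)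
    (hF : ∀ a b c, b ≠ N → F a b c = 0) :
    (∑ p ∈ Finset.HasAntidiagonal.antidiagonal N, ∑ q ∈ Finset.HasAntidiagonal.antidiagonal p.2, F p.1 q.1 q.2)
      = F 0 N 0 := by
  rw [sum_ad_single_right (fun p => ∑ q ∈ Finset.HasAntidiagonal.antidiagonal p.2, F p.1 q.1 q.2) N ?side]
  · show ∑ q ∈ Finset.HasAntidiagonal.antidiagonal N, F 0 q.1 q.2 = F 0 N 0
    rw [sum_ad_single_left (fun q => F 0 q.1 q.2) N ?inner]
    case inner =>
      intro q hq hne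
      exact hF 0 q.1 q.2 hne
  case side =>
    intro p hp hne
    refine Finset.sum_eq_zero fun q hq => ?_
    have h1 := Finset.HasAntidiagonal.mem_antidiagonal.mp hp
    have h2 := Finset.HasAntidiagonal.mem_antidiagonal.mp hq
    exact hF p.1 q.1 q.2 (by omega)

lemma flat3_single_last (F : ℕ → ℕ → ℕ → β) (N : ℕ)
    (hF : ∀ a b c, c ≠ N → F a b c = 0) :
    (∑ p ∈ Finset.HasAntidiagonal.antidiagonal N, ∑ q ∈ Finset.HasAntidiagonal.antidiagonal p.2, F p.1 q.1 q.2)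
      = F 0 0 N := by
  rw [sum_ad_single_right (fun p => ∑ q ∈ Finset.HasAntidiagonal.antidiagonal p.2, F p.1 q.1 q.2) N ?side]
  · show ∑ q ∈ Finset.HasAntidiagonal.antidiagonal N, F 0 q.1 q.2 = F 0 0 N
    rw [sum_ad_single_right (fun q => F 0 q.1 q.2) N ?inner]
    case inner =>
      intro q hq hne
      exact hF 0 q.1 q.2 hne
  case side =>
    intro p hp hne
    refine Finset.sum_eq_zero fun q hq => ?_
    have h1 := Finset.HasAntidiagonal.mem_antidiagonal.mp hp
    have h2 := Finset.HasAntidiagonal.mem_antidiagonal.mp hq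
    exact hF p.1 q.1 q.2 (by omega)

end Single3

section Congr
set_option linter.unusedSectionVars false

variable {C A : Type*} [CommRing C] [StarRing C] [Invertible (2 : C)]
  [Ring A] [Algebra C A] [StarRing A] [StarModule C A] {n : ℕ}
  {D : FormalDeformation C A} {P₀ : Matrix (Fin n) (Fin n) A}
  (M M' : HermitianDeformedModule D P₀)

lemma ddl_congr {Q1 Q2 : ℕ → (Fin n → A) → Fin n → A} (t : ℕ)
    (h : ∀ i, i ≤ t → Q1 i = Q2 i) (x : Fin n → A) (a : A) :
    ddl M M' Q1 t x a = ddl M M' Q2 t x a := by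
  unfold ddl
  refine Finset.sum_congr rfl fun r hr => ?_
  have := Finset.HasAntidiagonal.mem_antidiagonal.mp hr
  rw [h r.1 (by omega)]

lemma eel_congr {Q1 Q2 : ℕ → (Fin n → A) → Fin n → A} (t : ℕ)
    (h : ∀ i, i ≤ t → Q1 i = Q2 i) (x y : Fin n → A) :
    eel M M' Q1 t x y = eel M M' Q2 t x y := by
  unfold eel
  congr 1
  refine Finset.sum_congr rfl fun p hp => ?_
  refine Finset.sum_congr rfl fun q hq => ?_
  have h1 := Finset.HasAntidiagonal.mem_antidiagonal.mp hp
  have h2 := Finset.HasAntidiagonal.mem_antidiagonal.mp hq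
  rw [h q.1 (by omega), h q.2 (by omega)]

end Congr
section Main
set_option linter.unusedSectionVars false
set_option maxHeartbeats 2000000

variable {C A : Type*} [CommRing C] [StarRing C] [Invertible (2 : C)]
  [Ring A] [Algebra C A] [StarRing A] [StarModule C A] {n : ℕ}
  {D : FormalDeformation C A} {P₀ : Matrix (Fin n) (Fin n) A}
  (M M' : HermitianDeformedModule D P₀)

theorem Tt_main (hP₀idem : P₀ * P₀ = P₀) (hP₀herm : P₀ᴴ = P₀) : ∀ m : ℕ,
    GoodAt C P₀ (Tt M M' m)
    ∧ (∀ x a, P₀.mulVec x = x → ddl M M' (Tt M M') m x a = 0)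
    ∧ (∀ x y, P₀.mulVec x = x → P₀.mulVec y = y → eel M M' (Tt M M') m x y = 0) := by
  intro m
  induction m using Nat.strong_induction_on with
  | _ m IH =>
    match m with
    | 0 =>
      refine ⟨Tt_zero M M' ▸ goodAt_id, ?_, ?_⟩
      · intro x a hx
        unfold ddl
        rw [Finset.Nat.antidiagonal_zero, Finset.sum_singleton]
        show Tt M M' 0 (M.R 0 x a) - M'.R 0 (Tt M M' 0 x) a = 0
        rw [Tt_zero M M']
        show M.R 0 x a - M'.R 0 x a = 0
        rw [M.R_zero x a hx, M'.R_zero x a hx, sub_self]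
      · intro x y hx hy
        unfold eel
        rw [Finset.Nat.antidiagonal_zero, Finset.sum_singleton,
          Finset.Nat.antidiagonal_zero, Finset.sum_singleton]
        show M'.h 0 (Tt M M' 0 x) (Tt M M' 0 y) - M.h 0 x y = 0
        rw [Tt_zero M M']
        show M'.h 0 x y - M.h 0 x y = 0
        rw [M'.h_zero x y hx hy, M.h_zero x y hx hy, sub_self]
    | m + 1 =>
      -- setup
      set Q : ℕ → (Fin n → A) → Fin n → A := Ttrunc (Tt M M') m with hQdef
      have hQg : ∀ i, GoodAt C P₀ (Q i) := by
        intro i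
        rw [hQdef]
        unfold Ttrunc
        split
        · exact (IH i (by omega)).1
        · exact goodAt_zero
      have hQtop : Q (m + 1) = 0 := Ttrunc_gt (by omega)
      have hQle : ∀ i, i ≤ m → Q i = Tt M M' i := fun i hi => Ttrunc_le hi
      have hQmod : ∀ t, t ≤ m → ∀ x a, P₀.mulVec x = x → ddl M M' Q t x a = 0 := by
        intro t ht x a hx
        rw [ddl_congr M M' t (fun i hi => hQle i (by omega)) x a]
        exact (IH t (by omega)).2.1 x a hx
      have hQisom : ∀ t, t ≤ m → ∀ x y, P₀.mulVec x = x → P₀.mulVec y = y →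
          eel M M' Q t x y = 0 := by
        intro t ht x y hx hy
        rw [eel_congr M M' t (fun i hi => hQle i (by omega)) x y]
        exact (IH t (by omega)).2.2 x y hx hy
      have hQ0 : ∀ z : Fin n → A, Q 0 z = z := by
        intro z
        rw [hQle 0 (by omega), Tt_zero M M']
      have hTt_succ : ∀ z : Fin n → A, Tt M M' (m+1) z
          = uu M M' Q m z + BB M M' Q m z := by
        intro z
        rw [Tt_succ M M' m]
        rfl
      have TuFg := TuF_goodAt M M' hQg hP₀idem m
      have hBmem : ∀ {z : Fin n → A}, P₀.mulVec z = z →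
          P₀.mulVec (BB M M' Q m z) = BB M M' Q m z :=
        fun hz => BB_mem M M' hQg hP₀idem hP₀herm m hQtop hQmod hQisom hz
      have humem : ∀ z : Fin n → A, P₀.mulVec (uu M M' Q m z) = uu M M' Q m z :=
        uu_mem M M' hQg hP₀idem m
      -- goodness
      have hGood : GoodAt C P₀ (Tt M M' (m+1)) := by
        refine ⟨?_, ?_, ?_⟩
        · intro x hx
          rw [hTt_succ x]
          exact mem_add (humem x) (hBmem hx)
        · intro x y hx hy
          rw [hTt_succ, hTt_succ, hTt_succ, uu_add M M' hQg hP₀idem m x y,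
            BB_add M M' hQg hP₀idem m hx hy]
          abel
        · intro c x hx
          rw [hTt_succ, hTt_succ, uu_smul M M' hQg hP₀idem m c x,
            BB_smul M M' hQg hP₀idem m c hx, smul_add]
      refine ⟨hGood, ?_, ?_⟩
      · -- module defect vanishes at level m+1
        intro x a hx
        have e0 : ddl M M' (Tt M M') (m+1) x a
            = (Tt M M' (m+1) (M.R 0 x a) - M'.R 0 (Tt M M' (m+1) x) a)
              + ∑ p ∈ Finset.HasAntidiagonal.antidiagonal m,
                (Tt M M' p.1 (M.R (p.2+1) x a) - M'.R (p.2+1) (Tt M M' p.1 x) a) := by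
          unfold ddl
          rw [Finset.Nat.sum_antidiagonal_succ']
        have e1 : ddl M M' (TuF M M' Q m) (m+1) x a
            = (uu M M' Q m (M.R 0 x a) - M'.R 0 (uu M M' Q m x) a)
              + ∑ p ∈ Finset.HasAntidiagonal.antidiagonal m,
                (Tt M M' p.1 (M.R (p.2+1) x a) - M'.R (p.2+1) (Tt M M' p.1 x) a) := by
          unfold ddl
          rw [Finset.Nat.sum_antidiagonal_succ']
          rw [TuF_top]
          congr 1
          refine Finset.sum_congr rfl fun p hp => ?_
          have := Finset.HasAntidiagonal.mem_antidiagonal.mp hp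
          rw [TuF_ne M M' (show p.1 ≠ m + 1 by omega), hQle p.1 (by omega)]
        have e3 : ddl M M' (TuF M M' Q m) (m+1) x a = 0 :=
          TuF_ddl_zero M M' hQg hP₀idem m hQtop hQmod (m+1) (le_refl _) a hx
        have etop : Tt M M' (m+1) (M.R 0 x a) - M'.R 0 (Tt M M' (m+1) x) a
            = uu M M' Q m (M.R 0 x a) - M'.R 0 (uu M M' Q m x) a := by
          rw [hTt_succ, hTt_succ,
            M'.R_add_left 0 _ _ a (humem x) (hBmem hx),
            M.R_zero x a hx]
          rw [show (fun i => x i * a) = rmul x a from rfl]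
          rw [BB_rmul M M' hQg hP₀idem m hQtop hQmod hQisom a hx,
            M'.R_zero _ a (hBmem hx)]
          rw [show (fun i => BB M M' Q m x i * a) = rmul (BB M M' Q m x) a from rfl]
          rw [show uu M M' Q m (rmul x a) = uu M M' Q m (M.R 0 x a) by
            rw [M.R_zero x a hx]; rfl]
          abel
        rw [e0, etop, ← e1, e3]
      · -- isometry defect vanishes at level m+1
        intro x y hx hy
        set TB : ℕ → (Fin n → A) → Fin n → A :=
          fun k => if k = m + 1 then BB M M' Q m else 0 with hTBdef
        have TB_mem : ∀ k {z : Fin n → A}, P₀.mulVec z = z →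
            P₀.mulVec (TB k z) = TB k z := by
          intro k z hz
          rw [hTBdef]
          by_cases hk : k = m + 1
          · simp only [if_pos hk]
            exact hBmem hz
          · simp only [if_neg hk]
            exact mem_zero
        have TB_ne : ∀ k, k ≠ m + 1 → ∀ z : Fin n → A, TB k z = 0 := by
          intro k hk z
          rw [hTBdef]
          simp only [if_neg hk]
          rfl
        have split : ∀ k, k ≤ m + 1 → ∀ z : Fin n → A,
            Tt M M' k z = TuF M M' Q m k z + TB k z := by
          intro k hk z
          by_cases hk1 : k = m + 1
          · subst hk1
            rw [TuF_top, hTBdef]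
            simp only [if_pos rfl]
            exact hTt_succ z
          · rw [TB_ne k hk1 z, TuF_ne M M' hk1, hQle k (by omega), add_zero]
        -- decompose the double sum
        have dec : ∀ p ∈ Finset.HasAntidiagonal.antidiagonal (m+1), ∀ q ∈ Finset.HasAntidiagonal.antidiagonal p.2,
            M'.h p.1 (Tt M M' q.1 x) (Tt M M' q.2 y)
            = (M'.h p.1 (TuF M M' Q m q.1 x) (TuF M M' Q m q.2 y)
                + M'.h p.1 (TuF M M' Q m q.1 x) (TB q.2 y))
              + (M'.h p.1 (TB q.1 x) (TuF M M' Q m q.2 y)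
                + M'.h p.1 (TB q.1 x) (TB q.2 y)) := by
          intro p hp q hq
          have h1 := Finset.HasAntidiagonal.mem_antidiagonal.mp hp
          have h2 := Finset.HasAntidiagonal.mem_antidiagonal.mp hq
          rw [split q.1 (by omega) x, split q.2 (by omega) y]
          rw [M'.h_add_left p.1 _ _ _ ((TuFg q.1).1 x hx) (TB_mem q.1 hx)
            (mem_add ((TuFg q.2).1 y hy) (TB_mem q.2 hy))]
          rw [M'.h_add_right p.1 _ _ _ ((TuFg q.1).1 x hx) ((TuFg q.2).1 y hy)
            (TB_mem q.2 hy)]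
          rw [M'.h_add_right p.1 _ _ _ (TB_mem q.1 hx) ((TuFg q.2).1 y hy)
            (TB_mem q.2 hy)]
        have S_split : ∑ p ∈ Finset.HasAntidiagonal.antidiagonal (m+1), ∑ q ∈ Finset.HasAntidiagonal.antidiagonal p.2,
            M'.h p.1 (Tt M M' q.1 x) (Tt M M' q.2 y)
            = ((∑ p ∈ Finset.HasAntidiagonal.antidiagonal (m+1), ∑ q ∈ Finset.HasAntidiagonal.antidiagonal p.2,
                M'.h p.1 (TuF M M' Q m q.1 x) (TuF M M' Q m q.2 y))
              + ∑ p ∈ Finset.HasAntidiagonal.antidiagonal (m+1), ∑ q ∈ Finset.HasAntidiagonal.antidiagonal p.2,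
                M'.h p.1 (TuF M M' Q m q.1 x) (TB q.2 y))
              + ((∑ p ∈ Finset.HasAntidiagonal.antidiagonal (m+1), ∑ q ∈ Finset.HasAntidiagonal.antidiagonal p.2,
                M'.h p.1 (TB q.1 x) (TuF M M' Q m q.2 y))
              + ∑ p ∈ Finset.HasAntidiagonal.antidiagonal (m+1), ∑ q ∈ Finset.HasAntidiagonal.antidiagonal p.2,
                M'.h p.1 (TB q.1 x) (TB q.2 y)) := by
          rw [Finset.sum_congr rfl fun p hp => Finset.sum_congr rfl fun q hq =>
            dec p hp q hq]
          rw [Finset.sum_congr rfl fun p _ => Finset.sum_add_distrib,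
            Finset.sum_add_distrib]
          congr 1
          · rw [Finset.sum_congr rfl fun p _ => Finset.sum_add_distrib,
              Finset.sum_add_distrib]
          · rw [Finset.sum_congr rfl fun p _ => Finset.sum_add_distrib,
              Finset.sum_add_distrib]
        set E : A := eel M M' (TuF M M' Q m) (m+1) x y with hEdef
        have S2v : ∑ p ∈ Finset.HasAntidiagonal.antidiagonal (m+1), ∑ q ∈ Finset.HasAntidiagonal.antidiagonal p.2,
            M'.h p.1 (TuF M M' Q m q.1 x) (TB q.2 y) = (-(⅟2 : C)) • E := by
          rw [flat3_single_last
            (fun a b c => M'.h a (TuF M M' Q m b x) (TB c y)) (m+1) ?z2]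
          · show M'.h 0 (TuF M M' Q m 0 x) (TB (m+1) y) = _
            rw [show TuF M M' Q m 0 x = x by rw [TuF_ne M M' (by omega)]; exact hQ0 x]
            rw [show TB (m+1) y = BB M M' Q m y by rw [hTBdef]; simp]
            rw [← hhermC M' (hBmem hy) hx 0]
            rw [show M'.h 0 (BB M M' Q m y) x
                = ∑ i, star (BB M M' Q m y i) * x i from
              M'.h_zero _ x (hBmem hy) hx]
            rw [BB_rep M M' hQg hP₀idem m hQtop hQmod hQisom hy hx]
            rw [star_smul, star_neg, star_invOf_two, hEdef,
              eel_herm M M' hQg hP₀idem m (m+1) hy hx]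
          case z2 =>
            intro a b c hc
            show M'.h a (TuF M M' Q m b x) (TB c y) = 0
            rw [TB_ne c hc y]
            exact h_zero_right M' a ((TuFg b).1 x hx)
        have S3v : ∑ p ∈ Finset.HasAntidiagonal.antidiagonal (m+1), ∑ q ∈ Finset.HasAntidiagonal.antidiagonal p.2,
            M'.h p.1 (TB q.1 x) (TuF M M' Q m q.2 y) = (-(⅟2 : C)) • E := by
          rw [flat3_single_mid
            (fun a b c => M'.h a (TB b x) (TuF M M' Q m c y)) (m+1) ?z3]
          · show M'.h 0 (TB (m+1) x) (TuF M M' Q m 0 y) = _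
            rw [show TuF M M' Q m 0 y = y by rw [TuF_ne M M' (by omega)]; exact hQ0 y]
            rw [show TB (m+1) x = BB M M' Q m x by rw [hTBdef]; simp]
            rw [show M'.h 0 (BB M M' Q m x) y
                = ∑ i, star (BB M M' Q m x i) * y i from
              M'.h_zero _ y (hBmem hx) hy]
            exact BB_rep M M' hQg hP₀idem m hQtop hQmod hQisom hx hy
          case z3 =>
            intro a b c hb
            show M'.h a (TB b x) (TuF M M' Q m c y) = 0
            rw [TB_ne b hb x]
            exact h_zero_left M' a ((TuFg c).1 y hy)
        have S4v : ∑ p ∈ Finset.HasAntidiagonal.antidiagonal (m+1), ∑ q ∈ Finset.HasAntidiagonal.antidiagonal p.2,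
            M'.h p.1 (TB q.1 x) (TB q.2 y) = 0 := by
          rw [flat3_single_mid (fun a b c => M'.h a (TB b x) (TB c y)) (m+1) ?z4]
          · show M'.h 0 (TB (m+1) x) (TB 0 y) = 0
            rw [TB_ne 0 (by omega) y]
            exact h_zero_right M' 0 (TB_mem (m+1) hx)
          case z4 =>
            intro a b c hb
            show M'.h a (TB b x) (TB c y) = 0
            rw [TB_ne b hb x]
            exact h_zero_left M' a (TB_mem c hy)
        have S1v : ∑ p ∈ Finset.HasAntidiagonal.antidiagonal (m+1), ∑ q ∈ Finset.HasAntidiagonal.antidiagonal p.2,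
            M'.h p.1 (TuF M M' Q m q.1 x) (TuF M M' Q m q.2 y)
            = E + M.h (m+1) x y := by
          rw [hEdef]
          unfold eel
          abel
        show eel M M' (Tt M M') (m+1) x y = 0
        unfold eel
        rw [S_split, S1v, S2v, S3v, S4v]
        rw [add_zero]
        have h2 : (-(⅟2 : C)) • E + (-(⅟2 : C)) • E = -E := by
          rw [← add_smul,
            show (-(⅟2 : C)) + (-(⅟2 : C)) = -(1 : C) by
              rw [← neg_add, invOf_two_add_invOf_two],
            neg_smul, one_smul]
        calc E + M.h (m+1) x y + (-(⅟2 : C)) • E + (-(⅟2 : C)) • E - M.h (m+1) x y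
            = ((-(⅟2 : C)) • E + (-(⅟2 : C)) • E) + E
              + (M.h (m+1) x y - M.h (m+1) x y) := by abel
          _ = 0 := by rw [h2]; abel

end Main
section Flat5
variable {β : Type*} [AddCommMonoid β]

/-- canonical five-fold antidiagonal sum -/
def flat5 (g : ℕ → ℕ → ℕ → ℕ → ℕ → β) (n : ℕ) : β :=
  ∑ p ∈ Finset.HasAntidiagonal.antidiagonal n, ∑ q ∈ Finset.HasAntidiagonal.antidiagonal p.2,
    ∑ r ∈ Finset.HasAntidiagonal.antidiagonal q.2, ∑ s ∈ Finset.HasAntidiagonal.antidiagonal r.2,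
      g p.1 q.1 r.1 s.1 s.2

lemma flat5_eq_sum_flat4 (g : ℕ → ℕ → ℕ → ℕ → ℕ → β) (n : ℕ) :
    flat5 g n = ∑ p ∈ Finset.HasAntidiagonal.antidiagonal n, flat4 (g p.1) p.2 := rfl

lemma flat5_swap34 (g : ℕ → ℕ → ℕ → ℕ → ℕ → β) (n : ℕ) :
    flat5 (fun a b c d e => g a b d c e) n = flat5 g n := by
  rw [flat5_eq_sum_flat4, flat5_eq_sum_flat4]
  exact Finset.sum_congr rfl fun p _ => flat4_swap23 (g p.1) p.2

/-- conversion: triple with both middle slots split equals `flat5` -/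
lemma conv5 (f : ℕ → ℕ → ℕ → ℕ → ℕ → β) (N : ℕ) :
    (∑ p ∈ Finset.HasAntidiagonal.antidiagonal N, ∑ q ∈ Finset.HasAntidiagonal.antidiagonal p.2,
      ∑ r ∈ Finset.HasAntidiagonal.antidiagonal q.1, ∑ s ∈ Finset.HasAntidiagonal.antidiagonal q.2,
        f p.1 r.1 r.2 s.1 s.2)
    = flat5 f N := by
  unfold flat5
  refine Finset.sum_congr rfl fun p _ => ?_
  exact flat3_assoc (fun u w l => ∑ s ∈ Finset.HasAntidiagonal.antidiagonal l, f p.1 u w s.1 s.2) p.2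

end Flat5
section Preim
set_option linter.unusedSectionVars false
set_option maxHeartbeats 1000000

variable {C A : Type*} [CommRing C] [StarRing C] [Invertible (2 : C)]
  [Ring A] [Algebra C A] [StarRing A] [StarModule C A] {n : ℕ}
  {D : FormalDeformation C A} {P₀ : Matrix (Fin n) (Fin n) A}

/-- order-by-order preimage under `fdMap (Tt M M')` -/
def preim (M M' : HermitianDeformedModule D P₀) (y : ℕ → Fin n → A) :
    ℕ → Fin n → A
  | 0 => y 0
  | N + 1 => y (N + 1) - ∑ p ∈ (Finset.HasAntidiagonal.antidiagonal N).attach,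
      Tt M M' (p.1.1 + 1) (preim M M' y p.1.2)
  decreasing_by
    have := Finset.HasAntidiagonal.mem_antidiagonal.mp p.2
    omega

variable (M M' : HermitianDeformedModule D P₀)

lemma preim_zero (y : ℕ → Fin n → A) : preim M M' y 0 = y 0 := by rw [preim]

lemma preim_succ (y : ℕ → Fin n → A) (N : ℕ) :
    preim M M' y (N + 1) = y (N + 1) - ∑ p ∈ (Finset.HasAntidiagonal.antidiagonal N).attach,
      Tt M M' (p.1.1 + 1) (preim M M' y p.1.2) := by rw [preim]

lemma preim_mem (hP₀idem : P₀ * P₀ = P₀) (hP₀herm : P₀ᴴ = P₀)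
    {y : ℕ → Fin n → A} (hy : ∀ k, P₀.mulVec (y k) = y k) :
    ∀ N, P₀.mulVec (preim M M' y N) = preim M M' y N := by
  intro N
  induction N using Nat.strong_induction_on with
  | _ N IH =>
    match N with
    | 0 => rw [preim_zero]; exact hy 0
    | N + 1 =>
      rw [preim_succ]
      refine mem_sub (hy (N+1)) (mem_sum fun p _ => ?_)
      have hp := Finset.HasAntidiagonal.mem_antidiagonal.mp p.2
      exact (Tt_main M M' hP₀idem hP₀herm (p.1.1 + 1)).1.1 _ (IH p.1.2 (by omega))

lemma fdMap_preim (hP₀idem : P₀ * P₀ = P₀) (hP₀herm : P₀ᴴ = P₀)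
    {y : ℕ → Fin n → A} (hy : ∀ k, P₀.mulVec (y k) = y k) :
    fdMap (Tt M M') (preim M M' y) = y := by
  funext N
  match N with
  | 0 =>
    show ∑ p ∈ Finset.HasAntidiagonal.antidiagonal 0, Tt M M' p.1 (preim M M' y p.2) = y 0
    rw [Finset.Nat.antidiagonal_zero, Finset.sum_singleton]
    show Tt M M' 0 (preim M M' y 0) = y 0
    rw [Tt_zero M M']
    exact preim_zero M M' y
  | N + 1 =>
    show ∑ p ∈ Finset.HasAntidiagonal.antidiagonal (N+1), Tt M M' p.1 (preim M M' y p.2) = y (N+1)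
    rw [Finset.Nat.sum_antidiagonal_succ]
    show Tt M M' 0 (preim M M' y (N+1))
        + ∑ p ∈ Finset.HasAntidiagonal.antidiagonal N, Tt M M' (p.1+1) (preim M M' y p.2) = y (N+1)
    rw [Tt_zero M M']
    show preim M M' y (N+1) + _ = y (N+1)
    rw [preim_succ]
    rw [← Finset.sum_attach (Finset.HasAntidiagonal.antidiagonal N)
      (fun p => Tt M M' (p.1 + 1) (preim M M' y p.2))]
    abel

end Preim
/-- Proposition 2.10, uniqueness part. Any two Hermitian deformations
of the inner-product module `(E = P₀Aⁿ, h₀)` corresponding to a Hermitian deformation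
`qA` are isometrically equivalent via some `T = id + ∑_{r≥1} T_r λ^r`. -/
theorem hermitian_module_deformation_unique {C A : Type*} [CommRing C] [StarRing C]
    [Invertible (2 : C)] [Ring A] [Algebra C A] [StarRing A] [StarModule C A]
    (D : FormalDeformation C A) (hD : D.IsHermitian) (n : ℕ)
    (P₀ : Matrix (Fin n) (Fin n) A)
    (hP₀idem : P₀ * P₀ = P₀) (hP₀herm : P₀ᴴ = P₀)
    (M M' : HermitianDeformedModule D P₀) :
    ∃ T : ℕ → (Fin n → A) → Fin n → A,
      -- T = id + ∑_{r≥1} T_r λ^r, with C-linear maps T_r : E → E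
      (∀ x, P₀.mulVec x = x → T 0 x = x) ∧
      (∀ r x, P₀.mulVec x = x → P₀.mulVec (T r x) = T r x) ∧
      (∀ r x y, P₀.mulVec x = x → P₀.mulVec y = y → T r (x + y) = T r x + T r y) ∧
      (∀ r (c : C) x, P₀.mulVec x = x → T r (c • x) = c • T r x) ∧
      -- T is a qA-module map
      (∀ (x : ℕ → Fin n → A) (a : ℕ → A), (∀ m, P₀.mulVec (x m) = x m) →
        fdMap T (fdConv M.R x a) = fdConv M'.R (fdMap T x) a) ∧
      -- T is bijective from E[[λ]] to E[[λ]]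
      (∀ x y : ℕ → Fin n → A, (∀ m, P₀.mulVec (x m) = x m) →
        (∀ m, P₀.mulVec (y m) = y m) → fdMap T x = fdMap T y → x = y) ∧
      (∀ y : ℕ → Fin n → A, (∀ m, P₀.mulVec (y m) = y m) →
        ∃ x : ℕ → Fin n → A, (∀ m, P₀.mulVec (x m) = x m) ∧ fdMap T x = y) ∧
      -- T is isometric: h'(Tx, Ty) = h(x, y)
      (∀ x y : ℕ → Fin n → A, (∀ m, P₀.mulVec (x m) = x m) →
        (∀ m, P₀.mulVec (y m) = y m) →
        fdConv M'.h (fdMap T x) (fdMap T y) = fdConv M.h x y) := by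
  classical
  have main := Tt_main M M' hP₀idem hP₀herm
  have Tmem : ∀ r {z : Fin n → A}, P₀.mulVec z = z →
      P₀.mulVec (Tt M M' r z) = Tt M M' r z := fun r {z} hz => (main r).1.1 z hz
  have Tadd : ∀ r (u v : Fin n → A), P₀.mulVec u = u → P₀.mulVec v = v →
      Tt M M' r (u + v) = Tt M M' r u + Tt M M' r v :=
    fun r u v hu hv => (main r).1.2.1 u v hu hv
  have ModEq : ∀ t (z : Fin n → A) (c : A), P₀.mulVec z = z →
      ∑ r ∈ Finset.HasAntidiagonal.antidiagonal t, Tt M M' r.1 (M.R r.2 z c)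
        = ∑ r ∈ Finset.HasAntidiagonal.antidiagonal t, M'.R r.2 (Tt M M' r.1 z) c := by
    intro t z c hz
    have h0 := (main t).2.1 z c hz
    unfold ddl at h0
    rw [Finset.sum_sub_distrib] at h0
    exact sub_eq_zero.mp h0
  have IsomEq : ∀ t (u v : Fin n → A), P₀.mulVec u = u → P₀.mulVec v = v →
      ∑ p ∈ Finset.HasAntidiagonal.antidiagonal t, ∑ q ∈ Finset.HasAntidiagonal.antidiagonal p.2,
        M'.h p.1 (Tt M M' q.1 u) (Tt M M' q.2 v) = M.h t u v := by
    intro t u v hu hv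
    have h0 := (main t).2.2 u v hu hv
    unfold eel at h0
    exact sub_eq_zero.mp h0
  refine ⟨Tt M M', ?_, ?_, ?_, ?_, ?_, ?_, ?_, ?_⟩
  · intro x hx
    show Tt M M' 0 x = x
    rw [Tt_zero M M']
  · intro r x hx
    exact Tmem r hx
  · intro r x y hx hy
    exact Tadd r x y hx hy
  · intro r c x hx
    exact (main r).1.2.2 c x hx
  · -- module map
    intro x a hxall
    funext N
    calc fdMap (Tt M M') (fdConv M.R x a) N
        = ∑ p ∈ Finset.HasAntidiagonal.antidiagonal N, ∑ q ∈ Finset.HasAntidiagonal.antidiagonal p.2,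
            ∑ r ∈ Finset.HasAntidiagonal.antidiagonal q.2,
              Tt M M' p.1 (M.R q.1 (x r.1) (a r.2)) := by
          refine Finset.sum_congr rfl fun p _ => ?_
          show Tt M M' p.1 (∑ q ∈ Finset.HasAntidiagonal.antidiagonal p.2, ∑ r ∈ Finset.HasAntidiagonal.antidiagonal q.2,
              M.R q.1 (x r.1) (a r.2)) = _
          rw [memmap_sum (Tt M M' p.1) (Tadd p.1) _ _
            (fun q _ => mem_sum fun r _ => M.R_mem q.1 _ (a r.2) (hxall r.1))]
          exact Finset.sum_congr rfl fun q _ =>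
            memmap_sum (Tt M M' p.1) (Tadd p.1) _ _
              (fun r _ => M.R_mem q.1 _ (a r.2) (hxall r.1))
      _ = flat4 (fun i j k v => Tt M M' i (M.R j (x k) (a v))) N := rfl
      _ = flat4 (fun k v i j => Tt M M' i (M.R j (x k) (a v))) N := by
          have e1 : flat4 (fun k v i j => Tt M M' i (M.R j (x k) (a v))) N
              = flat4 (fun a' b c d => Tt M M' a' (M.R d (x c) (a b))) N :=
            flat4_swap13 (fun a' b c d => Tt M M' a' (M.R d (x c) (a b))) N
          have e2 : flat4 (fun a' b c d => Tt M M' a' (M.R d (x c) (a b))) N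
              = flat4 (fun i j k v => Tt M M' i (M.R j (x k) (a v))) N :=
            flat4_swap24 (fun i j k v => Tt M M' i (M.R j (x k) (a v))) N
          exact (e1.trans e2).symm
      _ = flat3 (fun k v t => ∑ r ∈ Finset.HasAntidiagonal.antidiagonal t,
            Tt M M' r.1 (M.R r.2 (x k) (a v))) N := rfl
      _ = flat3 (fun k v t => ∑ r ∈ Finset.HasAntidiagonal.antidiagonal t,
            M'.R r.2 (Tt M M' r.1 (x k)) (a v)) N := by
          unfold flat3
          refine Finset.sum_congr rfl fun p _ => Finset.sum_congr rfl fun q _ => ?_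
          exact ModEq q.2 (x p.1) (a q.1) (hxall p.1)
      _ = flat4 (fun k v i j => M'.R j (Tt M M' i (x k)) (a v)) N := rfl
      _ = flat4 (fun i u k l => M'.R i (Tt M M' u (x k)) (a l)) N := by
          have e1 : flat4 (fun a' b c d => M'.R a' (Tt M M' c (x d)) (a b)) N
              = flat4 (fun k v i j => M'.R j (Tt M M' i (x k)) (a v)) N :=
            flat4_swap14 (fun k v i j => M'.R j (Tt M M' i (x k)) (a v)) N
          have r1 : flat4 (fun a' b c d => M'.R a' (Tt M M' c (x d)) (a b)) N
              = flat4 (fun i u k l => M'.R i (Tt M M' u (x k)) (a l)) N :=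
            flat4_rot234 (fun i u k l => M'.R i (Tt M M' u (x k)) (a l)) N
          exact e1.symm.trans r1
      _ = ∑ p ∈ Finset.HasAntidiagonal.antidiagonal N, ∑ q ∈ Finset.HasAntidiagonal.antidiagonal p.2,
            ∑ r ∈ Finset.HasAntidiagonal.antidiagonal q.1,
              M'.R p.1 (Tt M M' r.1 (x r.2)) (a q.2) := by
          refine Finset.sum_congr rfl fun p _ => ?_
          exact (flat3_assoc (fun u w l => M'.R p.1 (Tt M M' u (x w)) (a l)) p.2).symm
      _ = fdConv M'.R (fdMap (Tt M M') x) a N := by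
          refine Finset.sum_congr rfl fun p _ => Finset.sum_congr rfl fun q _ => ?_
          show _ = M'.R p.1 (fdMap (Tt M M') x q.1) (a q.2)
          rw [show fdMap (Tt M M') x q.1
            = ∑ r ∈ Finset.HasAntidiagonal.antidiagonal q.1, Tt M M' r.1 (x r.2) from rfl]
          exact (memmap_sum (fun z => M'.R p.1 z (a q.2))
            (fun u v hu hv => M'.R_add_left p.1 u v (a q.2) hu hv) _ _
            (fun r _ => Tmem r.1 (hxall r.2))).symm
  · -- injectivity
    intro x y hxall hyall hmap
    funext N
    induction N using Nat.strong_induction_on with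
    | _ N IH =>
      have hN := congrFun hmap N
      match N with
      | 0 =>
        rw [show fdMap (Tt M M') x 0 = Tt M M' 0 (x 0) from by
            show ∑ p ∈ Finset.HasAntidiagonal.antidiagonal 0, Tt M M' p.1 (x p.2) = _
            rw [Finset.Nat.antidiagonal_zero, Finset.sum_singleton],
          show fdMap (Tt M M') y 0 = Tt M M' 0 (y 0) from by
            show ∑ p ∈ Finset.HasAntidiagonal.antidiagonal 0, Tt M M' p.1 (y p.2) = _
            rw [Finset.Nat.antidiagonal_zero, Finset.sum_singleton],
          Tt_zero M M'] at hN
        exact hN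
      | N + 1 =>
        rw [show fdMap (Tt M M') x (N+1) = x (N+1)
            + ∑ p ∈ Finset.HasAntidiagonal.antidiagonal N, Tt M M' (p.1+1) (x p.2) from by
            show ∑ p ∈ Finset.HasAntidiagonal.antidiagonal (N+1), Tt M M' p.1 (x p.2) = _
            rw [Finset.Nat.sum_antidiagonal_succ,
              show Tt M M' 0 (x (N+1)) = x (N+1) from congrFun (Tt_zero M M') _],
          show fdMap (Tt M M') y (N+1) = y (N+1)
            + ∑ p ∈ Finset.HasAntidiagonal.antidiagonal N, Tt M M' (p.1+1) (y p.2) from by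
            show ∑ p ∈ Finset.HasAntidiagonal.antidiagonal (N+1), Tt M M' p.1 (y p.2) = _
            rw [Finset.Nat.sum_antidiagonal_succ,
              show Tt M M' 0 (y (N+1)) = y (N+1) from congrFun (Tt_zero M M') _]] at hN
        have hrest : ∑ p ∈ Finset.HasAntidiagonal.antidiagonal N, Tt M M' (p.1+1) (x p.2)
            = ∑ p ∈ Finset.HasAntidiagonal.antidiagonal N, Tt M M' (p.1+1) (y p.2) := by
          refine Finset.sum_congr rfl fun p hp => ?_
          have := Finset.HasAntidiagonal.mem_antidiagonal.mp hp
          rw [IH p.2 (by omega)]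
        rw [hrest] at hN
        exact add_right_cancel hN
  · -- surjectivity
    intro y hyall
    exact ⟨preim M M' y, preim_mem M M' hP₀idem hP₀herm hyall,
      fdMap_preim M M' hP₀idem hP₀herm hyall⟩
  · -- isometry
    intro x y hxall hyall
    funext N
    calc fdConv M'.h (fdMap (Tt M M') x) (fdMap (Tt M M') y) N
        = ∑ p ∈ Finset.HasAntidiagonal.antidiagonal N, ∑ q ∈ Finset.HasAntidiagonal.antidiagonal p.2,
            ∑ r ∈ Finset.HasAntidiagonal.antidiagonal q.1, ∑ s ∈ Finset.HasAntidiagonal.antidiagonal q.2,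
              M'.h p.1 (Tt M M' r.1 (x r.2)) (Tt M M' s.1 (y s.2)) := by
          refine Finset.sum_congr rfl fun p _ => Finset.sum_congr rfl fun q _ => ?_
          show M'.h p.1 (∑ r ∈ Finset.HasAntidiagonal.antidiagonal q.1, Tt M M' r.1 (x r.2))
              (∑ s ∈ Finset.HasAntidiagonal.antidiagonal q.2, Tt M M' s.1 (y s.2)) = _
          rw [memmap_sum (fun z => M'.h p.1 z
              (∑ s ∈ Finset.HasAntidiagonal.antidiagonal q.2, Tt M M' s.1 (y s.2)))
            (fun u v hu hv => M'.h_add_left p.1 u v _ hu hv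
              (mem_sum fun s _ => Tmem s.1 (hyall s.2))) _ _
            (fun r _ => Tmem r.1 (hxall r.2))]
          refine Finset.sum_congr rfl fun r _ => ?_
          rw [memmap_sum (fun z => M'.h p.1 (Tt M M' r.1 (x r.2)) z)
            (fun u v hu hv => M'.h_add_right p.1 _ u v (Tmem r.1 (hxall r.2)) hu hv)
            _ _ (fun s _ => Tmem s.1 (hyall s.2))]
      _ = flat5 (fun i t1 k t2 l =>
            M'.h i (Tt M M' t1 (x k)) (Tt M M' t2 (y l))) N :=
          conv5 (fun i t1 k t2 l => M'.h i (Tt M M' t1 (x k)) (Tt M M' t2 (y l))) N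
      _ = flat5 (fun i t1 t2 k l =>
            M'.h i (Tt M M' t1 (x k)) (Tt M M' t2 (y l))) N :=
          (flat5_swap34 (fun i t1 k t2 l =>
            M'.h i (Tt M M' t1 (x k)) (Tt M M' t2 (y l))) N).symm
      _ = ∑ p ∈ Finset.HasAntidiagonal.antidiagonal N, ∑ q ∈ Finset.HasAntidiagonal.antidiagonal p.2,
            ∑ r ∈ Finset.HasAntidiagonal.antidiagonal q.1, ∑ s ∈ Finset.HasAntidiagonal.antidiagonal q.2,
              M'.h p.1 (Tt M M' r.1 (x s.1)) (Tt M M' r.2 (y s.2)) :=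
          (conv5 (fun i t1 t2 k l =>
            M'.h i (Tt M M' t1 (x k)) (Tt M M' t2 (y l))) N).symm
      _ = ∑ p ∈ Finset.HasAntidiagonal.antidiagonal N, ∑ q ∈ Finset.HasAntidiagonal.antidiagonal p.2,
            ∑ s ∈ Finset.HasAntidiagonal.antidiagonal q.2, ∑ r ∈ Finset.HasAntidiagonal.antidiagonal q.1,
              M'.h p.1 (Tt M M' r.1 (x s.1)) (Tt M M' r.2 (y s.2)) := by
          refine Finset.sum_congr rfl fun p _ => Finset.sum_congr rfl fun q _ => ?_
          exact Finset.sum_comm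
      _ = ∑ p ∈ Finset.HasAntidiagonal.antidiagonal N, ∑ q ∈ Finset.HasAntidiagonal.antidiagonal p.1,
            (fun u w c => ∑ v ∈ Finset.HasAntidiagonal.antidiagonal c, ∑ q' ∈ Finset.HasAntidiagonal.antidiagonal w,
              M'.h u (Tt M M' q'.1 (x v.1)) (Tt M M' q'.2 (y v.2))) q.1 q.2 p.2 :=
          (flat3_assoc (fun u w c => ∑ v ∈ Finset.HasAntidiagonal.antidiagonal c,
            ∑ q' ∈ Finset.HasAntidiagonal.antidiagonal w,
              M'.h u (Tt M M' q'.1 (x v.1)) (Tt M M' q'.2 (y v.2))) N).symm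
      _ = ∑ p ∈ Finset.HasAntidiagonal.antidiagonal N, ∑ q ∈ Finset.HasAntidiagonal.antidiagonal p.2,
            ∑ p' ∈ Finset.HasAntidiagonal.antidiagonal p.1, ∑ q' ∈ Finset.HasAntidiagonal.antidiagonal p'.2,
              M'.h p'.1 (Tt M M' q'.1 (x q.1)) (Tt M M' q'.2 (y q.2)) := by
          refine Finset.sum_congr rfl fun p _ => ?_
          exact Finset.sum_comm
      _ = ∑ p ∈ Finset.HasAntidiagonal.antidiagonal N, ∑ q ∈ Finset.HasAntidiagonal.antidiagonal p.2,
            M.h p.1 (x q.1) (y q.2) := by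
          refine Finset.sum_congr rfl fun p _ => Finset.sum_congr rfl fun q _ => ?_
          exact IsomEq p.1 (x q.1) (y q.2) (hxall q.1) (hyall q.2)
      _ = fdConv M.h x y N := rfl
end
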